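/- arXiv:0801.3185 — 12 statements merged into one kernel-verified Lean document; each statement's English description precedes it below -/
import Mathlib

section
/- If Γ𝟙 = 0, rᵀΓ = 0 and rᵀ𝟙 = 1, then for all real t, exp((Γ − 𝟙rᵀ)t) = exp(Γt) − (1 − e^{−t})·𝟙rᵀ. -/
open Matrix NormedSpace Filter
open scoped Kronecker

noncomputable section

/-- The all-ones vector. -/
def ones (p : ℕ) : Fin p → ℝ := fun _ => 1

lemma exp_aux_scalar (c : ℝ) :
    ∑' n : ℕ, c ^ (n+1) * (Nat.factorial (n+1) : ℝ)⁻¹ = Real.exp c - 1 := by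
  have hsum : Summable (fun n : ℕ => (Nat.factorial n : ℝ)⁻¹ • c ^ n) := expSeries_summable' c
  have h0 : Real.exp c = ∑' n : ℕ, (Nat.factorial n : ℝ)⁻¹ • c ^ n := by
    rw [Real.exp_eq_exp_ℝ, exp_eq_tsum ℝ]
  rw [h0, Summable.tsum_eq_zero_add hsum]
  simp [mul_comm]

variable {𝔸 : Type*} [NormedRing 𝔸] [NormedAlgebra ℝ 𝔸] [CompleteSpace 𝔸]

lemma exp_smul_idem (c : ℝ) (P : 𝔸) (hP : P * P = P) :
    exp (c • P) = 1 + (Real.exp c - 1) • P := by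
  have hpow : ∀ n : ℕ, P ^ (n + 1) = P := by
    intro n
    induction n with
    | zero => simp
    | succ n ih => rw [pow_succ, ih, hP]
  have hsum : Summable (fun n : ℕ => (Nat.factorial n : ℝ)⁻¹ • (c • P) ^ n) :=
    expSeries_summable' (c • P)
  have hscal : Summable (fun n : ℕ => c ^ (n+1) * (Nat.factorial (n+1) : ℝ)⁻¹) := by
    have := (Real.summable_pow_div_factorial c).comp_injective (add_left_injective 1)
    simpa [div_eq_mul_inv, Function.comp_def] using this
  rw [exp_eq_tsum ℝ]
  beta_reduce
  rw [Summable.tsum_eq_zero_add hsum]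
  have : ∀ n : ℕ, (Nat.factorial (n+1) : ℝ)⁻¹ • (c • P) ^ (n+1)
      = (c ^ (n+1) * (Nat.factorial (n+1) : ℝ)⁻¹) • P := by
    intro n
    rw [smul_pow, hpow, smul_smul, mul_comm]
  simp only [this]
  rw [Summable.tsum_smul_const hscal, exp_aux_scalar]
  simp

lemma exp_mul_eq_of_mul_eq_zero (A B : 𝔸) (h : A * B = 0) :
    exp A * B = B := by
  have hpow : ∀ n : ℕ, A ^ (n + 1) * B = 0 := by
    intro n
    induction n with
    | zero => simpa using h
    | succ n ih => rw [pow_succ, mul_assoc, h, mul_zero]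
  rw [exp_eq_tsum ℝ]
  beta_reduce
  rw [← (expSeries_summable' (𝕂 := ℝ) A).tsum_mul_right]
  rw [tsum_eq_single 0]
  · simp
  · intro n hn
    obtain ⟨m, rfl⟩ := Nat.exists_eq_succ_of_ne_zero hn
    rw [smul_mul_assoc, hpow, smul_zero]

/-- exp((Γ − 𝟙rᵀ)t) = exp(Γt) − (1 − e^{−t})𝟙rᵀ. -/
theorem stmt1 {p : ℕ} (Γ : Matrix (Fin p) (Fin p) ℝ) (r : Fin p → ℝ)
    (hΓ1 : Γ *ᵥ ones p = 0) (hrΓ : r ᵥ* Γ = 0) (hr1 : ∑ i, r i = 1) (t : ℝ) :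
    NormedSpace.exp (t • (Γ - vecMulVec (ones p) r)) =
      NormedSpace.exp (t • Γ) - (1 - Real.exp (-t)) • vecMulVec (ones p) r := by
  letI : SeminormedRing (Matrix (Fin p) (Fin p) ℝ) := Matrix.linftyOpSemiNormedRing
  letI : NormedRing (Matrix (Fin p) (Fin p) ℝ) := Matrix.linftyOpNormedRing
  letI : NormedAlgebra ℝ (Matrix (Fin p) (Fin p) ℝ) := Matrix.linftyOpNormedAlgebra
  set P : Matrix (Fin p) (Fin p) ℝ := vecMulVec (ones p) r with hPdef
  have hPP : P * P = P := by
    ext i j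
    simp only [hPdef, Matrix.mul_apply, vecMulVec_apply, ones]
    simp [← Finset.sum_mul, hr1]
  have hΓP : Γ * P = 0 := by
    ext i j
    have := congrFun hΓ1 i
    simp only [mulVec, dotProduct, ones, mul_one, Pi.zero_apply] at this
    simp only [hPdef, Matrix.mul_apply, vecMulVec_apply, ones, Matrix.zero_apply]
    simp [← Finset.sum_mul, this]
  have hPΓ : P * Γ = 0 := by
    ext i j
    have := congrFun hrΓ j
    simp only [vecMul, dotProduct, Pi.zero_apply] at this
    simp [hPdef, Matrix.mul_apply, vecMulVec_apply, ones, this]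
  have hcomm : Commute (t • Γ) ((-t) • P) := by
    unfold Commute SemiconjBy
    rw [smul_mul_smul_comm, smul_mul_smul_comm, hΓP, hPΓ, smul_zero, smul_zero]
  have hsplit : t • (Γ - P) = t • Γ + (-t) • P := by
    rw [smul_sub, neg_smul, sub_eq_add_neg]
  rw [hsplit, Matrix.exp_add_of_commute _ _ hcomm,
    (by exact exp_smul_idem (-t) P hPP : exp ((-t) • P) = 1 + (Real.exp (-t) - 1) • P), mul_add,
    mul_one, mul_smul_comm,
    (by exact exp_mul_eq_of_mul_eq_zero (t • Γ) P (by rw [smul_mul_assoc, hΓP, smul_zero]) :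
      exp (t • Γ) * P = P)]
  module
end
end

section
/- If Γ is connected (off-diagonal entries nonnegative, zero row sums, connected graph), then every nonzero eigenvalue of Γ has strictly negative real part. -/
open Matrix NormedSpace Filter
open scoped Kronecker

noncomputable section

/-- A connected matrix: nonnegative off-diagonal entries, zero row sums, and its directed
graph (arc i → j iff Γ i j > 0) has a node to which there is a path from every other node. -/
def IsConnectedMatrix {p : ℕ} (Γ : Matrix (Fin p) (Fin p) ℝ) : Prop :=
  (∀ i j, i ≠ j → 0 ≤ Γ i j) ∧ (∀ i, ∑ j, Γ i j = 0) ∧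
    ∃ k, ∀ i, Relation.ReflTransGen (fun a b => 0 < Γ a b) i k

/-- Every nonzero eigenvalue of a connected matrix has strictly negative real part. -/
theorem stmt2 {p : ℕ} (Γ : Matrix (Fin p) (Fin p) ℝ) (hΓ : IsConnectedMatrix Γ) :
    ∀ μ ∈ spectrum ℂ (Γ.map Complex.ofReal), μ ≠ 0 → μ.re < 0 := by
  obtain ⟨hoff, hrow, -⟩ := hΓ
  intro μ hμ hne
  set A : Matrix (Fin p) (Fin p) ℂ := Γ.map Complex.ofReal with hA
  have hEig : Module.End.HasEigenvalue (Matrix.toLin' A) μ := by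
    have h : Module.End.HasEigenvalue (Matrix.toLinAlgEquiv (Pi.basisFun ℂ (Fin p)) A) μ := by
      rw [Module.End.hasEigenvalue_iff_mem_spectrum,
        AlgEquiv.spectrum_eq (Matrix.toLinAlgEquiv <| Pi.basisFun ℂ (Fin p))]
      exact hμ
    exact h
  obtain ⟨k, hk⟩ := eigenvalue_mem_ball hEig
  rw [mem_closedBall_iff_norm'] at hk
  have hdiag : ∀ j, ‖A k j‖ = Γ k j ∨ k = j := by
    intro j
    rcases eq_or_ne k j with h | h
    · exact Or.inr h
    · left
      simp only [hA, Matrix.map_apply, Complex.norm_real]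
      exact abs_of_nonneg (hoff k j h)
  have hsum : ∑ j ∈ Finset.univ.erase k, ‖A k j‖ = -Γ k k := by
    have h1 : ∑ j ∈ Finset.univ.erase k, ‖A k j‖ = ∑ j ∈ Finset.univ.erase k, Γ k j := by
      refine Finset.sum_congr rfl fun j hj => ?_
      rcases hdiag j with h | h
      · exact h
      · exact absurd h.symm (Finset.ne_of_mem_erase hj)
    have h2 : ∑ j ∈ Finset.univ.erase k, Γ k j = -Γ k k := by
      have := hrow k
      rw [← Finset.sum_erase_add _ _ (Finset.mem_univ k)] at this
      linarith
    rw [h1, h2]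
  rw [hsum] at hk
  have hAkk : A k k = (Γ k k : ℂ) := by simp [hA]
  rw [hAkk] at hk
  -- ‖A k k - μ‖ ≤ -Γ k k
  have hc : Γ k k ≤ 0 := by
    have : (0:ℝ) ≤ ∑ j ∈ Finset.univ.erase k, Γ k j :=
      Finset.sum_nonneg fun j hj => hoff k j (Finset.ne_of_mem_erase hj).symm
    have h2 := hrow k
    rw [← Finset.sum_erase_add _ _ (Finset.mem_univ k)] at h2
    linarith
  by_contra hre
  push_neg at hre
  have hsq : ((Γ k k : ℂ) - μ).re ^ 2 + ((Γ k k : ℂ) - μ).im ^ 2 ≤ (Γ k k) ^ 2 := by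
    have h1 : ‖(Γ k k : ℂ) - μ‖ ^ 2 ≤ (-Γ k k) ^ 2 := by
      have := norm_nonneg ((Γ k k : ℂ) - μ)
      nlinarith
    have h2 : Complex.normSq ((Γ k k : ℂ) - μ) ≤ (Γ k k) ^ 2 := by
      rw [← Complex.sq_norm]
      simpa [neg_sq] using h1
    rw [Complex.normSq_apply] at h2
    nlinarith [h2]
  simp only [Complex.sub_re, Complex.sub_im, Complex.ofReal_re, Complex.ofReal_im,
    zero_sub] at hsq
  have hre2 : μ.re ^ 2 - 2 * Γ k k * μ.re + μ.im ^ 2 ≤ 0 := by nlinarith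
  have hz : μ.re = 0 ∧ μ.im = 0 := by
    constructor <;> nlinarith [sq_nonneg μ.re, sq_nonneg μ.im, mul_nonneg (neg_nonneg.2 hc) hre]
  exact hne (Complex.ext hz.1 hz.2)
end
end

section
/- If Γ is connected, then exp(Γt) converges as t → ∞ to 𝟙rᵀ, where rᵀ is the left eigenvector of Γ for eigenvalue 0 normalized so that rᵀ𝟙 = 1. -/
open Matrix NormedSpace Filter
open scoped Kronecker

noncomputable section

namespace StmtAux

variable {p : ℕ}

abbrev Mat (p : ℕ) := Matrix (Fin p) (Fin p) ℝ

lemma mySummable (A : Mat p) :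
    Summable fun n : ℕ => (Nat.factorial n : ℝ)⁻¹ • A ^ n := by
  letI : SeminormedRing (Mat p) := Matrix.linftyOpSemiNormedRing
  letI : NormedRing (Mat p) := Matrix.linftyOpNormedRing
  letI : NormedAlgebra ℝ (Mat p) := Matrix.linftyOpNormedAlgebra
  exact expSeries_summable' (𝕂 := ℝ) A

lemma exp_entry (A : Mat p) (i j : Fin p) :
    exp A i j = ∑' n : ℕ, (Nat.factorial n : ℝ)⁻¹ * (A ^ n) i j := by
  have hs := mySummable A
  have hf : Continuous (fun M : Mat p => M i j) :=
    (continuous_apply j).comp (continuous_apply i)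
  have := (hs.hasSum.map (AddMonoidHom.mk' (fun M : Mat p => M i j)
    (fun a b => rfl)) hf).tsum_eq
  rw [exp_eq_tsum ℝ]
  show (tsum (fun n : ℕ => (Nat.factorial n : ℝ)⁻¹ • A ^ n)) i j = _
  simp only [AddMonoidHom.mk'_apply, Function.comp] at this
  exact this.symm

lemma entry_summable (A : Mat p) (i j : Fin p) :
    Summable fun n : ℕ => (Nat.factorial n : ℝ)⁻¹ * (A ^ n) i j := by
  have hs := mySummable A
  have hf : Continuous (fun M : Mat p => M i j) :=
    (continuous_apply j).comp (continuous_apply i)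
  have := hs.map (AddMonoidHom.mk' (fun M : Mat p => M i j)
    (fun a b => rfl)) hf
  exact this

lemma exp_smul_one (c : ℝ) :
    exp (c • (1 : Mat p)) = Real.exp c • (1 : Mat p) := by
  letI : SeminormedRing (Mat p) := Matrix.linftyOpSemiNormedRing
  letI : NormedRing (Mat p) := Matrix.linftyOpNormedRing
  letI : NormedAlgebra ℝ (Mat p) := Matrix.linftyOpNormedAlgebra
  have hc : Continuous (algebraMap ℝ (Mat p)) := by
    have h1 : (⇑(algebraMap ℝ (Mat p))) = fun c : ℝ => c • (1 : Mat p) := by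
      funext c; exact Algebra.algebraMap_eq_smul_one c
    rw [h1]; exact continuous_id.smul continuous_const
  calc exp (c • (1 : Mat p)) = exp (algebraMap ℝ (Mat p) c) := by
        rw [Algebra.algebraMap_eq_smul_one]
    _ = algebraMap ℝ (Mat p) (exp c) := (map_exp (algebraMap ℝ (Mat p)) hc c).symm
    _ = Real.exp c • (1 : Mat p) := by
        rw [Algebra.algebraMap_eq_smul_one, Real.exp_eq_exp_ℝ]

lemma exp_eq_smul_exp_add (A : Mat p) (c : ℝ) :
    exp A = Real.exp (-c) • exp (A + c • (1 : Mat p)) := by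
  have hcomm : Commute (A + c • (1 : Mat p)) ((-c) • (1 : Mat p)) := by
    refine Commute.smul_right ?_ _
    exact Commute.add_left (Commute.one_right A) (Commute.smul_left (Commute.one_left 1) c)
  have h : A = (A + c • (1 : Mat p)) + (-c) • (1 : Mat p) := by
    rw [neg_smul]; abel
  have key := Matrix.exp_add_of_commute (A + c • (1 : Mat p)) ((-c) • 1) hcomm
  calc exp A = exp (A + c • (1 : Mat p) + (-c) • 1) := by rw [← h]
    _ = exp (A + c • (1 : Mat p)) * exp ((-c) • (1 : Mat p)) := key
    _ = Real.exp (-c) • exp (A + c • (1 : Mat p)) := by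
        rw [exp_smul_one, Matrix.mul_smul, mul_one]

lemma pow_entry_nonneg {A : Mat p} (hA : ∀ i j, 0 ≤ A i j) (n : ℕ) :
    ∀ i j, 0 ≤ (A ^ n) i j := by
  induction n with
  | zero =>
    intro i j
    rw [pow_zero]
    by_cases h : i = j <;> simp [Matrix.one_apply, h]
  | succ n ih =>
    intro i j
    rw [pow_succ, Matrix.mul_apply]
    exact Finset.sum_nonneg fun l _ => mul_nonneg (ih i l) (hA l j)

lemma exp_entry_nonneg {A : Mat p} (hA : ∀ i j, 0 ≤ A i j) (i j : Fin p) :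
    0 ≤ exp A i j := by
  rw [exp_entry]
  refine tsum_nonneg fun n => mul_nonneg (by positivity) (pow_entry_nonneg hA n i j)

lemma exp_nonneg_offdiag {A : Mat p} (h : ∀ i j, i ≠ j → 0 ≤ A i j) (i j : Fin p) :
    0 ≤ exp A i j := by
  set c : ℝ := ∑ l, |A l l| with hc
  have hB : ∀ i j, 0 ≤ (A + c • (1 : Mat p)) i j := by
    intro a b
    by_cases hab : a = b
    · subst hab
      simp only [Matrix.add_apply, Matrix.smul_apply, Matrix.one_apply_eq, smul_eq_mul, mul_one]
      have h1 : |A a a| ≤ ∑ l, |A l l| :=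
        Finset.single_le_sum (f := fun l => |A l l|) (fun l _ => abs_nonneg _)
          (Finset.mem_univ a)
      have h2 := neg_abs_le (A a a)
      linarith [hc]
    · simp only [Matrix.add_apply, Matrix.smul_apply, Matrix.one_apply_ne hab, smul_eq_mul,
        mul_zero, add_zero]
      exact h a b hab
  rw [exp_eq_smul_exp_add A c, Matrix.smul_apply, smul_eq_mul]
  exact mul_nonneg (Real.exp_nonneg _) (exp_entry_nonneg hB i j)

lemma vecMul_smul_right (v : Fin p → ℝ) (b : ℝ) (M : Mat p) :
    v ᵥ* (b • M) = b • (v ᵥ* M) := by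
  ext j
  simp only [Matrix.vecMul, dotProduct, Matrix.smul_apply, smul_eq_mul, Pi.smul_apply,
    Finset.mul_sum]
  exact Finset.sum_congr rfl fun i _ => by ring

lemma vecMul_exp {A : Mat p} {r : Fin p → ℝ} (h : r ᵥ* A = 0) :
    r ᵥ* exp A = r := by
  have hs := mySummable A
  have hadd : ∀ M N : Mat p, r ᵥ* (M + N) = r ᵥ* M + r ᵥ* N := fun M N =>
    Matrix.vecMul_add M N r
  have hcont : Continuous fun M : Mat p => r ᵥ* M := by
    refine continuous_pi fun j => ?_
    simp only [Matrix.vecMul, dotProduct]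
    exact continuous_finset_sum _ fun i _ =>
      continuous_const.mul ((continuous_apply j).comp (continuous_apply i))
  have hmap := (hs.hasSum.map (AddMonoidHom.mk' (fun M : Mat p => r ᵥ* M) hadd) hcont).tsum_eq
  simp only [AddMonoidHom.mk'_apply, Function.comp] at hmap
  have hpow : ∀ m : ℕ, r ᵥ* A ^ (m + 1) = 0 := by
    intro m
    induction m with
    | zero => simpa [pow_one] using h
    | succ m ih =>
      rw [pow_succ, ← Matrix.vecMul_vecMul, ih, Matrix.zero_vecMul]
  rw [exp_eq_tsum ℝ]
  show r ᵥ* tsum (fun n : ℕ => (Nat.factorial n : ℝ)⁻¹ • A ^ n) = r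
  rw [← hmap, tsum_eq_single 0]
  · simp [Matrix.vecMul_one]
  · intro n hn
    obtain ⟨m, rfl⟩ := Nat.exists_eq_succ_of_ne_zero hn
    rw [vecMul_smul_right, hpow, smul_zero]

lemma exp_mulVec {A : Mat p} {v : Fin p → ℝ} (h : A *ᵥ v = 0) :
    exp A *ᵥ v = v := by
  have hs := mySummable A
  have hadd : ∀ M N : Mat p, (M + N) *ᵥ v = M *ᵥ v + N *ᵥ v := fun M N =>
    Matrix.add_mulVec M N v
  have hcont : Continuous fun M : Mat p => M *ᵥ v := by
    refine continuous_pi fun i => ?_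
    simp only [Matrix.mulVec, dotProduct]
    exact continuous_finset_sum _ fun l _ =>
      (continuous_apply_apply i l).mul continuous_const
  have hmap := (hs.hasSum.map (AddMonoidHom.mk' (fun M : Mat p => M *ᵥ v) hadd) hcont).tsum_eq
  simp only [AddMonoidHom.mk'_apply, Function.comp] at hmap
  have hpow : ∀ m : ℕ, A ^ (m + 1) *ᵥ v = 0 := by
    intro m
    induction m with
    | zero => simpa [pow_one] using h
    | succ m ih =>
      rw [pow_succ', ← Matrix.mulVec_mulVec, ih, Matrix.mulVec_zero]
  rw [exp_eq_tsum ℝ]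
  show tsum (fun n : ℕ => (Nat.factorial n : ℝ)⁻¹ • A ^ n) *ᵥ v = v
  rw [← hmap, tsum_eq_single 0]
  · simp [Matrix.one_mulVec]
  · intro n hn
    obtain ⟨m, rfl⟩ := Nat.exists_eq_succ_of_ne_zero hn
    rw [Matrix.smul_mulVec, hpow, smul_zero]

/-- Key stochastic bound. -/
lemma stoch_bound [Nonempty (Fin p)] {P : Mat p} (hP : ∀ i j, 0 ≤ P i j)
    (hrow : ∀ i, ∑ l, P i l = 1) (k : Fin p) {δ : ℝ}
    (hδ : ∀ i, δ ≤ P i k) (x : Fin p → ℝ) (i : Fin p) :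
    (P *ᵥ x) i ≤ (Finset.univ.sup' Finset.univ_nonempty x) -
        δ * (Finset.univ.sup' Finset.univ_nonempty x - x k) ∧
      (Finset.univ.inf' Finset.univ_nonempty x) +
        δ * (x k - Finset.univ.inf' Finset.univ_nonempty x) ≤ (P *ᵥ x) i := by
  set M := Finset.univ.sup' Finset.univ_nonempty x with hM
  set m := Finset.univ.inf' Finset.univ_nonempty x with hm
  have hxM : ∀ l, x l ≤ M := fun l => Finset.le_sup' x (Finset.mem_univ l)
  have hmx : ∀ l, m ≤ x l := fun l => Finset.inf'_le x (Finset.mem_univ l)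
  have hsplit : (P *ᵥ x) i = P i k * x k + ∑ l ∈ Finset.univ.erase k, P i l * x l := by
    simp only [Matrix.mulVec, dotProduct]
    rw [← Finset.add_sum_erase _ _ (Finset.mem_univ k)]
  have herase : ∑ l ∈ Finset.univ.erase k, P i l = 1 - P i k := by
    have := Finset.add_sum_erase Finset.univ (fun l => P i l) (Finset.mem_univ k)
    rw [hrow i] at this
    linarith
  constructor
  · have h1 : ∑ l ∈ Finset.univ.erase k, P i l * x l ≤
        ∑ l ∈ Finset.univ.erase k, P i l * M :=
      Finset.sum_le_sum fun l _ => mul_le_mul_of_nonneg_left (hxM l) (hP i l)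
    have h2 : ∑ l ∈ Finset.univ.erase k, P i l * M = (1 - P i k) * M := by
      rw [← Finset.sum_mul, herase]
    have h3 : δ * (M - x k) ≤ P i k * (M - x k) :=
      mul_le_mul_of_nonneg_right (hδ i) (by linarith [hxM k])
    rw [hsplit]
    nlinarith [h1, h2, h3]
  · have h1 : ∑ l ∈ Finset.univ.erase k, P i l * m ≤
        ∑ l ∈ Finset.univ.erase k, P i l * x l :=
      Finset.sum_le_sum fun l _ => mul_le_mul_of_nonneg_left (hmx l) (hP i l)
    have h2 : ∑ l ∈ Finset.univ.erase k, P i l * m = (1 - P i k) * m := by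
      rw [← Finset.sum_mul, herase]
    have h3 : δ * (x k - m) ≤ P i k * (x k - m) :=
      mul_le_mul_of_nonneg_right (hδ i) (by linarith [hmx k])
    rw [hsplit]
    nlinarith [h1, h2, h3]

end StmtAux

open StmtAux

/-- For connected Γ, exp(Γt) → 𝟙rᵀ as t → ∞, where rᵀΓ = 0 and rᵀ𝟙 = 1. -/
theorem stmt3 {p : ℕ} (Γ : Matrix (Fin p) (Fin p) ℝ) (hΓ : IsConnectedMatrix Γ)
    (r : Fin p → ℝ) (hrΓ : r ᵥ* Γ = 0) (hr1 : ∑ i, r i = 1) :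
    Tendsto (fun t : ℝ => NormedSpace.exp (t • Γ)) atTop (nhds (vecMulVec (ones p) r)) := by
  obtain ⟨hoff, hrow, k, hk⟩ := hΓ
  have hp : Nonempty (Fin p) := by
    rcases Nat.eq_zero_or_pos p with h | h
    · subst h; simp at hr1
    · exact Fin.pos_iff_nonempty.mp h
  haveI := hp
  set E : ℝ → Mat p := fun t => exp (t • Γ) with hEdef
  have hΓones : Γ *ᵥ ones p = 0 := by
    ext i
    simp only [Matrix.mulVec, dotProduct, ones, mul_one, Pi.zero_apply]
    exact hrow i
  have hEones : ∀ t : ℝ, E t *ᵥ ones p = ones p := fun t =>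
    exp_mulVec (by rw [Matrix.smul_mulVec, hΓones, smul_zero])
  have hrowsum : ∀ (t : ℝ) (i : Fin p), ∑ l, E t i l = 1 := by
    intro t i
    have h := congrFun (hEones t) i
    simpa [Matrix.mulVec, dotProduct, ones] using h
  have hrE : ∀ t : ℝ, r ᵥ* E t = r := fun t =>
    vecMul_exp (by rw [vecMul_smul_right, hrΓ, smul_zero])
  have hEnn : ∀ t : ℝ, 0 ≤ t → ∀ i j, 0 ≤ E t i j := by
    intro t ht i j
    refine exp_nonneg_offdiag (fun a b hab => ?_) i j
    simp only [Matrix.smul_apply, smul_eq_mul]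
    exact mul_nonneg ht (hoff a b hab)
  have hsemi : ∀ s t : ℝ, E (s + t) = E s * E t := by
    intro s t
    show exp ((s + t) • Γ) = exp (s • Γ) * exp (t • Γ)
    rw [add_smul]
    exact Matrix.exp_add_of_commute (s • Γ) (t • Γ)
      (((Commute.refl Γ).smul_left s).smul_right t)
  have hE0 : E 0 = 1 := by
    show exp ((0 : ℝ) • Γ) = 1
    rw [zero_smul]
    exact exp_zero
  -- positivity of column k at time 1
  have hpos : ∀ i, 0 < E 1 i k := by
    intro i
    have hE1 : E 1 = exp Γ := by
      show exp ((1 : ℝ) • Γ) = _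
      rw [one_smul]
    set c : ℝ := (∑ l, |Γ l l|) + 1 with hc
    set B : Mat p := Γ + c • (1 : Mat p) with hB
    have habs : ∀ a : Fin p, |Γ a a| ≤ ∑ l, |Γ l l| := fun a =>
      Finset.single_le_sum (f := fun l => |Γ l l|) (fun l _ => abs_nonneg _)
        (Finset.mem_univ a)
    have hBdiag : ∀ a, 0 < B a a := by
      intro a
      simp only [hB, Matrix.add_apply, Matrix.smul_apply, Matrix.one_apply_eq, smul_eq_mul,
        mul_one]
      have h2 := neg_abs_le (Γ a a)
      have h1 := habs a
      linarith [hc]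
    have hBnn : ∀ a b, 0 ≤ B a b := by
      intro a b
      by_cases hab : a = b
      · subst hab; exact (hBdiag a).le
      · simp only [hB, Matrix.add_apply, Matrix.smul_apply, Matrix.one_apply_ne hab,
          smul_eq_mul, mul_zero, add_zero]
        exact hoff a b hab
    have hBpos : ∀ a b, 0 < Γ a b → 0 < B a b := by
      intro a b hab
      by_cases h' : a = b
      · subst h'; exact hBdiag a
      · simpa only [hB, Matrix.add_apply, Matrix.smul_apply, Matrix.one_apply_ne h',
          smul_eq_mul, mul_zero, add_zero] using hab
    have hpow : ∃ n, 0 < (B ^ n) i k := by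
      induction hk i using Relation.ReflTransGen.head_induction_on with
      | refl => exact ⟨0, by simp [Matrix.one_apply]⟩
      | head hab hbc ih =>
        obtain ⟨n, hn⟩ := ih
        refine ⟨n + 1, ?_⟩
        rw [pow_succ', Matrix.mul_apply]
        have hterm := mul_pos (hBpos _ _ hab) hn
        refine lt_of_lt_of_le hterm ?_
        exact Finset.single_le_sum (f := fun l => B _ l * (B ^ n) l k)
          (fun l _ => mul_nonneg (hBnn _ _) (pow_entry_nonneg hBnn n l k))
          (Finset.mem_univ _)
    obtain ⟨n, hn⟩ := hpow
    have hexpB : 0 < exp B i k := by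
      rw [exp_entry]
      have hterm : 0 < (Nat.factorial n : ℝ)⁻¹ * (B ^ n) i k := by positivity
      refine lt_of_lt_of_le hterm ((entry_summable B i k).le_tsum n ?_)
      intro m _
      exact mul_nonneg (by positivity) (pow_entry_nonneg hBnn m i k)
    rw [hE1, exp_eq_smul_exp_add Γ c, Matrix.smul_apply, smul_eq_mul, ← hB]
    exact mul_pos (Real.exp_pos _) hexpB
  set ε : ℝ := Finset.univ.inf' Finset.univ_nonempty (fun i => E 1 i k) with hεdef
  have hε0 : 0 < ε := by
    rw [hεdef, Finset.lt_inf'_iff]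
    exact fun i _ => hpos i
  have hεle : ∀ i, ε ≤ E 1 i k := fun i => Finset.inf'_le _ (Finset.mem_univ i)
  have hε1 : ε ≤ 1 := by
    obtain ⟨i⟩ := hp
    refine le_trans (hεle i) ?_
    have h1 : E 1 i k ≤ ∑ l, E 1 i l :=
      Finset.single_le_sum (f := fun l => E 1 i l) (fun l _ => hEnn 1 zero_le_one i l)
        (Finset.mem_univ k)
    rwa [hrowsum 1 i] at h1
  have hRnn : (0 : ℝ) ≤ ∑ m, |r m| := Finset.sum_nonneg fun m _ => abs_nonneg _
  have main : ∀ i j, Tendsto (fun t : ℝ => E t i j) atTop (nhds (r j)) := by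
    intro i j
    set Mx : ℝ → ℝ := fun t => Finset.univ.sup' Finset.univ_nonempty (fun m => E t m j)
      with hMx
    set mn : ℝ → ℝ := fun t => Finset.univ.inf' Finset.univ_nonempty (fun m => E t m j)
      with hmn
    have hentry : ∀ (t : ℝ) (m : Fin p), mn t ≤ E t m j ∧ E t m j ≤ Mx t := fun t m =>
      ⟨Finset.inf'_le (fun m => E t m j) (Finset.mem_univ m),
       Finset.le_sup' (fun m => E t m j) (Finset.mem_univ m)⟩
    have hmul : ∀ (s t : ℝ) (m : Fin p), E (s + t) m j = (E s *ᵥ fun l => E t l j) m := by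
      intro s t m
      rw [hsemi s t]
      simp [Matrix.mul_apply, Matrix.mulVec, dotProduct]
    have step : ∀ (s t δ : ℝ), 0 ≤ s → (∀ m, δ ≤ E s m k) →
        Mx (s + t) ≤ Mx t - δ * (Mx t - E t k j) ∧
          mn t + δ * (E t k j - mn t) ≤ mn (s + t) := by
      intro s t δ hs hδ
      have hsb := fun m => stoch_bound (hEnn s hs) (hrowsum s) k hδ (fun l => E t l j) m
      constructor
      · refine Finset.sup'_le _ _ fun m _ => ?_
        rw [hmul s t m]
        exact (hsb m).1
      · refine Finset.le_inf' _ _ fun m _ => ?_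
        rw [hmul s t m]
        exact (hsb m).2
    have hosc_nonneg : ∀ t : ℝ, 0 ≤ Mx t - mn t := by
      intro t
      obtain ⟨m⟩ := hp
      linarith [(hentry t m).1, (hentry t m).2]
    have hmono : ∀ s t : ℝ, 0 ≤ s → Mx (s + t) - mn (s + t) ≤ Mx t - mn t := by
      intro s t hs
      obtain ⟨h1, h2⟩ := step s t 0 hs (fun m => hEnn s hs m k)
      simp only [zero_mul, sub_zero, add_zero] at h1 h2
      linarith
    have hcontr : ∀ t : ℝ, Mx (1 + t) - mn (1 + t) ≤ (1 - ε) * (Mx t - mn t) := by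
      intro t
      obtain ⟨h1, h2⟩ := step 1 t ε zero_le_one hεle
      nlinarith [h1, h2, (hentry t k).1, (hentry t k).2]
    have hiter : ∀ (n : ℕ) (t : ℝ), 0 ≤ t →
        Mx (n + t) - mn (n + t) ≤ (1 - ε) ^ n * (Mx t - mn t) := by
      intro n
      induction n with
      | zero => intro t ht; simp
      | succ n ih =>
        intro t ht
        have harg : ((n + 1 : ℕ) : ℝ) + t = 1 + ((n : ℝ) + t) := by push_cast; ring
        rw [harg]
        calc Mx (1 + ((n : ℝ) + t)) - mn (1 + ((n : ℝ) + t))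
            ≤ (1 - ε) * (Mx ((n : ℝ) + t) - mn ((n : ℝ) + t)) := hcontr _
          _ ≤ (1 - ε) * ((1 - ε) ^ n * (Mx t - mn t)) :=
              mul_le_mul_of_nonneg_left (ih t ht) (by linarith)
          _ = (1 - ε) ^ (n + 1) * (Mx t - mn t) := by ring
    have hE0entry : ∀ m : Fin p, E 0 m j = (1 : Mat p) m j := fun m => by rw [hE0]
    have hosc0 : Mx 0 - mn 0 ≤ 1 := by
      have h1 : Mx 0 ≤ 1 := by
        refine Finset.sup'_le _ _ fun m _ => ?_
        rw [hE0entry m]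
        by_cases h : m = j <;> simp [Matrix.one_apply, h]
      have h2 : 0 ≤ mn 0 := by
        refine Finset.le_inf' _ _ fun m _ => ?_
        rw [hE0entry m]
        by_cases h : m = j <;> simp [Matrix.one_apply, h]
      linarith
    have hosc : ∀ t : ℝ, 0 ≤ t → Mx t - mn t ≤ (1 - ε) ^ (⌊t⌋₊) := by
      intro t ht
      have hfl : (⌊t⌋₊ : ℝ) ≤ t := Nat.floor_le ht
      have h1 : Mx t - mn t ≤ (1 - ε) ^ (⌊t⌋₊) * (Mx (t - ⌊t⌋₊) - mn (t - ⌊t⌋₊)) := by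
        have h := hiter ⌊t⌋₊ (t - ⌊t⌋₊) (by linarith)
        have harg : (⌊t⌋₊ : ℝ) + (t - ⌊t⌋₊) = t := by ring
        rwa [harg] at h
      have h2 : Mx (t - ⌊t⌋₊) - mn (t - ⌊t⌋₊) ≤ 1 := by
        have h := hmono (t - ⌊t⌋₊) 0 (by linarith)
        rw [add_zero] at h
        linarith
      calc Mx t - mn t ≤ _ := h1
        _ ≤ (1 - ε) ^ (⌊t⌋₊) * 1 :=
            mul_le_mul_of_nonneg_left h2 (pow_nonneg (by linarith) _)
        _ = (1 - ε) ^ (⌊t⌋₊) := mul_one _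
    have hdist : ∀ t : ℝ, |E t i j - r j| ≤ (∑ m, |r m|) * (Mx t - mn t) := by
      intro t
      have hrj : r j = ∑ m, r m * E t m j := by
        have h := congrFun (hrE t) j
        simp only [Matrix.vecMul, dotProduct] at h
        exact h.symm
      have key : ∑ m, r m * (E t i j - E t m j) = E t i j - r j := by
        simp only [mul_sub]
        rw [Finset.sum_sub_distrib, ← Finset.sum_mul, hr1, one_mul, ← hrj]
      rw [← key]
      calc |∑ m, r m * (E t i j - E t m j)| ≤ ∑ m, |r m * (E t i j - E t m j)| :=
            Finset.abs_sum_le_sum_abs _ _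
        _ ≤ ∑ m, |r m| * (Mx t - mn t) := by
            refine Finset.sum_le_sum fun m _ => ?_
            rw [abs_mul]
            refine mul_le_mul_of_nonneg_left ?_ (abs_nonneg _)
            have h1 := hentry t i
            have h2 := hentry t m
            refine abs_sub_le_iff.mpr ⟨by linarith [h1.1, h1.2, h2.1, h2.2],
              by linarith [h1.1, h1.2, h2.1, h2.2]⟩
        _ = (∑ m, |r m|) * (Mx t - mn t) := by rw [← Finset.sum_mul]
    have hgeo : Tendsto (fun t : ℝ => (∑ m, |r m|) * (1 - ε) ^ (⌊t⌋₊)) atTop (nhds 0) := by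
      have h1 : Tendsto (fun n : ℕ => (1 - ε) ^ n) atTop (nhds 0) :=
        tendsto_pow_atTop_nhds_zero_of_lt_one (by linarith) (by linarith)
      have h2 := (h1.comp (tendsto_nat_floor_atTop (α := ℝ))).const_mul (∑ m, |r m|)
      simpa using h2
    rw [tendsto_iff_dist_tendsto_zero]
    refine squeeze_zero' (Eventually.of_forall fun t => dist_nonneg) ?_ hgeo
    filter_upwards [eventually_ge_atTop (0 : ℝ)] with t ht
    rw [Real.dist_eq]
    calc |E t i j - r j| ≤ (∑ m, |r m|) * (Mx t - mn t) := hdist t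
      _ ≤ (∑ m, |r m|) * (1 - ε) ^ (⌊t⌋₊) :=
          mul_le_mul_of_nonneg_left (hosc t ht) hRnn
  refine tendsto_pi_nhds.2 ?_
  intro i
  rw [tendsto_pi_nhds]
  intro j
  simpa [Matrix.vecMulVec_apply, ones] using main i j
end
end

section
/- If Γ is connected with normalized left null vector r (rᵀΓ = 0, rᵀ𝟙 = 1), then the matrix Γ − 𝟙rᵀ is Hurwitz, i.e. all its eigenvalues have strictly negative real parts. -/
open Matrix NormedSpace Filter
open scoped Kronecker

noncomputable section

/-- A complex number whose real part equals its absolute value is real. -/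
lemma aux_re_eq_abs {z : ℂ} (h : z.re = ‖z‖) : z = (z.re : ℂ) := by
  have h2 : ‖z‖ ^ 2 = z.re ^ 2 + z.im ^ 2 := by
    rw [Complex.sq_norm, Complex.normSq_apply]; ring
  have h4 : z.re ^ 2 = ‖z‖ ^ 2 := by rw [h]
  have h5 : z.im ^ 2 = 0 := by linarith
  have him : z.im = 0 := by
    exact pow_eq_zero_iff (n := 2) (by norm_num) |>.mp h5
  exact Complex.ext (by simp) (by simp [him])

/-- Equality case: if `u` is in the kernel of `Γ` (row-wise), `i` maximizes `|u|`,
and `Γ i j > 0`, then `u j = u i`. -/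
lemma aux_ker_step {p : ℕ} {Γ : Matrix (Fin p) (Fin p) ℝ}
    (hoff : ∀ i j, i ≠ j → 0 ≤ Γ i j) (hrow : ∀ i, ∑ j, Γ i j = 0)
    {u : Fin p → ℂ} (hu : ∀ i, ∑ j, (Γ i j : ℂ) * u j = 0)
    {i : Fin p} (hmax : ∀ j, ‖u j‖ ≤ ‖u i‖)
    {j : Fin p} (hij : 0 < Γ i j) : u j = u i := by
  rcases eq_or_ne j i with rfl | hji
  · rfl
  rcases eq_or_lt_of_le (norm_nonneg (u i)) with hM0 | hMpos
  · have h1 : ‖u i‖ = 0 := hM0.symm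
    have h2 : ‖u j‖ = 0 :=
      le_antisymm (le_trans (hmax j) (le_of_eq h1)) (norm_nonneg _)
    rw [norm_eq_zero.mp h1, norm_eq_zero.mp h2]
  set M : ℝ := ‖u i‖ with hM
  -- multiply kernel equation by conj (u i) and take real parts
  set t : Fin p → ℝ := fun j' => ((starRingEnd ℂ) (u i) * u j').re with ht
  have h1 : ∑ j', (Γ i j' : ℂ) * ((starRingEnd ℂ) (u i) * u j') = 0 := by
    calc ∑ j', (Γ i j' : ℂ) * ((starRingEnd ℂ) (u i) * u j')
        = (starRingEnd ℂ) (u i) * ∑ j', (Γ i j' : ℂ) * u j' := by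
          rw [Finset.mul_sum]; congr 1; ext j'; ring
      _ = 0 := by rw [hu i, mul_zero]
  have h2 : ∑ j', Γ i j' * t j' = 0 := by
    have := congrArg Complex.re h1
    simpa [Complex.re_sum, Complex.re_ofReal_mul, ht] using this
  have hti : t i = M ^ 2 := by
    have he : (starRingEnd ℂ) (u i) * u i = (Complex.normSq (u i) : ℂ) := by
      rw [mul_comm, Complex.mul_conj]
    simp only [ht, he, Complex.ofReal_re]
    rw [hM, Complex.sq_norm]
  have htle : ∀ j', t j' ≤ M ^ 2 := by
    intro j'
    calc t j' ≤ ‖(starRingEnd ℂ) (u i) * u j'‖ := Complex.re_le_norm _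
      _ = M * ‖u j'‖ := by
          rw [norm_mul, Complex.norm_conj]
      _ ≤ M * M := mul_le_mul_of_nonneg_left (hmax j') (le_of_lt hMpos)
      _ = M ^ 2 := by ring
  have hsplit := Finset.add_sum_erase Finset.univ (fun j' => Γ i j' * t j') (Finset.mem_univ i)
  have hrowsplit := Finset.add_sum_erase Finset.univ (fun j' => Γ i j') (Finset.mem_univ i)
  rw [h2] at hsplit
  rw [hrow i] at hrowsplit
  have htj : t j = M ^ 2 := by
    by_contra hne
    have htlt : t j < M ^ 2 := lt_of_le_of_ne (htle j) hne
    have hjmem : j ∈ Finset.univ.erase i := Finset.mem_erase.mpr ⟨hji, Finset.mem_univ j⟩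
    have hlt : ∑ j' ∈ Finset.univ.erase i, Γ i j' * t j'
        < ∑ j' ∈ Finset.univ.erase i, Γ i j' * M ^ 2 := by
      apply Finset.sum_lt_sum
      · intro k hk
        exact mul_le_mul_of_nonneg_left (htle k) (hoff i k (Finset.mem_erase.mp hk).1.symm)
      · exact ⟨j, hjmem, mul_lt_mul_of_pos_left htlt hij⟩
    rw [← Finset.sum_mul] at hlt
    have hesum : ∑ x ∈ Finset.univ.erase i, Γ i x = -Γ i i := by linarith
    rw [hesum] at hlt
    have he1 : ∑ x ∈ Finset.univ.erase i, Γ i x * t x = -Γ i i * M ^ 2 := by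
      have : Γ i i * t i = Γ i i * M ^ 2 := by rw [hti]
      linarith
    linarith
  -- from t j = M², conclude u j = u i
  have habs : ‖(starRingEnd ℂ) (u i) * u j‖ ≤ M ^ 2 := by
    rw [norm_mul, Complex.norm_conj, ← hM]
    calc M * ‖u j‖ ≤ M * M := mul_le_mul_of_nonneg_left (hmax j) (le_of_lt hMpos)
      _ = M ^ 2 := by ring
  have hreabs : ((starRingEnd ℂ) (u i) * u j).re = ‖(starRingEnd ℂ) (u i) * u j‖ :=
    le_antisymm (Complex.re_le_norm _)
      (by rw [show ((starRingEnd ℂ) (u i) * u j).re = M ^ 2 from htj]; exact habs)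
  have heq : (starRingEnd ℂ) (u i) * u j = ((M : ℂ)) ^ 2 := by
    have h3 := aux_re_eq_abs hreabs
    rw [h3, show ((starRingEnd ℂ) (u i) * u j).re = M ^ 2 from htj]
    push_cast; ring
  have hnsq : u i * (starRingEnd ℂ) (u i) = ((M : ℂ)) ^ 2 := by
    rw [Complex.mul_conj, hM, ← Complex.sq_norm]; push_cast; ring
  have hMne : ((M : ℂ)) ^ 2 ≠ 0 := by
    have hM0 : (M : ℂ) ≠ 0 := by exact_mod_cast ne_of_gt hMpos
    exact pow_ne_zero 2 hM0
  apply mul_left_cancel₀ hMne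
  calc ((M : ℂ)) ^ 2 * u j = u i * (starRingEnd ℂ) (u i) * u j := by rw [hnsq]
    _ = u i * ((starRingEnd ℂ) (u i) * u j) := by ring
    _ = u i * (M : ℂ) ^ 2 := by rw [heq]
    _ = (M : ℂ) ^ 2 * u i := by ring

/-- Kernel vectors of a connected matrix are constant. -/
lemma aux_ker_const {p : ℕ} {Γ : Matrix (Fin p) (Fin p) ℝ}
    (hoff : ∀ i j, i ≠ j → 0 ≤ Γ i j) (hrow : ∀ i, ∑ j, Γ i j = 0)
    {k : Fin p} (hk : ∀ i, Relation.ReflTransGen (fun a b => 0 < Γ a b) i k)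
    {u : Fin p → ℂ} (hu : ∀ i, ∑ j, (Γ i j : ℂ) * u j = 0) :
    ∀ a, u a = u k := by
  set w : Fin p → ℂ := fun j => u j - u k with hw
  have hwker : ∀ i, ∑ j, (Γ i j : ℂ) * w j = 0 := by
    intro i
    have hrowC : ∑ j, (Γ i j : ℂ) = 0 := by
      have h := hrow i
      have : ((∑ j, Γ i j : ℝ) : ℂ) = 0 := by rw [h]; norm_num
      rw [← this]; push_cast; rfl
    calc ∑ j, (Γ i j : ℂ) * (u j - u k)
        = (∑ j, (Γ i j : ℂ) * u j) - (∑ j, (Γ i j : ℂ)) * u k := by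
          rw [Finset.sum_mul, ← Finset.sum_sub_distrib]; congr 1; ext j; ring
      _ = 0 := by rw [hu i, hrowC]; ring
  have hzero : ∀ j, w j = 0 := by
    by_contra hne
    push_neg at hne
    obtain ⟨j0, hj0⟩ := hne
    obtain ⟨i, -, hi⟩ := Finset.exists_max_image Finset.univ (fun j => ‖w j‖)
      ⟨j0, Finset.mem_univ j0⟩
    have hmax : ∀ j, ‖w j‖ ≤ ‖w i‖ := fun j => hi j (Finset.mem_univ j)
    have hMpos : 0 < ‖w i‖ :=
      lt_of_lt_of_le (norm_pos_iff.mpr hj0) (hmax j0)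
    have hpath : ∀ x y : Fin p, Relation.ReflTransGen (fun a b => 0 < Γ a b) x y →
        (∀ j, ‖w j‖ ≤ ‖w x‖) → w y = w x := by
      intro x y h
      induction h with
      | refl => intro _; rfl
      | tail hab hbc ih =>
        rename_i b c
        intro hmx
        have hwb := ih hmx
        have hmaxb : ∀ j, ‖w j‖ ≤ ‖w b‖ := by
          intro j; rw [hwb]; exact hmx j
        rw [aux_ker_step hoff hrow hwker hmaxb hbc, hwb]
    have hpath' : w k = w i := hpath i k (hk i) hmax
    have hwk : w k = 0 := by simp [hw]
    rw [hwk] at hpath'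
    rw [← hpath'] at hMpos
    simp at hMpos
  intro a
  have h := hzero a
  simp only [hw, sub_eq_zero] at h
  exact h

/-- An eigenvalue of Γ with nonnegative real part must be zero. -/
lemma aux_eig_zero {p : ℕ} {Γ : Matrix (Fin p) (Fin p) ℝ}
    (hoff : ∀ i j, i ≠ j → 0 ≤ Γ i j) (hrow : ∀ i, ∑ j, Γ i j = 0)
    {u : Fin p → ℂ} {μ : ℂ}
    (hu : ∀ i, ∑ j, (Γ i j : ℂ) * u j = μ * u i)
    (hre : 0 ≤ μ.re) (hne : u ≠ 0) : μ = 0 := by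
  have hex : ∃ j0, u j0 ≠ 0 := by
    by_contra h; push_neg at h; exact hne (funext h)
  obtain ⟨j0, hj0⟩ := hex
  obtain ⟨i, -, hi⟩ := Finset.exists_max_image Finset.univ (fun j => ‖u j‖)
    ⟨j0, Finset.mem_univ j0⟩
  have hmax : ∀ j, ‖u j‖ ≤ ‖u i‖ := fun j => hi j (Finset.mem_univ j)
  set M : ℝ := ‖u i‖ with hM
  have hMpos : 0 < M := lt_of_lt_of_le (norm_pos_iff.mpr hj0) (hmax j0)
  set c : ℝ := -Γ i i with hc
  have hrowsplit := Finset.add_sum_erase Finset.univ (fun j' => Γ i j') (Finset.mem_univ i)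
  rw [hrow i] at hrowsplit
  have hcnn : 0 ≤ c := by
    have h0 : 0 ≤ ∑ j' ∈ Finset.univ.erase i, Γ i j' :=
      Finset.sum_nonneg fun j' hj' => hoff i j' (Finset.mem_erase.mp hj').1.symm
    simp only [hc]; linarith
  have hsplitC := Finset.add_sum_erase Finset.univ (fun j' => (Γ i j' : ℂ) * u j')
    (Finset.mem_univ i)
  rw [hu i] at hsplitC
  have hkey : (μ + (c : ℂ)) * u i = ∑ j' ∈ Finset.univ.erase i, (Γ i j' : ℂ) * u j' := by
    have : (c : ℂ) = -(Γ i i : ℂ) := by simp [hc]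
    rw [this]
    linear_combination (-1 : ℂ) * hsplitC
  have habs : ‖μ + (c : ℂ)‖ * M ≤ c * M := by
    calc ‖μ + (c : ℂ)‖ * M
        = ‖(μ + (c : ℂ)) * u i‖ := by rw [norm_mul, hM]
      _ = ‖∑ j' ∈ Finset.univ.erase i, (Γ i j' : ℂ) * u j'‖ := by rw [hkey]
      _ ≤ ∑ j' ∈ Finset.univ.erase i, ‖(Γ i j' : ℂ) * u j'‖ :=
          norm_sum_le _ _
      _ ≤ ∑ j' ∈ Finset.univ.erase i, Γ i j' * M := by
          apply Finset.sum_le_sum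
          intro j' hj'
          rw [norm_mul, Complex.norm_real, Real.norm_eq_abs,
            abs_of_nonneg (hoff i j' (Finset.mem_erase.mp hj').1.symm)]
          exact mul_le_mul_of_nonneg_left (hmax j') (hoff i j' (Finset.mem_erase.mp hj').1.symm)
      _ = c * M := by
          rw [← Finset.sum_mul]
          congr 1
          simp only [hc]; linarith
  have habs2 : ‖μ + (c : ℂ)‖ ≤ c := le_of_mul_le_mul_right habs hMpos
  have hsq : (μ.re + c) ^ 2 + μ.im ^ 2 ≤ c ^ 2 := by
    have h1 : ‖μ + (c : ℂ)‖ ^ 2 ≤ c ^ 2 := by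
      apply sq_le_sq' _ habs2
      calc -c ≤ 0 := by linarith
        _ ≤ ‖_‖ := norm_nonneg _
    rw [Complex.sq_norm, Complex.normSq_apply] at h1
    simp only [Complex.add_re, Complex.add_im, Complex.ofReal_re, Complex.ofReal_im,
      add_zero] at h1
    nlinarith [h1]
  have hre0 : μ.re = 0 := by nlinarith [sq_nonneg μ.im, sq_nonneg μ.re]
  have him0 : μ.im = 0 := by nlinarith [sq_nonneg (μ.re + c)]
  exact Complex.ext hre0 him0

/-- For connected Γ with normalized left null vector r, the matrix Γ − 𝟙rᵀ is Hurwitz. -/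
theorem stmt4 {p : ℕ} (Γ : Matrix (Fin p) (Fin p) ℝ) (hΓ : IsConnectedMatrix Γ)
    (r : Fin p → ℝ) (hrΓ : r ᵥ* Γ = 0) (hr1 : ∑ i, r i = 1) :
    ∀ μ ∈ spectrum ℂ ((Γ - vecMulVec (ones p) r).map Complex.ofReal), μ.re < 0 := by
  intro μ hμ
  by_contra hrec
  push_neg at hrec
  obtain ⟨hoff, hrow, k, hk⟩ := hΓ
  set A : Matrix (Fin p) (Fin p) ℂ := (Γ - vecMulVec (ones p) r).map Complex.ofReal with hA
  rw [spectrum.mem_iff, Matrix.isUnit_iff_isUnit_det, isUnit_iff_ne_zero, not_not] at hμ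
  obtain ⟨v, hv, hveq⟩ := Matrix.exists_mulVec_eq_zero_iff.mpr hμ
  have heig : ∀ i, ∑ j, A i j * v j = μ * v i := by
    intro i
    have h1 := congrFun hveq i
    simp only [Matrix.sub_mulVec, Pi.sub_apply, Pi.zero_apply, sub_eq_zero] at h1
    have h2 : ((algebraMap ℂ (Matrix (Fin p) (Fin p) ℂ)) μ *ᵥ v) i = μ * v i := by
      rw [Matrix.algebraMap_eq_diagonal]
      simp [Matrix.mulVec_diagonal]
    have h3 : (A *ᵥ v) i = ∑ j, A i j * v j := by
      simp [Matrix.mulVec, dotProduct]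
    rw [h2, h3] at h1
    exact h1.symm
  have hAentry : ∀ i j, A i j = (Γ i j : ℂ) - (r j : ℂ) := by
    intro i j
    simp [hA, Matrix.map_apply, Matrix.sub_apply, Matrix.vecMulVec_apply, ones]
  set s : ℂ := ∑ j, (r j : ℂ) * v j with hs
  have heig2 : ∀ i, ∑ j, (Γ i j : ℂ) * v j = μ * v i + s := by
    intro i
    have h1 := heig i
    have h2 : ∑ j, A i j * v j = ∑ j, (Γ i j : ℂ) * v j - s := by
      simp only [hAentry, sub_mul, hs, Finset.sum_sub_distrib]
    rw [h2] at h1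
    linear_combination h1
  have hr1C : ∑ i, (r i : ℂ) = 1 := by
    rw [show ((1 : ℂ)) = ((1 : ℝ) : ℂ) by norm_num, ← hr1]
    push_cast; rfl
  by_cases hsz : s = 0
  · -- s = 0: v is an eigenvector of Γ, so μ = 0 and v constant, contradiction
    have heig3 : ∀ i, ∑ j, (Γ i j : ℂ) * v j = μ * v i := by
      intro i; rw [heig2 i, hsz, add_zero]
    have hμ0 : μ = 0 := aux_eig_zero hoff hrow heig3 hrec hv
    have hker : ∀ i, ∑ j, (Γ i j : ℂ) * v j = 0 := by
      intro i; rw [heig3 i, hμ0, zero_mul]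
    have hconst := aux_ker_const hoff hrow hk hker
    have hsval : s = v k := by
      rw [hs]
      calc ∑ j, (r j : ℂ) * v j = ∑ j, (r j : ℂ) * v k := by
            apply Finset.sum_congr rfl; intro j _; rw [hconst j]
        _ = (∑ j, (r j : ℂ)) * v k := by rw [Finset.sum_mul]
        _ = v k := by rw [hr1C, one_mul]
    have hvk : v k = 0 := by rw [← hsval, hsz]
    apply hv
    funext j
    rw [Pi.zero_apply, hconst j, hvk]
  · -- s ≠ 0: left-multiplying by r gives μ = -1
    have hrΓ' : ∀ j, ∑ i, (r i : ℂ) * (Γ i j : ℂ) = 0 := by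
      intro j
      have h := congrFun hrΓ j
      simp only [Matrix.vecMul, dotProduct, Pi.zero_apply] at h
      have : ((∑ i, r i * Γ i j : ℝ) : ℂ) = 0 := by rw [h]; norm_num
      rw [← this]; push_cast; rfl
    have hleft : ∑ i, (r i : ℂ) * (∑ j, (Γ i j : ℂ) * v j) = 0 := by
      calc ∑ i, (r i : ℂ) * ∑ j, (Γ i j : ℂ) * v j
          = ∑ i, ∑ j, (r i : ℂ) * ((Γ i j : ℂ) * v j) := by simp_rw [Finset.mul_sum]
        _ = ∑ j, ∑ i, (r i : ℂ) * ((Γ i j : ℂ) * v j) := Finset.sum_comm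
        _ = ∑ j, (∑ i, (r i : ℂ) * (Γ i j : ℂ)) * v j := by
            apply Finset.sum_congr rfl; intro j _
            rw [Finset.sum_mul]; apply Finset.sum_congr rfl; intro i _; ring
        _ = 0 := by
            apply Finset.sum_eq_zero; intro j _; rw [hrΓ' j, zero_mul]
    have hright : ∑ i, (r i : ℂ) * (μ * v i + s) = (μ + 1) * s := by
      have h1 : ∀ i : Fin p, (r i : ℂ) * (μ * v i + s) = μ * ((r i : ℂ) * v i) + (r i : ℂ) * s :=
        fun i => by ring
      simp_rw [h1]
      rw [Finset.sum_add_distrib, ← Finset.mul_sum, ← Finset.sum_mul, ← hs, hr1C]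
      ring
    have : (μ + 1) * s = 0 := by
      rw [← hright, ← hleft]
      apply Finset.sum_congr rfl
      intro i _
      rw [heig2 i]
    have hμ1 : μ = -1 := by
      rcases mul_eq_zero.mp this with h | h
      · linear_combination h
      · exact absurd h hsz
    rw [hμ1] at hrec
    norm_num at hrec
end
end

section
/- Let P, Q be symmetric positive definite with (Γ − 𝟙rᵀ)ᵀP + P(Γ − 𝟙rᵀ) = −Q, and define P̂ := (I − 𝟙rᵀ)ᵀP(I − 𝟙rᵀ) and Q̂ := (I − 𝟙rᵀ)ᵀQ(I − 𝟙rᵀ). Then ΓᵀP̂ + P̂Γ = −Q̂. -/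
open Matrix NormedSpace Filter
open scoped Kronecker

noncomputable section

/-- Projecting a Lyapunov equation for Γ − 𝟙rᵀ by I − 𝟙rᵀ gives one for Γ. -/
theorem stmt5 {p : ℕ} (Γ : Matrix (Fin p) (Fin p) ℝ) (r : Fin p → ℝ)
    (hΓ1 : Γ *ᵥ ones p = 0) (hrΓ : r ᵥ* Γ = 0) (hr1 : ∑ i, r i = 1)
    (P Q : Matrix (Fin p) (Fin p) ℝ) (hP : P.PosDef) (hQ : Q.PosDef)
    (hlyap : (Γ - vecMulVec (ones p) r)ᵀ * P + P * (Γ - vecMulVec (ones p) r) = -Q) :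
    Γᵀ * ((1 - vecMulVec (ones p) r)ᵀ * P * (1 - vecMulVec (ones p) r)) +
        ((1 - vecMulVec (ones p) r)ᵀ * P * (1 - vecMulVec (ones p) r)) * Γ =
      -((1 - vecMulVec (ones p) r)ᵀ * Q * (1 - vecMulVec (ones p) r)) := by
  set E := vecMulVec (ones p) r with hE
  have hE2 : E * E = E := by
    ext i j
    simp [hE, Matrix.mul_apply, vecMulVec_apply, ones, ← Finset.sum_mul, hr1]
  have hΓE : Γ * E = 0 := by
    ext i j
    have := congrFun hΓ1 i
    simp [Matrix.mulVec, dotProduct, ones] at this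
    simp [hE, Matrix.mul_apply, vecMulVec_apply, ones, ← Finset.sum_mul, this]
  have hEΓ : E * Γ = 0 := by
    ext i j
    have := congrFun hrΓ j
    simp [Matrix.vecMul, dotProduct] at this
    simp [hE, Matrix.mul_apply, vecMulVec_apply, ones, this]
  have h1 : (Γ - E) * (1 - E) = Γ := by
    rw [sub_mul, mul_sub, mul_sub, hΓE, hE2, mul_one, mul_one, sub_zero, sub_self, sub_zero]
  have h2 : (1 - E) * Γ = Γ := by
    rw [sub_mul, one_mul, hEΓ, sub_zero]
  have ht : Γᵀ * (1 - E)ᵀ = Γᵀ := by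
    rw [← transpose_mul, h2]
  have key : (1 - E)ᵀ * ((Γ - E)ᵀ * P + P * (Γ - E)) * (1 - E) =
      (1 - E)ᵀ * (-Q) * (1 - E) := by rw [hlyap]
  calc Γᵀ * ((1 - E)ᵀ * P * (1 - E)) + ((1 - E)ᵀ * P * (1 - E)) * Γ
      = (Γᵀ * (1 - E)ᵀ) * P * (1 - E) + (1 - E)ᵀ * P * ((1 - E) * Γ) := by
        simp only [Matrix.mul_assoc]
    _ = (1 - E)ᵀ * ((Γ - E)ᵀ * P + P * (Γ - E)) * (1 - E) := by
        rw [ht, h2, Matrix.mul_add, Matrix.add_mul,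
          show (1 - E)ᵀ * ((Γ - E)ᵀ * P) = ((Γ - E) * (1 - E))ᵀ * P by
            rw [transpose_mul, Matrix.mul_assoc], h1,
          Matrix.mul_assoc ((1 - E)ᵀ) (P * (Γ - E)), Matrix.mul_assoc P, h1]
        simp only [Matrix.mul_assoc]
    _ = (1 - E)ᵀ * (-Q) * (1 - E) := key
    _ = -((1 - E)ᵀ * Q * (1 - E)) := by simp [Matrix.mul_neg, Matrix.neg_mul]
end
end

section
/- Let F ∈ ℝ^{n×n} be neutrally stable with all eigenvalues on the imaginary axis. Then the limit P := lim_{t→∞} t^{-1} ∫₀ᵗ exp(Fᵀτ) exp(Fτ) dτ exists. -/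
open Matrix NormedSpace Filter
open scoped Kronecker

noncomputable section

section Aux

open Submodule Set intervalIntegral

lemma exists_eigenbasis {n : ℕ} (A : Matrix (Fin n) (Fin n) ℂ)
    (hker : ∀ μ : ℂ, ∀ v : Fin n → ℂ,
      (A - μ • 1) *ᵥ ((A - μ • 1) *ᵥ v) = 0 → (A - μ • 1) *ᵥ v = 0) :
    ∃ b : Module.Basis (Fin n) ℂ (Fin n → ℂ), ∀ k, ∃ μ : ℂ, A *ᵥ (b k) = μ • (b k) := by
  classical
  set f : Module.End ℂ (Fin n → ℂ) := A.mulVecLin with hf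
  have hsub : ∀ (μ : ℂ) (v : Fin n → ℂ),
      (f - μ • (1 : Module.End ℂ (Fin n → ℂ))) v = (A - μ • 1) *ᵥ v := by
    intro μ v
    simp [Matrix.sub_mulVec, Matrix.smul_mulVec, Matrix.one_mulVec, hf]
  have hker' : ∀ (μ : ℂ) (v : Fin n → ℂ),
      (f - μ • 1) ((f - μ • 1) v) = 0 → (f - μ • 1) v = 0 := by
    intro μ v h
    rw [hsub, hsub] at h
    rw [hsub]
    exact hker μ v h
  have claim : ∀ (μ : ℂ) (l : ℕ) (v : Fin n → ℂ),
      ((f - μ • 1) ^ (l + 1)) v = 0 → (f - μ • 1) v = 0 := by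
    intro μ l
    induction l with
    | zero => intro v h; simpa using h
    | succ l ih =>
      intro v h
      apply hker' μ v
      apply ih
      rw [← Module.End.mul_apply, ← pow_succ]
      exact h
  have hmax : ∀ μ : ℂ, f.maxGenEigenspace μ = f.eigenspace μ := by
    intro μ
    refine le_antisymm (fun m hm => ?_) ((f.genEigenspace μ).monotone ?_)
    · rw [Module.End.mem_maxGenEigenspace] at hm
      obtain ⟨k, hk⟩ := hm
      rw [Module.End.mem_eigenspace_iff, ← sub_eq_zero]
      have hfm : (f - μ • 1) m = f m - μ • m := by simp
      rw [← hfm]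
      rcases k with _ | l
      · simp only [pow_zero, Module.End.one_apply] at hk
        simp [hk]
      · exact claim μ l m hk
    · exact le_top
  have htop : ⨆ μ : ℂ, f.eigenspace μ = ⊤ := by
    simp_rw [← hmax]
    exact Module.End.iSup_maxGenEigenspace_eq_top f
  set S : Set (Fin n → ℂ) := {v | ∃ μ : ℂ, f v = μ • v} with hS
  have hspan : ⊤ ≤ span ℂ S := by
    rw [← htop]
    refine iSup_le fun μ => fun v hv => subset_span ?_
    exact ⟨μ, Module.End.mem_eigenspace_iff.mp hv⟩
  let b0 := Module.Basis.ofSpan hspan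
  haveI : Fintype ((linearIndepOn_empty ℂ (id : (Fin n → ℂ) → (Fin n → ℂ))).extend (empty_subset S)) :=
    FiniteDimensional.fintypeBasisIndex b0
  have hcard : Fintype.card
      ((linearIndepOn_empty ℂ (id : (Fin n → ℂ) → (Fin n → ℂ))).extend (empty_subset S)) = n := by
    rw [← Module.finrank_eq_card_basis b0, Module.finrank_fin_fun]
  let b := b0.reindex (Fintype.equivFinOfCardEq hcard)
  refine ⟨b, fun k => ?_⟩
  have hmem : (b k : Fin n → ℂ) ∈ S := by
    have hrk : b k = b0 ((Fintype.equivFinOfCardEq hcard).symm k) := b0.reindex_apply _ _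
    rw [hrk]
    exact Module.Basis.ofSpan_subset hspan ⟨_, rfl⟩
  obtain ⟨μ, hμ⟩ := hmem
  exact ⟨μ, hμ⟩

lemma cesaro_exp (z : ℂ) (hz : z.re = 0) :
    Tendsto (fun t : ℝ => (t : ℂ)⁻¹ * ∫ τ in (0:ℝ)..t, Complex.exp (τ * z))
      atTop (nhds (if z = 0 then 1 else 0)) := by
  rcases eq_or_ne z 0 with rfl | hz0
  · simp only [if_pos rfl, mul_zero, Complex.exp_zero]
    have heq : ∀ᶠ t : ℝ in atTop,
        (t : ℂ)⁻¹ * (∫ τ in (0:ℝ)..t, (1:ℂ)) = 1 := by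
      filter_upwards [eventually_ge_atTop (1:ℝ)] with t ht
      have ht0 : (t:ℂ) ≠ 0 := by
        exact_mod_cast ne_of_gt (lt_of_lt_of_le one_pos ht)
      rw [intervalIntegral.integral_const]
      simp [ht0, inv_mul_cancel₀]
    exact tendsto_const_nhds.congr' (heq.mono fun t h => h.symm)
  · simp only [if_neg hz0]
    have key : ∀ t : ℝ, (∫ τ in (0:ℝ)..t, Complex.exp (τ * z))
        = (Complex.exp (t * z) - 1) / z := by
      intro t
      simp_rw [mul_comm _ z]
      rw [integral_exp_mul_complex hz0]
      simp
    simp_rw [key]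
    refine squeeze_zero_norm' (a := fun t : ℝ => t⁻¹ * (2 / ‖z‖)) ?_ ?_
    · filter_upwards [eventually_ge_atTop (1:ℝ)] with t ht
      have ht0 : (0:ℝ) < t := lt_of_lt_of_le one_pos ht
      rw [norm_mul]
      have h1 : ‖((t:ℝ) : ℂ)⁻¹‖ = t⁻¹ := by
        rw [norm_inv, Complex.norm_real, Real.norm_eq_abs, abs_of_pos ht0]
      rw [h1]
      gcongr
      rw [norm_div]
      gcongr
      have habs : ‖Complex.exp (↑t * z)‖ = 1 := by
        rw [Complex.norm_exp]
        simp [hz]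
      calc ‖Complex.exp (↑t * z) - 1‖ ≤ ‖Complex.exp (↑t * z)‖ + ‖(1:ℂ)‖ := norm_sub_le _ _
        _ = 2 := by rw [habs]; norm_num
    · simpa using tendsto_inv_atTop_zero.mul_const (2 / ‖z‖)

lemma exp_map_ofReal {n : ℕ} (M : Matrix (Fin n) (Fin n) ℝ) :
    (exp M).map Complex.ofReal = exp (M.map Complex.ofReal) := by
  letI : SeminormedRing (Matrix (Fin n) (Fin n) ℝ) := Matrix.linftyOpSemiNormedRing
  letI : NormedRing (Matrix (Fin n) (Fin n) ℝ) := Matrix.linftyOpNormedRing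
  letI : NormedAlgebra ℚ (Matrix (Fin n) (Fin n) ℝ) := Matrix.linftyOpNormedAlgebra
  letI : SeminormedRing (Matrix (Fin n) (Fin n) ℂ) := Matrix.linftyOpSemiNormedRing
  letI : NormedRing (Matrix (Fin n) (Fin n) ℂ) := Matrix.linftyOpNormedRing
  letI : NormedAlgebra ℚ (Matrix (Fin n) (Fin n) ℂ) := Matrix.linftyOpNormedAlgebra
  haveI : @CompleteSpace (Matrix (Fin n) (Fin n) ℝ) PseudoMetricSpace.toUniformSpace :=
    Matrix.instCompleteSpace (Fin n) (Fin n) ℝ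
  exact map_exp
    (Complex.ofRealHom.mapMatrix : Matrix (Fin n) (Fin n) ℝ →+* Matrix (Fin n) (Fin n) ℂ)
    (continuous_id.matrix_map Complex.continuous_ofReal) M

lemma exp_pi_complex {n : ℕ} (v : Fin n → ℂ) : exp v = fun k => Complex.exp (v k) := by
  rw [Pi.exp_def]
  funext k
  rw [← Complex.exp_eq_exp_ℂ]

end Aux

/-- For F neutrally stable with all eigenvalues on the imaginary axis (purely imaginary,
semisimple spectrum), the Cesàro limit P = lim t⁻¹∫₀ᵗ exp(Fᵀτ)exp(Fτ)dτ exists. -/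
theorem stmt7 {n : ℕ} (F : Matrix (Fin n) (Fin n) ℝ)
    (hspec : ∀ μ ∈ spectrum ℂ (F.map Complex.ofReal), μ.re = 0)
    (hsemisimple : ∀ μ ∈ spectrum ℂ (F.map Complex.ofReal),
      ∀ v : Fin n → ℂ,
        (F.map Complex.ofReal - μ • 1) *ᵥ ((F.map Complex.ofReal - μ • 1) *ᵥ v) = 0 →
          (F.map Complex.ofReal - μ • 1) *ᵥ v = 0) :
    ∃ P : Matrix (Fin n) (Fin n) ℝ,
      Tendsto
        (fun t : ℝ => t⁻¹ • Matrix.of (fun i j =>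
          ∫ τ in (0:ℝ)..t, (NormedSpace.exp (τ • Fᵀ) * NormedSpace.exp (τ • F)) i j))
        atTop (nhds P) := by
  classical
  set A : Matrix (Fin n) (Fin n) ℂ := F.map Complex.ofReal with hA
  have hvec : ∀ (M : Matrix (Fin n) (Fin n) ℂ) (w : Fin n → ℂ),
      IsUnit M → M *ᵥ w = 0 → w = 0 := by
    intro M w hM h
    obtain ⟨u, rfl⟩ := hM
    have h2 : (↑u⁻¹ : Matrix (Fin n) (Fin n) ℂ) *ᵥ ((u : Matrix (Fin n) (Fin n) ℂ) *ᵥ w) = 0 := by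
      rw [h]; simp
    rwa [Matrix.mulVec_mulVec, ← Units.val_mul, inv_mul_cancel, Units.val_one,
      Matrix.one_mulVec] at h2
  have hker : ∀ μ : ℂ, ∀ v : Fin n → ℂ,
      (A - μ • 1) *ᵥ ((A - μ • 1) *ᵥ v) = 0 → (A - μ • 1) *ᵥ v = 0 := by
    intro μ v h
    by_cases hμ : μ ∈ spectrum ℂ A
    · exact hsemisimple μ hμ v h
    · rw [spectrum.notMem_iff] at hμ
      rw [Algebra.algebraMap_eq_smul_one] at hμ
      have h0 : (μ • (1 : Matrix (Fin n) (Fin n) ℂ) - A) *ᵥ ((A - μ • 1) *ᵥ v) = 0 := by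
        have hflip : μ • (1 : Matrix (Fin n) (Fin n) ℂ) - A = -(A - μ • 1) := (neg_sub _ _).symm
        rw [hflip, Matrix.neg_mulVec, h, neg_zero]
      exact hvec _ _ hμ h0
  obtain ⟨b, hb⟩ := exists_eigenbasis A hker
  choose d hd using hb
  have hd_re : ∀ k, (d k).re = 0 := by
    intro k
    apply hspec
    rw [spectrum.mem_iff]
    intro hunit
    rw [Algebra.algebraMap_eq_smul_one] at hunit
    apply b.ne_zero k
    apply hvec _ _ hunit
    rw [Matrix.sub_mulVec, Matrix.smul_mulVec, Matrix.one_mulVec, hd k, sub_self]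
  -- the change of basis matrix
  set Q : Matrix (Fin n) (Fin n) ℂ := (Pi.basisFun ℂ (Fin n)).toMatrix ⇑b with hQdef
  have hQe : ∀ i k, Q i k = b k i := by
    intro i k; simp [hQdef, Module.Basis.toMatrix_apply]
  haveI hQinv : Invertible Q := (Pi.basisFun ℂ (Fin n)).invertibleToMatrix b
  have hQu : IsUnit Q := isUnit_of_invertible Q
  have hQdet : IsUnit Q.det := (Matrix.isUnit_iff_isUnit_det Q).mp hQu
  have hAQ : A * Q = Q * Matrix.diagonal d := by
    ext i k
    have h1 : (A * Q) i k = (A *ᵥ b k) i := by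
      simp [Matrix.mul_apply, Matrix.mulVec, dotProduct, hQe]
    rw [h1, hd k, Matrix.mul_diagonal, hQe]
    simp [mul_comm]
  have hAdiag : A = Q * Matrix.diagonal d * Q⁻¹ := by
    rw [← hAQ, Matrix.mul_assoc, Matrix.mul_nonsing_inv Q hQdet, Matrix.mul_one]
  have hexpA : ∀ τ : ℝ,
      exp (τ • A) = Q * Matrix.diagonal (fun k => Complex.exp (τ * d k)) * Q⁻¹ := by
    intro τ
    have h1 : τ • A = Q * Matrix.diagonal (fun k => (τ : ℂ) * d k) * Q⁻¹ := by
      have hds : Matrix.diagonal (fun k => (τ : ℂ) * d k) = (τ : ℂ) • Matrix.diagonal d := by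
        rw [← Matrix.diagonal_smul]
        congr 1
      rw [hds, Matrix.mul_smul, Matrix.smul_mul]
      rw [← hAdiag]
      ext i j
      simp [Complex.real_smul]
    rw [h1, Matrix.exp_conj Q _ hQu, Matrix.exp_diagonal, exp_pi_complex]
  -- the complexified entry formula
  have hEntry : ∀ (τ : ℝ) (i j : Fin n),
      (((exp (τ • Fᵀ) * exp (τ • F)) i j : ℝ) : ℂ)
        = ∑ k, ∑ l, (Q⁻¹ k i * ((Qᵀ * Q) k l) * Q⁻¹ l j) * Complex.exp (τ * (d k + d l)) := by
    intro τ i j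
    have hmapF : (τ • F).map Complex.ofReal = τ • A := by
      ext a c; simp [hA, Complex.real_smul]
    have hmapFT : (τ • Fᵀ).map Complex.ofReal = (τ • A)ᵀ := by
      ext a c; simp [hA, Complex.real_smul]
    have hLHS : (((exp (τ • Fᵀ) * exp (τ • F)) i j : ℝ) : ℂ)
        = ((exp (τ • A))ᵀ * exp (τ • A)) i j := by
      have hmul : (exp (τ • Fᵀ) * exp (τ • F)).map Complex.ofReal
          = (exp (τ • A))ᵀ * exp (τ • A) := by
        have hmm : (exp (τ • Fᵀ) * exp (τ • F)).map Complex.ofReal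
            = (exp (τ • Fᵀ)).map Complex.ofReal * (exp (τ • F)).map Complex.ofReal := by
          ext a c
          simp only [Matrix.map_apply, Matrix.mul_apply]
          push_cast
          rfl
        rw [hmm, exp_map_ofReal, exp_map_ofReal, hmapF, hmapFT, Matrix.exp_transpose]
      exact congrFun (congrFun (congrArg (fun M => (M : Matrix (Fin n) (Fin n) ℂ)) hmul) i) j
    rw [hLHS, hexpA τ]
    set R : Matrix (Fin n) (Fin n) ℂ := Qᵀ * Q with hR
    set E : Matrix (Fin n) (Fin n) ℂ := Matrix.diagonal (fun k => Complex.exp (τ * d k))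
      with hE
    have hNt : (Q * E * Q⁻¹)ᵀ = Q⁻¹ᵀ * (E * Qᵀ) := by
      rw [Matrix.transpose_mul, Matrix.transpose_mul]
      congr 1
      rw [hE, Matrix.diagonal_transpose]
    rw [hNt]
    have hassoc : Q⁻¹ᵀ * (E * Qᵀ) * (Q * E * Q⁻¹)
        = Q⁻¹ᵀ * ((E * R * E) * Q⁻¹) := by
      rw [hR]
      noncomm_ring
    rw [hassoc]
    have hmid : E * R * E
        = Matrix.of (fun k l => Complex.exp (τ * (d k + d l)) * R k l) := by
      ext k l
      rw [hE, Matrix.mul_diagonal, Matrix.diagonal_mul, Matrix.of_apply, mul_add,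
        Complex.exp_add]
      ring
    rw [hmid]
    simp only [Matrix.mul_apply, Matrix.of_apply, Matrix.transpose_apply,
      Finset.mul_sum, Finset.sum_mul]
    refine Finset.sum_congr rfl fun k _ => Finset.sum_congr rfl fun l _ => by ring
  -- coefficients and limit matrix
  set c : Fin n → Fin n → Fin n → Fin n → ℂ :=
    fun i j k l => Q⁻¹ k i * ((Qᵀ * Q) k l) * Q⁻¹ l j with hc
  set L : Fin n → Fin n → ℂ :=
    fun i j => ∑ k, ∑ l, c i j k l * (if d k + d l = 0 then 1 else 0) with hL
  refine ⟨Matrix.of fun i j => (L i j).re, ?_⟩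
  have key : ∀ i j : Fin n,
      Tendsto (fun t : ℝ => t⁻¹ *
          ∫ τ in (0:ℝ)..t, (exp (τ • Fᵀ) * exp (τ • F)) i j)
        atTop (nhds ((L i j).re)) := by
    intro i j
    have hg : Tendsto (fun t : ℝ => (t : ℂ)⁻¹ *
        ∫ τ in (0:ℝ)..t, ∑ k, ∑ l, c i j k l * Complex.exp (τ * (d k + d l)))
        atTop (nhds (L i j)) := by
      have hint : ∀ (t : ℝ),
          (∫ τ in (0:ℝ)..t, ∑ k, ∑ l, c i j k l * Complex.exp (τ * (d k + d l)))
          = ∑ k, ∑ l, c i j k l * ∫ τ in (0:ℝ)..t, Complex.exp (τ * (d k + d l)) := by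
        intro t
        rw [intervalIntegral.integral_finset_sum]
        · refine Finset.sum_congr rfl fun k _ => ?_
          rw [intervalIntegral.integral_finset_sum]
          · exact Finset.sum_congr rfl fun l _ =>
              intervalIntegral.integral_const_mul _ _
          · intro l _
            exact (continuous_const.mul (Complex.continuous_exp.comp
              (Complex.continuous_ofReal.mul continuous_const))).intervalIntegrable _ _
        · intro k _
          refine Continuous.intervalIntegrable ?_ _ _
          exact continuous_finset_sum _ fun l _ => continuous_const.mul
            (Complex.continuous_exp.comp
              (Complex.continuous_ofReal.mul continuous_const))
      simp_rw [hint, Finset.mul_sum]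
      rw [hL]
      refine tendsto_finset_sum _ fun k _ => tendsto_finset_sum _ fun l _ => ?_
      have hterm := Filter.Tendsto.const_mul (c i j k l) (cesaro_exp (d k + d l) (by simp [hd_re]))
      refine hterm.congr fun t => by ring
    have hre : ∀ t : ℝ, t⁻¹ * (∫ τ in (0:ℝ)..t, (exp (τ • Fᵀ) * exp (τ • F)) i j)
        = (((t : ℂ)⁻¹ *
          ∫ τ in (0:ℝ)..t, ∑ k, ∑ l, c i j k l * Complex.exp (τ * (d k + d l))).re) := by
      intro t
      have : ((t⁻¹ * ∫ τ in (0:ℝ)..t, (exp (τ • Fᵀ) * exp (τ • F)) i j : ℝ) : ℂ)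
          = (t : ℂ)⁻¹ * ∫ τ in (0:ℝ)..t, ∑ k, ∑ l, c i j k l
              * Complex.exp (τ * (d k + d l)) := by
        push_cast
        rw [← intervalIntegral.integral_ofReal]
        congr 1
        refine intervalIntegral.integral_congr fun τ _ => ?_
        exact hEntry τ i j
      rw [← this, Complex.ofReal_re]
    simp_rw [hre]
    exact (Complex.continuous_re.tendsto _).comp hg
  -- assemble the matrix limit
  refine tendsto_pi_nhds.mpr ?_
  intro i
  refine tendsto_pi_nhds.mpr ?_
  intro j
  have : (fun t : ℝ => (t⁻¹ • Matrix.of (fun i j =>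
      ∫ τ in (0:ℝ)..t, (exp (τ • Fᵀ) * exp (τ • F)) i j)) i j)
      = fun t : ℝ => t⁻¹ * ∫ τ in (0:ℝ)..t, (exp (τ • Fᵀ) * exp (τ • F)) i j := by
    funext t
    simp [Matrix.smul_apply]
  rw [this]
  exact key i j
end
end

section
/- Let F ∈ ℝ^{n×n} be similar to a skew-symmetric matrix. Then P := lim_{t→∞} t^{-1} ∫₀ᵗ exp(Fᵀτ) exp(Fτ) dτ is symmetric positive definite. -/
open Matrix NormedSpace Filter
open scoped Kronecker

noncomputable section

/-- If F is similar to a skew-symmetric matrix and the Cesàro limit P of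
exp(Fᵀτ)exp(Fτ) exists, then P is symmetric positive definite. -/
theorem stmt8 {n : ℕ} (F S T : Matrix (Fin n) (Fin n) ℝ)
    (hS : Sᵀ = -S) (hT : IsUnit T.det) (hF : F = T * S * T⁻¹)
    (P : Matrix (Fin n) (Fin n) ℝ)
    (hlim : Tendsto
      (fun t : ℝ => t⁻¹ • Matrix.of (fun i j =>
        ∫ τ in (0:ℝ)..t, (NormedSpace.exp (τ • Fᵀ) * NormedSpace.exp (τ • F)) i j))
      atTop (nhds P)) :
    P.PosDef := by
  classical
  have hTU : IsUnit T := (Matrix.isUnit_iff_isUnit_det T).mpr hT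
  -- basic exp facts
  have hexp_cont : ∀ M : Matrix (Fin n) (Fin n) ℝ, Continuous fun τ : ℝ => exp (τ • M) := by
    intro M
    letI : SeminormedRing (Matrix (Fin n) (Fin n) ℝ) := Matrix.linftyOpSemiNormedRing
    letI : NormedRing (Matrix (Fin n) (Fin n) ℝ) := Matrix.linftyOpNormedRing
    letI : NormedAlgebra ℝ (Matrix (Fin n) (Fin n) ℝ) := Matrix.linftyOpNormedAlgebra
    letI : NormedAlgebra ℚ (Matrix (Fin n) (Fin n) ℝ) := Matrix.linftyOpNormedAlgebra
    exact exp_continuous.comp (continuous_id.smul continuous_const)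
  have hTr : ∀ τ : ℝ, exp (τ • Fᵀ) = (exp (τ • F))ᵀ := by
    intro τ; rw [← transpose_smul, Matrix.exp_transpose]
  have hOrth : ∀ τ : ℝ, (exp (τ • S))ᵀ * exp (τ • S) = 1 := by
    intro τ
    rw [← Matrix.exp_transpose, transpose_smul, hS, smul_neg, ← neg_smul]
    rw [neg_smul, ← Matrix.exp_add_of_commute _ _ (Commute.neg_left (Commute.refl (τ • S))),
      neg_add_cancel, exp_zero]
  have hconj : ∀ τ : ℝ, exp (τ • F) = T * exp (τ • S) * T⁻¹ := by
    intro τ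
    rw [hF]
    have : τ • (T * S * T⁻¹) = T * (τ • S) * T⁻¹ := by
      rw [mul_smul_comm, smul_mul_assoc]
    rw [this, Matrix.exp_conj _ _ hTU]
  -- the integrand and its entries are continuous
  have hm_cont : Continuous fun τ : ℝ => exp (τ • Fᵀ) * exp (τ • F) :=
    (hexp_cont Fᵀ).matrix_mul (hexp_cont F)
  have hm_entry : ∀ i j, Continuous fun τ : ℝ => (exp (τ • Fᵀ) * exp (τ • F)) i j :=
    fun i j => (continuous_apply j).comp ((continuous_apply i).comp hm_cont)
  -- symmetry of the integrand
  have hm_symm : ∀ (τ : ℝ) (i j : Fin n),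
      (exp (τ • Fᵀ) * exp (τ • F)) j i = (exp (τ • Fᵀ) * exp (τ • F)) i j := by
    intro τ i j
    have h : (exp (τ • Fᵀ) * exp (τ • F))ᵀ = exp (τ • Fᵀ) * exp (τ • F) := by
      rw [transpose_mul, hTr, transpose_transpose, ← hTr]
    exact congrFun (congrFun h i) j
  -- symmetry of P
  have hP_symm : Pᵀ = P := by
    have h1 : Tendsto (fun t : ℝ => (t⁻¹ • Matrix.of (fun i j =>
        ∫ τ in (0:ℝ)..t, (exp (τ • Fᵀ) * exp (τ • F)) i j))ᵀ) atTop (nhds Pᵀ) :=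
      ((continuous_id.matrix_transpose).tendsto P).comp hlim
    have h2 : (fun t : ℝ => (t⁻¹ • Matrix.of (fun i j =>
        ∫ τ in (0:ℝ)..t, (exp (τ • Fᵀ) * exp (τ • F)) i j))ᵀ)
        = fun t : ℝ => t⁻¹ • Matrix.of (fun i j =>
        ∫ τ in (0:ℝ)..t, (exp (τ • Fᵀ) * exp (τ • F)) i j) := by
      funext t
      rw [transpose_smul]
      congr 1
      ext i j
      simp only [transpose_apply, of_apply]
      exact intervalIntegral.integral_congr fun τ _ => hm_symm τ i j
    exact tendsto_nhds_unique (h2 ▸ h1) hlim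
  refine Matrix.PosDef.of_dotProduct_mulVec_pos ?_ ?_
  · -- Hermitian
    ext i j
    simp only [conjTranspose_apply, star_trivial]
    exact congrFun (congrFun hP_symm i) j
  · -- positive definiteness
    intro x hx
    rw [show star x = x from funext fun i => rfl]
    -- quadratic form continuity
    have hq_cont : Continuous fun M : Matrix (Fin n) (Fin n) ℝ => x ⬝ᵥ M *ᵥ x := by
      simp only [dotProduct, Matrix.mulVec]
      exact continuous_finset_sum _ fun i _ => continuous_const.fun_mul
        (continuous_finset_sum _ fun j _ =>
          ((continuous_apply j).comp (continuous_apply i)).fun_mul continuous_const)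
    have hq_lim : Tendsto (fun t : ℝ => x ⬝ᵥ (t⁻¹ • Matrix.of (fun i j =>
        ∫ τ in (0:ℝ)..t, (exp (τ • Fᵀ) * exp (τ • F)) i j)) *ᵥ x) atTop
        (nhds (x ⬝ᵥ P *ᵥ x)) := (hq_cont.tendsto P).comp hlim
    -- set up the uniform lower bound
    set w : Fin n → ℝ := T⁻¹ *ᵥ x with hw_def
    have hTw : T *ᵥ w = x := by
      rw [hw_def, mulVec_mulVec, Matrix.mul_nonsing_inv _ hT, one_mulVec]
    have hw : w ≠ 0 := by
      intro h
      apply hx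
      rw [← hTw, h, mulVec_zero]
    set c : ℝ := w ⬝ᵥ w with hc_def
    have hc : 0 < c := by
      have hnn : 0 ≤ c := Finset.sum_nonneg fun i _ => mul_self_nonneg _
      have hne : c ≠ 0 := fun h => hw (dotProduct_self_eq_zero.mp h)
      exact lt_of_le_of_ne hnn (Ne.symm hne)
    set L : EuclideanSpace ℝ (Fin n) →L[ℝ] EuclideanSpace ℝ (Fin n) :=
      LinearMap.toContinuousLinearMap (Matrix.toEuclideanLin (T⁻¹ : Matrix (Fin n) (Fin n) ℝ))
      with hL_def
    set K : ℝ := max ‖L‖ 1 with hK_def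
    have hK : 0 < K := lt_of_lt_of_le one_pos (le_max_right _ _)
    have hnormsq : ∀ v : Fin n → ℝ, ‖(WithLp.equiv 2 (Fin n → ℝ)).symm v‖ ^ 2 = v ⬝ᵥ v := by
      intro v
      rw [EuclideanSpace.norm_eq, Real.sq_sqrt (by positivity)]
      simp [dotProduct, sq]
    have quad : ∀ (A : Matrix (Fin n) (Fin n) ℝ) (v : Fin n → ℝ),
        v ⬝ᵥ (Aᵀ * A) *ᵥ v = (A *ᵥ v) ⬝ᵥ (A *ᵥ v) := by
      intro A v
      rw [← Matrix.mulVec_mulVec, dotProduct_mulVec, Matrix.vecMul_transpose]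
    -- pointwise lower bound on the quadratic form of the integrand
    have hpt : ∀ τ : ℝ, c / K ^ 2 ≤ x ⬝ᵥ (exp (τ • Fᵀ) * exp (τ • F)) *ᵥ x := by
      intro τ
      have hy : exp (τ • F) *ᵥ x = T *ᵥ (exp (τ • S) *ᵥ w) := by
        rw [hconj τ, hw_def]
        simp only [mulVec_mulVec, Matrix.mul_assoc]
      have hzz : (exp (τ • S) *ᵥ w) ⬝ᵥ (exp (τ • S) *ᵥ w) = c := by
        rw [← quad (exp (τ • S)) w, hOrth τ, one_mulVec, hc_def]
      have hz_of_y : T⁻¹ *ᵥ (exp (τ • F) *ᵥ x) = exp (τ • S) *ᵥ w := by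
        rw [hy, mulVec_mulVec, Matrix.nonsing_inv_mul _ hT, one_mulVec]
      have happ : L ((WithLp.equiv 2 (Fin n → ℝ)).symm (exp (τ • F) *ᵥ x))
          = (WithLp.equiv 2 (Fin n → ℝ)).symm (exp (τ • S) *ᵥ w) := by
        rw [hL_def]
        show Matrix.toEuclideanLin T⁻¹ ((WithLp.equiv 2 (Fin n → ℝ)).symm (exp (τ • F) *ᵥ x)) = _
        rw [WithLp.equiv_symm_apply, Matrix.toEuclideanLin_apply_piLp_toLp, hz_of_y]
      have h1 : ‖(WithLp.equiv 2 (Fin n → ℝ)).symm (exp (τ • S) *ᵥ w)‖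
          ≤ K * ‖(WithLp.equiv 2 (Fin n → ℝ)).symm (exp (τ • F) *ᵥ x)‖ := by
        calc ‖(WithLp.equiv 2 (Fin n → ℝ)).symm (exp (τ • S) *ᵥ w)‖
            = ‖L ((WithLp.equiv 2 (Fin n → ℝ)).symm (exp (τ • F) *ᵥ x))‖ := by rw [happ]
          _ ≤ ‖L‖ * ‖(WithLp.equiv 2 (Fin n → ℝ)).symm (exp (τ • F) *ᵥ x)‖ := L.le_opNorm _
          _ ≤ K * ‖(WithLp.equiv 2 (Fin n → ℝ)).symm (exp (τ • F) *ᵥ x)‖ :=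
              mul_le_mul_of_nonneg_right (le_max_left _ _) (norm_nonneg _)
      have h2 : c ≤ K ^ 2 * ((exp (τ • F) *ᵥ x) ⬝ᵥ (exp (τ • F) *ᵥ x)) := by
        have := pow_le_pow_left₀ (norm_nonneg _) h1 2
        rw [hnormsq, mul_pow, hnormsq, hzz] at this
        exact this
      have h3 : c / K ^ 2 ≤ (exp (τ • F) *ᵥ x) ⬝ᵥ (exp (τ • F) *ᵥ x) := by
        rw [div_le_iff₀ (by positivity)]
        linarith [h2]
      calc c / K ^ 2 ≤ (exp (τ • F) *ᵥ x) ⬝ᵥ (exp (τ • F) *ᵥ x) := h3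
        _ = x ⬝ᵥ (exp (τ • Fᵀ) * exp (τ • F)) *ᵥ x := by rw [hTr τ, quad]
    -- swap integral and quadratic form
    have hg_cont : Continuous fun τ : ℝ => x ⬝ᵥ (exp (τ • Fᵀ) * exp (τ • F)) *ᵥ x :=
      hq_cont.comp hm_cont
    have hswap : ∀ t : ℝ, x ⬝ᵥ (Matrix.of (fun i j =>
        ∫ τ in (0:ℝ)..t, (exp (τ • Fᵀ) * exp (τ • F)) i j)) *ᵥ x
        = ∫ τ in (0:ℝ)..t, x ⬝ᵥ (exp (τ • Fᵀ) * exp (τ • F)) *ᵥ x := by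
      intro t
      simp only [dotProduct, Matrix.mulVec, Matrix.of_apply]
      rw [intervalIntegral.integral_finset_sum (fun i _ =>
        ((continuous_const.fun_mul (continuous_finset_sum _ fun j _ =>
          (hm_entry i j).fun_mul continuous_const)).intervalIntegrable _ _))]
      refine Finset.sum_congr rfl fun i _ => ?_
      rw [intervalIntegral.integral_const_mul]
      congr 1
      rw [intervalIntegral.integral_finset_sum (fun j _ =>
        (((hm_entry i j).fun_mul continuous_const).intervalIntegrable _ _))]
      exact Finset.sum_congr rfl fun j _ => (intervalIntegral.integral_mul_const _ _).symm
    -- lower bound of the scaled integral, eventually in t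
    have hbound : ∀ᶠ t : ℝ in atTop, c / K ^ 2
        ≤ x ⬝ᵥ (t⁻¹ • Matrix.of (fun i j =>
          ∫ τ in (0:ℝ)..t, (exp (τ • Fᵀ) * exp (τ • F)) i j)) *ᵥ x := by
      filter_upwards [eventually_gt_atTop (0 : ℝ)] with t ht
      rw [Matrix.smul_mulVec, dotProduct_smul, smul_eq_mul, hswap t]
      have hint : (t - 0) • (c / K ^ 2)
          ≤ ∫ τ in (0:ℝ)..t, x ⬝ᵥ (exp (τ • Fᵀ) * exp (τ • F)) *ᵥ x := by
        rw [← intervalIntegral.integral_const]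
        exact intervalIntegral.integral_mono_on ht.le (intervalIntegrable_const)
          (hg_cont.intervalIntegrable _ _) (fun τ _ => hpt τ)
      rw [sub_zero, smul_eq_mul] at hint
      calc c / K ^ 2 = t⁻¹ * (t * (c / K ^ 2)) := by field_simp
        _ ≤ t⁻¹ * ∫ τ in (0:ℝ)..t, x ⬝ᵥ (exp (τ • Fᵀ) * exp (τ • F)) *ᵥ x :=
            mul_le_mul_of_nonneg_left hint (inv_nonneg.mpr ht.le)
    have hfin : c / K ^ 2 ≤ x ⬝ᵥ P *ᵥ x := ge_of_tendsto hq_lim hbound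
    exact lt_of_lt_of_le (div_pos hc (pow_pos hK 2)) hfin
end
end

section
/- Let F ∈ ℝ^{n×n} be similar to a skew-symmetric matrix and suppose P := lim_{t→∞} t^{-1} ∫₀ᵗ exp(Fᵀτ) exp(Fτ) dτ exists. Then PF + FᵀP = 0. -/
open Matrix NormedSpace Filter
open scoped Kronecker

noncomputable section

section aux
variable {n : ℕ}

attribute [local instance] Matrix.linftyOpNormedAddCommGroup Matrix.linftyOpNormedRing
  Matrix.linftyOpNormedAlgebra Matrix.linftyOpNormedSpace

/-- entry extraction as a continuous linear map -/
def entryCLM (i j : Fin n) : Matrix (Fin n) (Fin n) ℝ →L[ℝ] ℝ :=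
  LinearMap.toContinuousLinearMap
    ((LinearMap.proj (R := ℝ) (φ := fun _ : Fin n => ℝ) j).comp
      (LinearMap.proj (R := ℝ) (φ := fun _ : Fin n => Fin n → ℝ) i))

lemma entryCLM_apply (i j : Fin n) (A : Matrix (Fin n) (Fin n) ℝ) :
    entryCLM i j A = A i j := rfl

lemma entry_hasDerivAt (F : Matrix (Fin n) (Fin n) ℝ) (i j : Fin n) (t : ℝ) :
    HasDerivAt (fun t : ℝ => (exp (t • Fᵀ) * exp (t • F)) i j)
      ((Fᵀ * (exp (t • Fᵀ) * exp (t • F)) + (exp (t • Fᵀ) * exp (t • F)) * F) i j) t := by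
  have h1 : HasDerivAt (fun u : ℝ => exp (u • Fᵀ)) (Fᵀ * exp (t • Fᵀ)) t :=
    hasDerivAt_exp_smul_const' _ _
  have h2 : HasDerivAt (fun u : ℝ => exp (u • F)) (exp (t • F) * F) t :=
    hasDerivAt_exp_smul_const _ _
  have h3 := h1.mul h2
  have h4 := ((entryCLM i j).hasFDerivAt).comp_hasDerivAt t h3
  have h5 : Fᵀ * exp (t • Fᵀ) * exp (t • F) + exp (t • Fᵀ) * (exp (t • F) * F)
      = Fᵀ * (exp (t • Fᵀ) * exp (t • F)) + (exp (t • Fᵀ) * exp (t • F)) * F := by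
    rw [mul_assoc, mul_assoc]
  rw [h5] at h4
  exact h4

lemma entry_continuous (F : Matrix (Fin n) (Fin n) ℝ) (i j : Fin n) :
    Continuous fun t : ℝ => (exp (t • Fᵀ) * exp (t • F)) i j := by
  have h1 : Continuous fun t : ℝ => exp (t • Fᵀ) :=
    exp_continuous.comp (continuous_id.smul continuous_const)
  have h2 : Continuous fun t : ℝ => exp (t • F) :=
    exp_continuous.comp (continuous_id.smul continuous_const)
  exact (entryCLM i j).continuous.comp (h1.mul h2)

lemma linfty_entry_le (A : Matrix (Fin n) (Fin n) ℝ) (i j : Fin n) : |A i j| ≤ ‖A‖ := by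
  rw [Matrix.linfty_opNorm_def]
  calc |A i j| = ‖A i j‖ := rfl
    _ ≤ ∑ k, ‖A i k‖ := Finset.single_le_sum (fun k _ => norm_nonneg _) (Finset.mem_univ j)
    _ ≤ _ := by
      have : (∑ k, ‖A i k‖₊ : NNReal) ≤ Finset.univ.sup fun i => ∑ k, ‖A i k‖₊ :=
        Finset.le_sup (f := fun i => ∑ k, ‖A i k‖₊) (Finset.mem_univ i)
      calc (∑ k, ‖A i k‖ : ℝ) = ((∑ k, ‖A i k‖₊ : NNReal) : ℝ) := by push_cast; rfl
        _ ≤ _ := NNReal.coe_le_coe.mpr this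

lemma linfty_norm_le (A : Matrix (Fin n) (Fin n) ℝ) (h : ∀ i j, |A i j| ≤ 1) :
    ‖A‖ ≤ n := by
  rw [Matrix.linfty_opNorm_def]
  have : (Finset.univ.sup fun i => ∑ k, ‖A i k‖₊ : NNReal) ≤ n := by
    apply Finset.sup_le
    intro i _
    calc (∑ k, ‖A i k‖₊ : NNReal) ≤ ∑ _k : Fin n, 1 := by
          apply Finset.sum_le_sum
          intro k _
          have := h i k
          rw [← NNReal.coe_le_coe]
          simpa using this
      _ = n := by simp
  calc ((Finset.univ.sup fun i => ∑ k, ‖A i k‖₊ : NNReal) : ℝ) ≤ ((n : NNReal) : ℝ) :=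
        NNReal.coe_le_coe.mpr this
    _ = n := by simp

lemma entry_bound (F S T : Matrix (Fin n) (Fin n) ℝ)
    (hS : Sᵀ = -S) (hT : IsUnit T.det) (hF : F = T * S * T⁻¹) :
    ∃ C : ℝ, ∀ (t : ℝ) (i j : Fin n), |(exp (t • Fᵀ) * exp (t • F)) i j| ≤ C := by
  have hTu : IsUnit T := (Matrix.isUnit_iff_isUnit_det T).mpr hT
  refine ⟨(‖T⁻¹ᵀ‖ * n * ‖Tᵀ‖) * (‖T‖ * n * ‖T⁻¹‖), fun t i j => ?_⟩
  have hQorth : (exp (t • S))ᵀ * exp (t • S) = 1 := by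
    have ht : (t • S)ᵀ = -(t • S) := by rw [Matrix.transpose_smul, hS, smul_neg]
    rw [← Matrix.exp_transpose, ht,
      ← Matrix.exp_add_of_commute _ _ ((Commute.refl (t • S)).neg_left), neg_add_cancel,
      exp_zero]
  have hQentry : ∀ a b, |exp (t • S) a b| ≤ 1 := by
    intro a b
    have h1 : ((exp (t • S))ᵀ * exp (t • S)) b b = 1 := by rw [hQorth]; simp [Matrix.one_apply]
    rw [Matrix.mul_apply] at h1
    have h2 : exp (t • S) a b ^ 2 ≤ 1 := by
      rw [← h1]
      have h3 : exp (t • S) a b ^ 2 = (exp (t • S))ᵀ b a * exp (t • S) a b := by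
        rw [Matrix.transpose_apply]; ring
      rw [h3]
      exact Finset.single_le_sum
        (f := fun k => (exp (t • S))ᵀ b k * exp (t • S) k b)
        (fun k _ => by simpa [Matrix.transpose_apply] using mul_self_nonneg (exp (t • S) k b))
        (Finset.mem_univ a)
    exact (sq_le_one_iff_abs_le_one _).mp h2
  have hE : exp (t • F) = T * exp (t • S) * T⁻¹ := by
    rw [hF, show t • (T * S * T⁻¹) = T * (t • S) * T⁻¹ by
      simp [smul_mul_assoc, mul_smul_comm]]
    exact Matrix.exp_conj T (t • S) hTu
  have hET : exp (t • Fᵀ) = T⁻¹ᵀ * (exp (t • S))ᵀ * Tᵀ := by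
    rw [show t • Fᵀ = (t • F)ᵀ by rw [Matrix.transpose_smul], Matrix.exp_transpose, hE]
    simp [Matrix.transpose_mul, mul_assoc]
  have hQn : ‖exp (t • S)‖ ≤ n := linfty_norm_le _ hQentry
  have hQtn : ‖(exp (t • S))ᵀ‖ ≤ n := linfty_norm_le _ (fun i j => hQentry j i)
  calc |(exp (t • Fᵀ) * exp (t • F)) i j| ≤ ‖exp (t • Fᵀ) * exp (t • F)‖ :=
        linfty_entry_le _ _ _
    _ ≤ ‖exp (t • Fᵀ)‖ * ‖exp (t • F)‖ := Matrix.linfty_opNorm_mul _ _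
    _ ≤ (‖T⁻¹ᵀ‖ * n * ‖Tᵀ‖) * (‖T‖ * n * ‖T⁻¹‖) := by
        apply mul_le_mul _ _ (norm_nonneg _) (by positivity)
        · rw [hET]
          calc ‖T⁻¹ᵀ * (exp (t • S))ᵀ * Tᵀ‖
              ≤ ‖T⁻¹ᵀ * (exp (t • S))ᵀ‖ * ‖Tᵀ‖ := Matrix.linfty_opNorm_mul _ _
            _ ≤ (‖T⁻¹ᵀ‖ * ‖(exp (t • S))ᵀ‖) * ‖Tᵀ‖ :=
                mul_le_mul_of_nonneg_right (Matrix.linfty_opNorm_mul _ _) (norm_nonneg _)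
            _ ≤ _ :=
                mul_le_mul_of_nonneg_right
                  (mul_le_mul_of_nonneg_left hQtn (norm_nonneg _)) (norm_nonneg _)
        · rw [hE]
          calc ‖T * exp (t • S) * T⁻¹‖
              ≤ ‖T * exp (t • S)‖ * ‖T⁻¹‖ := Matrix.linfty_opNorm_mul _ _
            _ ≤ (‖T‖ * ‖exp (t • S)‖) * ‖T⁻¹‖ :=
                mul_le_mul_of_nonneg_right (Matrix.linfty_opNorm_mul _ _) (norm_nonneg _)
            _ ≤ _ :=
                mul_le_mul_of_nonneg_right
                  (mul_le_mul_of_nonneg_left hQn (norm_nonneg _)) (norm_nonneg _)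

end aux

open MeasureTheory in
set_option maxHeartbeats 1000000 in
/-- If F is similar to a skew-symmetric matrix and the Cesàro limit P of
exp(Fᵀτ)exp(Fτ) exists, then PF + FᵀP = 0. -/
theorem stmt9 {n : ℕ} (F S T : Matrix (Fin n) (Fin n) ℝ)
    (hS : Sᵀ = -S) (hT : IsUnit T.det) (hF : F = T * S * T⁻¹)
    (P : Matrix (Fin n) (Fin n) ℝ)
    (hlim : Tendsto
      (fun t : ℝ => t⁻¹ • Matrix.of (fun i j =>
        ∫ τ in (0:ℝ)..t, (NormedSpace.exp (τ • Fᵀ) * NormedSpace.exp (τ • F)) i j))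
      atTop (nhds P)) :
    P * F + Fᵀ * P = 0 := by
  set G : ℝ → Matrix (Fin n) (Fin n) ℝ := fun τ => exp (τ • Fᵀ) * exp (τ • F) with hG
  have hGint : ∀ (t : ℝ) (i j : Fin n),
      IntervalIntegrable (fun τ => G τ i j) volume 0 t :=
    fun t i j => (entry_continuous F i j).intervalIntegrable 0 t
  have hint1 : ∀ (t : ℝ) (i j : Fin n),
      IntervalIntegrable (fun τ => (Fᵀ * G τ) i j) volume 0 t := by
    intro t i j
    simp only [Matrix.mul_apply]
    have := IntervalIntegrable.sum (f := fun k τ => Fᵀ i k * G τ k j) Finset.univ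
      (fun k _ => (hGint t k j).const_mul _)
    simpa [Finset.sum_fn] using this
  have hint2 : ∀ (t : ℝ) (i j : Fin n),
      IntervalIntegrable (fun τ => (G τ * F) i j) volume 0 t := by
    intro t i j
    simp only [Matrix.mul_apply]
    have := IntervalIntegrable.sum (f := fun k τ => G τ i k * F k j) Finset.univ
      (fun k _ => (hGint t i k).mul_const _)
    simpa [Finset.sum_fn] using this
  have hftc : ∀ (t : ℝ) (i j : Fin n),
      (∫ τ in (0:ℝ)..t, ((Fᵀ * G τ) i j + (G τ * F) i j))
        = G t i j - (1 : Matrix (Fin n) (Fin n) ℝ) i j := by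
    intro t i j
    have hderiv : ∀ τ ∈ Set.uIcc (0:ℝ) t,
        HasDerivAt (fun u => G u i j) ((Fᵀ * G τ) i j + (G τ * F) i j) τ := by
      intro τ _
      simpa [Matrix.add_apply] using entry_hasDerivAt F i j τ
    have := intervalIntegral.integral_eq_sub_of_hasDerivAt hderiv
      ((hint1 t i j).add (hint2 t i j))
    rw [this]
    congr 1
    simp [hG, Matrix.one_apply]
  have key : ∀ t : ℝ,
      Fᵀ * (t⁻¹ • Matrix.of fun i j => ∫ τ in (0:ℝ)..t, G τ i j)
        + (t⁻¹ • Matrix.of fun i j => ∫ τ in (0:ℝ)..t, G τ i j) * F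
      = t⁻¹ • (G t - 1) := by
    intro t
    ext i j
    simp only [Matrix.add_apply, Matrix.mul_apply, Matrix.smul_apply, Matrix.of_apply,
      Matrix.sub_apply, smul_eq_mul]
    have e1 : ∑ k, Fᵀ i k * (t⁻¹ * ∫ τ in (0:ℝ)..t, G τ k j)
        = t⁻¹ * ∫ τ in (0:ℝ)..t, (Fᵀ * G τ) i j := by
      have : ∑ k, Fᵀ i k * (t⁻¹ * ∫ τ in (0:ℝ)..t, G τ k j)
          = t⁻¹ * ∑ k, ∫ τ in (0:ℝ)..t, Fᵀ i k * G τ k j := by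
        rw [Finset.mul_sum]
        exact Finset.sum_congr rfl fun k _ => by
          rw [intervalIntegral.integral_const_mul]; ring
      rw [this, ← intervalIntegral.integral_finset_sum
        (fun k _ => (hGint t k j).const_mul _)]
      simp only [Matrix.mul_apply]
    have e2 : ∑ k, (t⁻¹ * ∫ τ in (0:ℝ)..t, G τ i k) * F k j
        = t⁻¹ * ∫ τ in (0:ℝ)..t, (G τ * F) i j := by
      have : ∑ k, (t⁻¹ * ∫ τ in (0:ℝ)..t, G τ i k) * F k j
          = t⁻¹ * ∑ k, ∫ τ in (0:ℝ)..t, G τ i k * F k j := by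
        rw [Finset.mul_sum]
        exact Finset.sum_congr rfl fun k _ => by
          rw [intervalIntegral.integral_mul_const]; ring
      rw [this, ← intervalIntegral.integral_finset_sum
        (fun k _ => (hGint t i k).mul_const _)]
      simp only [Matrix.mul_apply]
    rw [e1, e2, ← mul_add, ← intervalIntegral.integral_add (hint1 t i j) (hint2 t i j),
      hftc t i j]
  obtain ⟨C, hC⟩ := entry_bound F S T hS hT hF
  have h0 : Tendsto (fun t : ℝ => t⁻¹ • (G t - 1)) atTop
      (nhds (0 : Matrix (Fin n) (Fin n) ℝ)) := by
    refine tendsto_pi_nhds.mpr ?_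
    intro i
    rw [tendsto_pi_nhds]
    intro j
    simp only [Matrix.smul_apply, Matrix.sub_apply, smul_eq_mul, Pi.zero_apply,
      Matrix.zero_apply]
    have hbd : ∀ t : ℝ, ‖t⁻¹ * (G t i j - (1 : Matrix (Fin n) (Fin n) ℝ) i j)‖
        ≤ |t⁻¹| * (|C| + 1) := by
      intro t
      rw [Real.norm_eq_abs, abs_mul]
      apply mul_le_mul_of_nonneg_left _ (abs_nonneg _)
      calc |G t i j - (1 : Matrix (Fin n) (Fin n) ℝ) i j|
          ≤ |G t i j| + |(1 : Matrix (Fin n) (Fin n) ℝ) i j| := abs_sub _ _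
        _ ≤ |C| + 1 := by
            apply add_le_add ((hC t i j).trans (le_abs_self C))
            by_cases h : i = j <;> simp [Matrix.one_apply, h]
    have hg : Tendsto (fun t : ℝ => |t⁻¹| * (|C| + 1)) atTop (nhds 0) := by
      have := (tendsto_inv_atTop_zero (𝕜 := ℝ)).abs
      simpa using this.mul_const (|C| + 1)
    exact squeeze_zero_norm hbd hg
  have hc : Continuous fun M : Matrix (Fin n) (Fin n) ℝ => Fᵀ * M + M * F :=
    (continuous_const.matrix_mul continuous_id).add (continuous_id.matrix_mul continuous_const)
  have hlim2 : Tendsto (fun t : ℝ =>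
      Fᵀ * (t⁻¹ • Matrix.of fun i j => ∫ τ in (0:ℝ)..t, G τ i j)
        + (t⁻¹ • Matrix.of fun i j => ∫ τ in (0:ℝ)..t, G τ i j) * F)
      atTop (nhds (Fᵀ * P + P * F)) :=
    ((hc.tendsto P).comp hlim)
  have hlim3 : Tendsto (fun t : ℝ =>
      Fᵀ * (t⁻¹ • Matrix.of fun i j => ∫ τ in (0:ℝ)..t, G τ i j)
        + (t⁻¹ • Matrix.of fun i j => ∫ τ in (0:ℝ)..t, G τ i j) * F)
      atTop (nhds (0 : Matrix (Fin n) (Fin n) ℝ)) := by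
    rw [funext key]
    exact h0
  have hfin := tendsto_nhds_unique hlim2 hlim3
  rw [add_comm]
  exact hfin
end
end

section
/- If F ∈ ℝ^{n×n} is similar to a skew-symmetric matrix, then there exist constants 0 < a ≤ b such that a·I ≤ exp(Fᵀt)·exp(Ft) ≤ b·I (in the positive semidefinite order) for all real t. -/
open Matrix NormedSpace Filter
open scoped Kronecker

noncomputable section

namespace Stmt10Aux

variable {n : ℕ}

lemma dot_self_nonneg (v : Fin n → ℝ) : 0 ≤ v ⬝ᵥ v :=
  Finset.sum_nonneg fun i _ => mul_self_nonneg _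

/-- Frobenius-type Cauchy–Schwarz bound for matrix-vector products. -/
lemma cauchy (M : Matrix (Fin n) (Fin n) ℝ) (v : Fin n → ℝ) :
    (M *ᵥ v) ⬝ᵥ (M *ᵥ v) ≤ (∑ i, ∑ j, (M i j) ^ 2) * (v ⬝ᵥ v) := by
  simp only [dotProduct, mulVec, dotProduct]
  calc ∑ i, (∑ j, M i j * v j) * (∑ j, M i j * v j)
      = ∑ i, (∑ j, M i j * v j) ^ 2 := by simp [sq]
    _ ≤ ∑ i : Fin n, (∑ j, (M i j) ^ 2) * (∑ j, (v j) ^ 2) :=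
        Finset.sum_le_sum fun i _ => Finset.sum_mul_sq_le_sq_mul_sq _ _ _
    _ = (∑ i, ∑ j, (M i j) ^ 2) * (∑ j, v j * v j) := by
        rw [← Finset.sum_mul]; simp [sq]

lemma quad (A : Matrix (Fin n) (Fin n) ℝ) (x : Fin n → ℝ) :
    x ⬝ᵥ ((Aᵀ * A) *ᵥ x) = (A *ᵥ x) ⬝ᵥ (A *ᵥ x) := by
  rw [← mulVec_mulVec, dotProduct_mulVec, vecMul_transpose]

/-- Bound for a conjugated isometry. -/
lemma bound3 (T Tinv Q : Matrix (Fin n) (Fin n) ℝ)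
    (hQ : ∀ v, (Q *ᵥ v) ⬝ᵥ (Q *ᵥ v) = v ⬝ᵥ v) (v : Fin n → ℝ) :
    ((T * Q * Tinv) *ᵥ v) ⬝ᵥ ((T * Q * Tinv) *ᵥ v) ≤
      (∑ i, ∑ j, (T i j) ^ 2) * ((∑ i, ∑ j, (Tinv i j) ^ 2) * (v ⬝ᵥ v)) := by
  have hCT : (0:ℝ) ≤ ∑ i, ∑ j, (T i j) ^ 2 := by positivity
  have h1 : (T * Q * Tinv) *ᵥ v = T *ᵥ (Q *ᵥ (Tinv *ᵥ v)) := by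
    rw [mulVec_mulVec, mulVec_mulVec]
  rw [h1]
  calc (T *ᵥ (Q *ᵥ (Tinv *ᵥ v))) ⬝ᵥ (T *ᵥ (Q *ᵥ (Tinv *ᵥ v)))
      ≤ (∑ i, ∑ j, (T i j) ^ 2) * ((Q *ᵥ (Tinv *ᵥ v)) ⬝ᵥ (Q *ᵥ (Tinv *ᵥ v))) :=
        cauchy _ _
    _ = (∑ i, ∑ j, (T i j) ^ 2) * ((Tinv *ᵥ v) ⬝ᵥ (Tinv *ᵥ v)) := by rw [hQ]
    _ ≤ (∑ i, ∑ j, (T i j) ^ 2) * ((∑ i, ∑ j, (Tinv i j) ^ 2) * (v ⬝ᵥ v)) :=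
        mul_le_mul_of_nonneg_left (cauchy _ _) hCT

end Stmt10Aux

open Stmt10Aux in
/-- If F is similar to a skew-symmetric matrix, then a·I ≤ exp(Fᵀt)exp(Ft) ≤ b·I
for some 0 < a ≤ b and all real t. -/
theorem stmt10 {n : ℕ} (F S T : Matrix (Fin n) (Fin n) ℝ)
    (hS : Sᵀ = -S) (hT : IsUnit T.det) (hF : F = T * S * T⁻¹) :
    ∃ a b : ℝ, 0 < a ∧ a ≤ b ∧ ∀ t : ℝ,
      (NormedSpace.exp (t • Fᵀ) * NormedSpace.exp (t • F) - a • 1).PosSemidef ∧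
      (b • 1 - NormedSpace.exp (t • Fᵀ) * NormedSpace.exp (t • F)).PosSemidef := by
  set CT : ℝ := ∑ i, ∑ j, (T i j) ^ 2 with hCT
  set CI : ℝ := ∑ i, ∑ j, (T⁻¹ i j) ^ 2 with hCI
  set K : ℝ := max (CT * CI) 1 with hK
  have hK1 : (1:ℝ) ≤ K := le_max_right _ _
  have hKpos : (0:ℝ) < K := lt_of_lt_of_le one_pos hK1
  have hTu : IsUnit T := (Matrix.isUnit_iff_isUnit_det T).mpr hT
  have hTi : T⁻¹ * T = 1 := Matrix.nonsing_inv_mul T hT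
  have hTT : T * T⁻¹ = 1 := Matrix.mul_nonsing_inv T hT
  refine ⟨K⁻¹, K, inv_pos.mpr hKpos, le_trans (inv_le_one_of_one_le₀ hK1) hK1, fun t => ?_⟩
  set Q : Matrix (Fin n) (Fin n) ℝ := exp (t • S) with hQdef
  have hQT : Qᵀ = exp (-(t • S)) := by
    rw [hQdef, ← Matrix.exp_transpose, transpose_smul, hS, smul_neg]
  have hQ : Qᵀ * Q = 1 := by
    rw [hQT, hQdef, ← Matrix.exp_add_of_commute _ _ ((Commute.refl (t • S)).neg_left),
      neg_add_cancel, exp_zero]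
  have hQ' : Q * Qᵀ = 1 := mul_eq_one_comm.mp hQ
  have hQiso : ∀ v, (Q *ᵥ v) ⬝ᵥ (Q *ᵥ v) = v ⬝ᵥ v := fun v => by
    rw [← quad, hQ, one_mulVec]
  have hQTiso : ∀ v, (Qᵀ *ᵥ v) ⬝ᵥ (Qᵀ *ᵥ v) = v ⬝ᵥ v := fun v => by
    rw [← quad, transpose_transpose, hQ', one_mulVec]
  have htF : t • F = T * (t • S) * T⁻¹ := by
    rw [hF]; simp [Matrix.mul_smul, Matrix.smul_mul]
  have hA : exp (t • F) = T * Q * T⁻¹ := by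
    rw [htF, Matrix.exp_conj _ _ hTu]
  have hAT : exp (t • Fᵀ) = (exp (t • F))ᵀ := by
    rw [← transpose_smul, Matrix.exp_transpose]
  set A : Matrix (Fin n) (Fin n) ℝ := exp (t • F) with hAdef
  -- B is a left inverse of A
  have hBA : (T * Qᵀ * T⁻¹) * A = 1 := by
    rw [hA]
    simp only [Matrix.mul_assoc]
    rw [← Matrix.mul_assoc T⁻¹ T, hTi, Matrix.one_mul, ← Matrix.mul_assoc Qᵀ Q, hQ,
      Matrix.one_mul, hTT]
  -- key quadratic form bounds
  have hupper : ∀ x : Fin n → ℝ, (A *ᵥ x) ⬝ᵥ (A *ᵥ x) ≤ K * (x ⬝ᵥ x) := by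
    intro x
    have h1 := bound3 T T⁻¹ Q hQiso x
    rw [← hA] at h1
    have h2 : CT * (CI * (x ⬝ᵥ x)) ≤ K * (x ⬝ᵥ x) := by
      rw [← mul_assoc]
      exact mul_le_mul_of_nonneg_right (le_max_left _ _) (dot_self_nonneg x)
    exact le_trans h1 h2
  have hlower : ∀ x : Fin n → ℝ, x ⬝ᵥ x ≤ K * ((A *ᵥ x) ⬝ᵥ (A *ᵥ x)) := by
    intro x
    have hx : x = (T * Qᵀ * T⁻¹) *ᵥ (A *ᵥ x) := by
      rw [mulVec_mulVec, hBA, one_mulVec]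
    have h1 := bound3 T T⁻¹ Qᵀ hQTiso (A *ᵥ x)
    rw [← hx] at h1
    have h2 : CT * (CI * ((A *ᵥ x) ⬝ᵥ (A *ᵥ x))) ≤ K * ((A *ᵥ x) ⬝ᵥ (A *ᵥ x)) := by
      rw [← mul_assoc]
      exact mul_le_mul_of_nonneg_right (le_max_left _ _) (dot_self_nonneg _)
    exact le_trans h1 h2
  have herm : (Aᵀ * A).IsHermitian := by
    rw [← conjTranspose_eq_transpose_of_trivial]
    exact Matrix.isHermitian_conjTranspose_mul_self A
  have hermsmul : ∀ c : ℝ, ((c : ℝ) • (1 : Matrix (Fin n) (Fin n) ℝ)).IsHermitian := by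
    intro c
    rw [Matrix.IsHermitian, conjTranspose_smul, conjTranspose_one, star_trivial]
  rw [hAT]
  constructor
  · refine PosSemidef.of_dotProduct_mulVec_nonneg (herm.sub (hermsmul K⁻¹)) fun x => ?_
    have hx : star x = x := by simp
    rw [hx, sub_mulVec, dotProduct_sub, quad, smul_mulVec, one_mulVec,
      dotProduct_smul, smul_eq_mul, sub_nonneg]
    rw [inv_mul_le_iff₀ hKpos]
    exact hlower x
  · refine PosSemidef.of_dotProduct_mulVec_nonneg ((hermsmul K).sub herm) fun x => ?_
    have hx : star x = x := by simp
    rw [hx, sub_mulVec, dotProduct_sub, quad, smul_mulVec, one_mulVec,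
      dotProduct_smul, smul_eq_mul, sub_nonneg]
    exact hupper x
end
end

section
/- Let S be skew-symmetric, H ∈ ℝ^{m×n}, Γ ∈ ℝ^{p×p} with Γ𝟙 = 0 and rᵀΓ = 0, rᵀ𝟙 = 1, and let P̂ := (I − 𝟙rᵀ)ᵀP(I − 𝟙rᵀ) with ΓᵀP̂ + P̂Γ = −Q̂, Q̂ := (I − 𝟙rᵀ)ᵀQ(I − 𝟙rᵀ), Q positive definite. Then along solutions of ẋ = (I_p ⊗ S + Γ ⊗ HᵀH)x, the function V(x) := xᵀ(P̂ ⊗ I_n)x satisfies V̇(x) = −xᵀ(Q̂ ⊗ HᵀH)x ≤ 0. -/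
open Matrix NormedSpace Filter
open scoped Kronecker

noncomputable section

lemma kronecker_neg' {ι κ ι' κ' : Type*} (A : Matrix ι κ ℝ) (B : Matrix ι' κ' ℝ) :
    A ⊗ₖ (-B) = -(A ⊗ₖ B) := by
  ext i j; simp

lemma neg_kronecker' {ι κ ι' κ' : Type*} (A : Matrix ι κ ℝ) (B : Matrix ι' κ' ℝ) :
    (-A) ⊗ₖ B = -(A ⊗ₖ B) := by
  ext i j; simp

lemma dot_transpose_mulVec {ι κ : Type*} [Fintype ι] [Fintype κ]
    (A : Matrix ι κ ℝ) (v : κ → ℝ) (w : ι → ℝ) :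
    v ⬝ᵥ (Aᵀ *ᵥ w) = (A *ᵥ v) ⬝ᵥ w := by
  rw [dotProduct_mulVec, vecMul_transpose]

lemma hasDerivAt_quad {ι : Type*} [Fintype ι] (B : Matrix ι ι ℝ)
    (x : ℝ → ι → ℝ) (x' : ι → ℝ) (t : ℝ) (hx : HasDerivAt x x' t) :
    HasDerivAt (fun s => x s ⬝ᵥ (B *ᵥ x s))
      (x' ⬝ᵥ (B *ᵥ x t) + x t ⬝ᵥ (B *ᵥ x')) t := by
  have hcoord : ∀ i, HasDerivAt (fun s => x s i) (x' i) t := hasDerivAt_pi.1 hx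
  have h : ∀ i ∈ Finset.univ, ∀ j ∈ Finset.univ, HasDerivAt (fun s => x s i * (B i j * x s j))
      (x' i * (B i j * x t j) + x t i * (B i j * x' j)) t := fun i _ j _ =>
    (hcoord i).mul ((hcoord j).const_mul (B i j))
  have H2 := HasDerivAt.fun_sum (fun i hi => HasDerivAt.fun_sum (h i hi))
  convert H2 using 1
  · rfl
  · rfl
  · funext s; simp [dotProduct, mulVec, Finset.mul_sum]
  · simp [dotProduct, mulVec, Finset.mul_sum, Finset.sum_add_distrib]

/-- Along solutions of ẋ = (I_p ⊗ S + Γ ⊗ HᵀH)x, the Lyapunov function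
V(x) = xᵀ(P̂ ⊗ I_n)x satisfies V̇(x) = −xᵀ(Q̂ ⊗ HᵀH)x ≤ 0. -/
theorem stmt12 {p n m : ℕ} (S : Matrix (Fin n) (Fin n) ℝ) (hS : Sᵀ = -S)
    (H : Matrix (Fin m) (Fin n) ℝ) (Γ : Matrix (Fin p) (Fin p) ℝ) (r : Fin p → ℝ)
    (hΓ1 : Γ *ᵥ ones p = 0) (hrΓ : r ᵥ* Γ = 0) (hr1 : ∑ i, r i = 1)
    (P Q : Matrix (Fin p) (Fin p) ℝ) (hQ : Q.PosDef)
    (hlyap :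
      Γᵀ * ((1 - vecMulVec (ones p) r)ᵀ * P * (1 - vecMulVec (ones p) r)) +
          ((1 - vecMulVec (ones p) r)ᵀ * P * (1 - vecMulVec (ones p) r)) * Γ =
        -((1 - vecMulVec (ones p) r)ᵀ * Q * (1 - vecMulVec (ones p) r)))
    (x : ℝ → Fin p × Fin n → ℝ)
    (hx : ∀ t, HasDerivAt x
      (((1 : Matrix (Fin p) (Fin p) ℝ) ⊗ₖ S + Γ ⊗ₖ (Hᵀ * H)) *ᵥ x t) t)
    (t : ℝ) :
    HasDerivAt
      (fun s => x s ⬝ᵥ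
        ((((1 - vecMulVec (ones p) r)ᵀ * P * (1 - vecMulVec (ones p) r)) ⊗ₖ
          (1 : Matrix (Fin n) (Fin n) ℝ)) *ᵥ x s))
      (-(x t ⬝ᵥ
        ((((1 - vecMulVec (ones p) r)ᵀ * Q * (1 - vecMulVec (ones p) r)) ⊗ₖ (Hᵀ * H)) *ᵥ x t)))
      t ∧
    -(x t ⬝ᵥ
      ((((1 - vecMulVec (ones p) r)ᵀ * Q * (1 - vecMulVec (ones p) r)) ⊗ₖ (Hᵀ * H)) *ᵥ x t)) ≤ 0 := by
  set M : Matrix (Fin p) (Fin p) ℝ := 1 - vecMulVec (ones p) r with hM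
  set Phat : Matrix (Fin p) (Fin p) ℝ := Mᵀ * P * M with hPhat
  set Qhat : Matrix (Fin p) (Fin p) ℝ := Mᵀ * Q * M with hQhat
  set A : Matrix (Fin p × Fin n) (Fin p × Fin n) ℝ :=
    (1 : Matrix (Fin p) (Fin p) ℝ) ⊗ₖ S + Γ ⊗ₖ (Hᵀ * H) with hA
  set B : Matrix (Fin p × Fin n) (Fin p × Fin n) ℝ :=
    Phat ⊗ₖ (1 : Matrix (Fin n) (Fin n) ℝ) with hB
  -- key matrix identity
  have hAT : Aᵀ = (1 : Matrix (Fin p) (Fin p) ℝ) ⊗ₖ (-S) + Γᵀ ⊗ₖ (Hᵀ * H) := by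
    rw [hA, transpose_add, ← hS]
    congr 1
    · rw [← kroneckerMap_transpose, transpose_one]
    · rw [← kroneckerMap_transpose, transpose_mul, transpose_transpose]
  have key : Aᵀ * B + B * A = -(Qhat ⊗ₖ (Hᵀ * H)) := by
    rw [hAT, hA, hB, add_mul, mul_add]
    simp only [← mul_kronecker_mul, Matrix.one_mul, Matrix.mul_one]
    rw [← neg_kronecker', ← hlyap, add_kronecker, kronecker_neg']
    abel
  -- derivative part
  have hd := hasDerivAt_quad B x (A *ᵥ x t) t (hx t)
  have hval : (A *ᵥ x t) ⬝ᵥ (B *ᵥ x t) + x t ⬝ᵥ (B *ᵥ (A *ᵥ x t))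
      = -(x t ⬝ᵥ ((Qhat ⊗ₖ (Hᵀ * H)) *ᵥ x t)) := by
    have h1 : (A *ᵥ x t) ⬝ᵥ (B *ᵥ x t) = x t ⬝ᵥ ((Aᵀ * B) *ᵥ x t) := by
      rw [← mulVec_mulVec, dot_transpose_mulVec]
    have h2 : x t ⬝ᵥ (B *ᵥ (A *ᵥ x t)) = x t ⬝ᵥ ((B * A) *ᵥ x t) := by
      rw [mulVec_mulVec]
    rw [h1, h2, ← dotProduct_add, ← add_mulVec, key, neg_mulVec, dotProduct_neg]
  constructor
  · rw [← hval]; exact hd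
  · -- positivity
    have hQhatPSD : Qhat.PosSemidef := by
      have := hQ.posSemidef.conjTranspose_mul_mul_same M
      simpa [hQhat, conjTranspose_eq_transpose_of_trivial] using this
    obtain ⟨C, hC⟩ : ∃ C : Matrix (Fin p) (Fin p) ℝ, Qhat = Cᴴ * C := by
      open scoped MatrixOrder in exact CStarAlgebra.nonneg_iff_eq_star_mul_self.mp hQhatPSD.nonneg
    have hCr : Qhat = Cᵀ * C := by simpa [conjTranspose_eq_transpose_of_trivial] using hC
    have hfact : Qhat ⊗ₖ (Hᵀ * H) = (C ⊗ₖ H)ᵀ * (C ⊗ₖ H) := by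
      rw [hCr, mul_kronecker_mul, kroneckerMap_transpose]
    rw [hfact, ← mulVec_mulVec, dot_transpose_mulVec, neg_nonpos]
    exact Finset.sum_nonneg fun i _ => mul_self_nonneg _
end
end

section
/- Let x solve ẋ = (I_p ⊗ S + Γ ⊗ HᵀH)x with rᵀΓ = 0. Then (𝟙rᵀ ⊗ I_n)x(t) = (𝟙rᵀ ⊗ exp(St))x(0) for all t ≥ 0. -/
open Matrix NormedSpace Filter
open scoped Kronecker

noncomputable section

attribute [local instance] Matrix.linftyOpNormedRing Matrix.linftyOpNormedAlgebra

section Aux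

variable {ι : Type*} [Fintype ι] [DecidableEq ι]

/-- Entry evaluation as a continuous linear map trick, and flow lemma. -/
theorem flow_eq (B : Matrix ι ι ℝ) (u : ℝ → ι → ℝ)
    (hu : ∀ s, HasDerivAt u (B *ᵥ u s) s) (t : ℝ) :
    u t = exp (t • B) *ᵥ u 0 := by
  set E : ℝ → Matrix ι ι ℝ := fun s => exp (s • (-B)) with hEdef
  have hEd : ∀ s, HasDerivAt E ((-B) * E s) s := fun s =>
    hasDerivAt_exp_smul_const' (-B) s
  have hcomm : ∀ s, E s * B = B * E s := fun s =>
    ((((Commute.refl B).neg_right).smul_right s).exp_right).eq.symm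
  have hv : ∀ s, HasDerivAt (fun τ => E τ *ᵥ u τ) 0 s := by
    intro s
    rw [hasDerivAt_pi]
    intro i
    have h1 : ∀ j, HasDerivAt (fun τ => E τ i j) (((-B) * E s) i j) s := by
      intro j
      exact ((LinearMap.toContinuousLinearMap
          ({ toFun := fun A => A i j, map_add' := fun _ _ => rfl,
             map_smul' := fun _ _ => rfl } :
            Matrix ι ι ℝ →ₗ[ℝ] ℝ)).hasFDerivAt.comp_hasDerivAt s (hEd s))
    have h1u : ∀ j, HasDerivAt (fun τ => u τ j) ((B *ᵥ u s) j) s := fun j =>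
      hasDerivAt_pi.mp (hu s) j
    have h2 : HasDerivAt (fun τ => ∑ j, E τ i j * u τ j)
        (∑ j, (((-B) * E s) i j * u s j + E s i j * (B *ᵥ u s) j)) s := by
      apply HasDerivAt.fun_sum
      intro j _
      exact (h1 j).mul (h1u j)
    have heq : (fun τ => (E τ *ᵥ u τ) i) = fun τ => ∑ j, E τ i j * u τ j := by
      funext τ; simp [mulVec, dotProduct]
    have hzero : (∑ j, (((-B) * E s) i j * u s j + E s i j * (B *ᵥ u s) j)) = 0 := by
      have e1 : ∑ j, ((-B) * E s) i j * u s j = (((-B) * E s) *ᵥ u s) i := by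
        simp [mulVec, dotProduct]
      have e2 : ∑ j, E s i j * (B *ᵥ u s) j = (E s *ᵥ (B *ᵥ u s)) i := by
        simp [mulVec, dotProduct]
      rw [Finset.sum_add_distrib, e1, e2, mulVec_mulVec, hcomm, neg_mul, neg_mulVec]
      simp
    rw [heq]
    simp only [Pi.zero_apply]
    exact hzero ▸ h2
  have hconst : E t *ᵥ u t = E 0 *ᵥ u 0 :=
    is_const_of_deriv_eq_zero (fun τ => (hv τ).differentiableAt)
      (fun τ => (hv τ).deriv) t 0
  have hE0 : E 0 = 1 := by simp [hEdef, exp_zero]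
  have hinv : exp (t • B) * E t = 1 := by
    rw [hEdef]; beta_reduce
    refine (exp_add_of_commute ((((Commute.refl B).neg_right).smul_left t).smul_right t)).symm.trans ?_
    simp
  calc u t = (exp (t • B) * E t) *ᵥ u t := by rw [hinv, one_mulVec]
    _ = exp (t • B) *ᵥ (E t *ᵥ u t) := by rw [← mulVec_mulVec]
    _ = exp (t • B) *ᵥ u 0 := by rw [hconst, hE0, one_mulVec]

variable {p n : ℕ}

/-- `A ↦ 1 ⊗ₖ A` as a ring homomorphism. -/
def oneKron (p n : ℕ) : Matrix (Fin n) (Fin n) ℝ →+* Matrix (Fin p × Fin n) (Fin p × Fin n) ℝ where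
  toFun A := (1 : Matrix (Fin p) (Fin p) ℝ) ⊗ₖ A
  map_one' := Matrix.one_kronecker_one
  map_mul' A B := by rw [← Matrix.mul_kronecker_mul, one_mul]
  map_zero' := Matrix.kronecker_zero _
  map_add' A B := Matrix.kronecker_add _ A B

theorem oneKron_continuous (p n : ℕ) : Continuous (oneKron p n) :=
  LinearMap.continuous_of_finiteDimensional
    ({ toFun := fun A => (1 : Matrix (Fin p) (Fin p) ℝ) ⊗ₖ A,
       map_add' := Matrix.kronecker_add _,
       map_smul' := fun c A => Matrix.kronecker_smul c _ A } :
      Matrix (Fin n) (Fin n) ℝ →ₗ[ℝ] Matrix (Fin p × Fin n) (Fin p × Fin n) ℝ)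

theorem exp_oneKron (p n : ℕ) (t : ℝ) (S : Matrix (Fin n) (Fin n) ℝ) :
    (1 : Matrix (Fin p) (Fin p) ℝ) ⊗ₖ exp (t • S)
      = exp (t • ((1 : Matrix (Fin p) (Fin p) ℝ) ⊗ₖ S)) := by
  have h := map_exp (oneKron p n) (oneKron_continuous p n) (t • S)
  have h2 : oneKron p n (t • S) = t • ((1 : Matrix (Fin p) (Fin p) ℝ) ⊗ₖ S) :=
    Matrix.kronecker_smul t _ S
  rw [← h2]
  exact h

end Aux

/-- If x solves ẋ = (I_p ⊗ S + Γ ⊗ HᵀH)x and rᵀΓ = 0, then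
(𝟙rᵀ ⊗ I_n)x(t) = (𝟙rᵀ ⊗ exp(St))x(0) for all t ≥ 0. -/
theorem stmt14 {p n m : ℕ} (S : Matrix (Fin n) (Fin n) ℝ)
    (H : Matrix (Fin m) (Fin n) ℝ) (Γ : Matrix (Fin p) (Fin p) ℝ) (r : Fin p → ℝ)
    (hrΓ : r ᵥ* Γ = 0)
    (x : ℝ → Fin p × Fin n → ℝ)
    (hx : ∀ t, HasDerivAt x
      (((1 : Matrix (Fin p) (Fin p) ℝ) ⊗ₖ S + Γ ⊗ₖ (Hᵀ * H)) *ᵥ x t) t) :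
    ∀ t : ℝ, 0 ≤ t →
      (vecMulVec (ones p) r ⊗ₖ (1 : Matrix (Fin n) (Fin n) ℝ)) *ᵥ x t =
        (vecMulVec (ones p) r ⊗ₖ NormedSpace.exp (t • S)) *ᵥ x 0 := by
  intro t _ht
  set M : Matrix (Fin p × Fin n) (Fin p × Fin n) ℝ :=
    vecMulVec (ones p) r ⊗ₖ (1 : Matrix (Fin n) (Fin n) ℝ) with hM
  set B : Matrix (Fin p × Fin n) (Fin p × Fin n) ℝ :=
    (1 : Matrix (Fin p) (Fin p) ℝ) ⊗ₖ S with hB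
  set C : Matrix (Fin p × Fin n) (Fin p × Fin n) ℝ :=
    (1 : Matrix (Fin p) (Fin p) ℝ) ⊗ₖ S + Γ ⊗ₖ (Hᵀ * H) with hC
  have hvv : vecMulVec (ones p) r * Γ = 0 := by
    ext i j
    have h := congrFun hrΓ j
    simp only [vecMul, dotProduct, Pi.zero_apply] at h
    simp [mul_apply, vecMulVec_apply, mul_assoc, ← Finset.mul_sum, h]
  have hMC : M * C = B * M := by
    rw [hM, hB, hC, mul_add, ← Matrix.mul_kronecker_mul, ← Matrix.mul_kronecker_mul,
      ← Matrix.mul_kronecker_mul, hvv, Matrix.zero_kronecker, add_zero,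
      one_mul, mul_one, one_mul, mul_one]
  have hu : ∀ s, HasDerivAt (fun τ => M *ᵥ x τ) (B *ᵥ (M *ᵥ x s)) s := by
    intro s
    have h := (LinearMap.toContinuousLinearMap
      (Matrix.mulVecLin M)).hasFDerivAt.comp_hasDerivAt s (hx s)
    have h2 : HasDerivAt (fun τ => M *ᵥ x τ) (M *ᵥ (C *ᵥ x s)) s := h
    have hrw : M *ᵥ (C *ᵥ x s) = B *ᵥ (M *ᵥ x s) := by
      rw [mulVec_mulVec, mulVec_mulVec, hMC]
    exact hrw ▸ h2
  have hflow := flow_eq B (fun τ => M *ᵥ x τ) hu t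
  rw [hflow, mulVec_mulVec, ← exp_oneKron p n t S,
    ← Matrix.mul_kronecker_mul, one_mul, mul_one]
end
end

section
/- Let S be skew-symmetric, H ∈ ℝ^{m×n} with (H,S) observable, and Γ connected with normalized left null vector r. Then every solution x of ẋ = (I_p ⊗ S + Γ ⊗ HᵀH)x satisfies x(t) − (𝟙rᵀ ⊗ exp(St))x(0) → 0 as t → ∞; i.e., the p components ξ_i(t) ∈ ℝⁿ of x synchronize to ξ̄(t) = (rᵀ ⊗ exp(St))x(0). -/
open Matrix NormedSpace Filter
open scoped Kronecker

noncomputable section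

/-- (H, S) is observable: the kernel of the stacked observability matrix is trivial. -/
def Observable {m n : ℕ} (H : Matrix (Fin m) (Fin n) ℝ) (S : Matrix (Fin n) (Fin n) ℝ) : Prop :=
  ∀ v : Fin n → ℝ, (∀ k < n, H *ᵥ (S ^ k *ᵥ v) = 0) → v = 0

namespace S15
open Complex Relation
-- [paste of c1 contents assumed via import later; for testing, include]
/-- complexify a matrix -/
def cm {a b : Type*} (X : Matrix a b ℝ) : Matrix a b ℂ :=
  X.map (fun x => (x : ℂ))

def nsq {q : ℕ} (x : Fin q → ℂ) : ℝ := ∑ j, Complex.normSq (x j)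

lemma nsq_nonneg {q} (x : Fin q → ℂ) : 0 ≤ nsq x :=
  Finset.sum_nonneg fun _ _ => Complex.normSq_nonneg _

lemma nsq_eq_zero {q} {x : Fin q → ℂ} (h : nsq x = 0) : x = 0 := by
  funext j
  have := (Finset.sum_eq_zero_iff_of_nonneg
    (fun i _ => Complex.normSq_nonneg (x i))).1 h j (Finset.mem_univ j)
  simpa using this

lemma ip_self {q} (x : Fin q → ℂ) : star x ⬝ᵥ x = (nsq x : ℂ) := by
  simp only [dotProduct, Pi.star_apply, nsq, Complex.ofReal_sum]
  exact Finset.sum_congr rfl fun j _ => (Complex.normSq_eq_conj_mul_self).symm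

lemma re_ip_comm {q} (x y : Fin q → ℂ) :
    (star y ⬝ᵥ x).re = (star x ⬝ᵥ y).re := by
  rw [star_dotProduct]
  simp

lemma nsq_sub {q} (x y : Fin q → ℂ) :
    nsq (x - y) = nsq x + nsq y - 2 * (star x ⬝ᵥ y).re := by
  have h : star (x - y) ⬝ᵥ (x - y)
      = star x ⬝ᵥ x + star y ⬝ᵥ y - (star x ⬝ᵥ y + star y ⬝ᵥ x) := by
    simp only [star_sub, sub_dotProduct, dotProduct_sub]
    ring
  have := congrArg Complex.re h
  rw [ip_self, ip_self, ip_self] at this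
  simp only [Complex.ofReal_re, Complex.sub_re, Complex.add_re] at this
  rw [this, re_ip_comm y x]
  ring

lemma re_ip_le {q} (x y : Fin q → ℂ) :
    2 * (star x ⬝ᵥ y).re ≤ nsq x + nsq y := by
  have := nsq_nonneg (x - y)
  rw [nsq_sub] at this
  linarith

/-- conj commutes with real matrices -/
lemma star_mulVec_real {a b : Type*} [Fintype b] (X : Matrix a b ℝ) (w : b → ℂ) :
    star (cm X *ᵥ w) = cm X *ᵥ star w := by
  funext i
  simp [cm, Matrix.mulVec, dotProduct, map_sum, Complex.conj_ofReal]

lemma cm_transpose {a b : Type*} (X : Matrix a b ℝ) : (cm X)ᵀ = cm Xᵀ := by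
  ext i j; simp [cm]

lemma cm_mul {a b c : Type*} [Fintype b] (X : Matrix a b ℝ) (Y : Matrix b c ℝ) :
    cm (X * Y) = cm X * cm Y := by
  ext i j; simp [cm, Matrix.mul_apply]

lemma cm_pow {a : Type*} [Fintype a] [DecidableEq a] (X : Matrix a a ℝ) (k : ℕ) : cm (X ^ k) = cm X ^ k := by
  induction k with
  | zero => ext i j; simp [cm, Matrix.one_apply]; split <;> simp
  | succ k ih => rw [pow_succ, pow_succ, cm_mul, ih]

lemma cm_neg {a b : Type*} (X : Matrix a b ℝ) : cm (-X) = -cm X := by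
  ext i j; simp [cm]

/-- re ⟨x, S x⟩ = 0 for skew-symmetric real S -/
lemma re_ip_skew {q : Type*} [Fintype q] {S : Matrix q q ℝ} (hS : Sᵀ = -S) (x : q → ℂ) :
    (star x ⬝ᵥ (cm S *ᵥ x)).re = 0 := by
  set z := star x ⬝ᵥ (cm S *ᵥ x) with hz
  have h1 : star z = star x ⬝ᵥ ((cm S)ᵀ *ᵥ x) := by
    rw [hz, star_dotProduct, star_star, star_mulVec_real]
    rw [← Matrix.vecMul_transpose, ← Matrix.dotProduct_mulVec]
  have h2 : star z = -z := by
    rw [h1, cm_transpose, hS, cm_neg, Matrix.neg_mulVec, dotProduct_neg, hz]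
  have := Complex.add_conj z
  rw [show (starRingEnd ℂ) z = star z from rfl, h2] at this
  have h3 : ((2 * z.re : ℝ) : ℂ) = 0 := by rw [← this]; ring
  have h4 : (2 : ℝ) * z.re = 0 := by exact_mod_cast h3
  linarith

lemma dotProduct_sum' {a : ℕ} {ι : Type*} (s : Finset ι) (v : Fin a → ℂ) (w : ι → Fin a → ℂ) :
    v ⬝ᵥ (∑ j ∈ s, w j) = ∑ j ∈ s, v ⬝ᵥ w j := by
  simp only [dotProduct, Finset.sum_apply, Finset.mul_sum]
  exact Finset.sum_comm

section Eigen

variable {p n m : ℕ} {S : Matrix (Fin n) (Fin n) ℝ} {H : Matrix (Fin m) (Fin n) ℝ}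
  {Γ : Matrix (Fin p) (Fin p) ℝ}

lemma cm_mulVec_re {a b : Type*} [Fintype b] (Z : Matrix a b ℝ) (w : b → ℂ) (i : a) :
    ((cm Z *ᵥ w) i).re = (Z *ᵥ fun j => (w j).re) i := by
  simp [cm, Matrix.mulVec, dotProduct, Complex.re_sum]

lemma cm_mulVec_im {a b : Type*} [Fintype b] (Z : Matrix a b ℝ) (w : b → ℂ) (i : a) :
    ((cm Z *ᵥ w) i).im = (Z *ᵥ fun j => (w j).im) i := by
  simp [cm, Matrix.mulVec, dotProduct, Complex.im_sum]

/-- complexified observability -/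
lemma obsC (hHS : Observable H S) {μ : ℂ} {w : Fin n → ℂ}
    (hw : cm S *ᵥ w = μ • w) (hHw : cm H *ᵥ w = 0) : w = 0 := by
  have hpow : ∀ k : ℕ, cm (S ^ k) *ᵥ w = μ ^ k • w := by
    intro k; induction k with
    | zero => simp [pow_zero, cm]
      -- cm 1 = 1
    | succ k ih =>
      rw [pow_succ, cm_mul, ← Matrix.mulVec_mulVec, hw, Matrix.mulVec_smul, ih, pow_succ]
      rw [smul_smul]
      ring_nf
  have hz : ∀ k : ℕ, cm (H * S ^ k) *ᵥ w = 0 := by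
    intro k
    rw [cm_mul, ← Matrix.mulVec_mulVec, hpow, Matrix.mulVec_smul, hHw, smul_zero]
  have hre : (fun j => (w j).re) = 0 := by
    apply hHS; intro k _
    rw [Matrix.mulVec_mulVec]
    funext i
    have := congrFun (hz k) i
    have h2 := congrArg Complex.re this
    rw [cm_mulVec_re] at h2
    simpa using h2
  have him : (fun j => (w j).im) = 0 := by
    apply hHS; intro k _
    rw [Matrix.mulVec_mulVec]
    funext i
    have := congrFun (hz k) i
    have h2 := congrArg Complex.im this
    rw [cm_mulVec_im] at h2
    simpa using h2
  funext j
  have h1 := congrFun hre j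
  have h2 := congrFun him j
  simp only [Pi.zero_apply] at h1 h2
  exact Complex.ext h1 h2

lemma ip_M (x y : Fin n → ℂ) :
    star x ⬝ᵥ (cm (Hᵀ * H) *ᵥ y) = star (cm H *ᵥ x) ⬝ᵥ (cm H *ᵥ y) := by
  rw [cm_mul, ← cm_transpose, ← Matrix.mulVec_mulVec, Matrix.dotProduct_mulVec,
    Matrix.vecMul_transpose, star_mulVec_real]

/-- the per-node energy identity -/
lemma star_id (hS : Sᵀ = -S) {lam : ℂ} (V : Fin p → Fin n → ℂ)
    (heig : ∀ i, cm S *ᵥ V i + ∑ j, (Γ i j : ℂ) • (cm (Hᵀ * H) *ᵥ V j) = lam • V i)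
    (i : Fin p) :
    lam.re * nsq (V i) = ∑ j, Γ i j * (star (cm H *ᵥ V i) ⬝ᵥ (cm H *ᵥ V j)).re := by
  have h := congrArg (fun y => star (V i) ⬝ᵥ y) (heig i)
  simp only [dotProduct_add, dotProduct_sum', dotProduct_smul] at h
  rw [ip_self] at h
  simp only [smul_eq_mul] at h
  have hre := congrArg Complex.re h
  simp only [Complex.add_re, Complex.re_sum] at hre
  rw [re_ip_skew hS] at hre
  have : ∀ j, ((Γ i j : ℂ) * (star (V i) ⬝ᵥ (cm (Hᵀ * H) *ᵥ V j))).re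
      = Γ i j * (star (cm H *ᵥ V i) ⬝ᵥ (cm H *ᵥ V j)).re := by
    intro j
    rw [ip_M, Complex.re_ofReal_mul]
  rw [Finset.sum_congr rfl (fun j _ => this j)] at hre
  have hR : ((lam * (nsq (V i) : ℂ))).re = lam.re * nsq (V i) := by
    simp [Complex.mul_re]
  rw [hR] at hre
  linarith [hre]


/-- argmax propagation step -/
lemma prop_step (hS : Sᵀ = -S)
    (hoff : ∀ i j, i ≠ j → 0 ≤ Γ i j) (hrow : ∀ i, ∑ j, Γ i j = 0)
    {lam : ℂ} (hlam : 0 ≤ lam.re) (V : Fin p → Fin n → ℂ)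
    (heig : ∀ i, cm S *ᵥ V i + ∑ j, (Γ i j : ℂ) • (cm (Hᵀ * H) *ᵥ V j) = lam • V i)
    (i : Fin p) (hmax : ∀ l, nsq (cm H *ᵥ V l) ≤ nsq (cm H *ᵥ V i)) :
    ∀ j, 0 < Γ i j →
      ((∀ l, nsq (cm H *ᵥ V l) ≤ nsq (cm H *ᵥ V j)) ∧ cm H *ᵥ V j = cm H *ᵥ V i) := by
  obtain ⟨B, hB⟩ : ∃ B : Fin p → ℝ, ∀ l, B l = nsq (cm H *ᵥ V l) :=
    ⟨fun l => nsq (cm H *ᵥ V l), fun _ => rfl⟩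
  obtain ⟨c, hcdef⟩ : ∃ c : Fin p → ℝ,
      ∀ l, c l = (star (cm H *ᵥ V i) ⬝ᵥ (cm H *ᵥ V l)).re :=
    ⟨fun l => (star (cm H *ᵥ V i) ⬝ᵥ (cm H *ᵥ V l)).re, fun _ => rfl⟩
  have hmax' : ∀ l, B l ≤ B i := by intro l; rw [hB, hB]; exact hmax l
  have hid : lam.re * nsq (V i) = ∑ j, Γ i j * c j := by
    rw [star_id hS V heig i]
    exact Finset.sum_congr rfl fun j _ => by rw [hcdef]
  have hsplit : ∑ j, Γ i j * c j = ∑ j, Γ i j * (c j - B i) := by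
    have h1 : ∑ j, Γ i j * (c j - B i) = ∑ j, (Γ i j * c j - Γ i j * B i) :=
      Finset.sum_congr rfl fun j _ => by ring
    rw [h1, Finset.sum_sub_distrib, ← Finset.sum_mul, hrow i, zero_mul, sub_zero]
  have hci : c i = B i := by
    rw [hcdef, hB, ip_self]
    simp
  have hcle : ∀ j, 2 * c j ≤ B i + B j := by
    intro j
    rw [hcdef, hB, hB]
    exact re_ip_le _ _
  have hnonpos : ∀ j, Γ i j * (c j - B i) ≤ 0 := by
    intro j
    rcases eq_or_ne j i with rfl | hne
    · rw [hci]; simp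
    · have h1 : 0 ≤ Γ i j := hoff i j (Ne.symm hne)
      have h2 : c j - B i ≤ 0 := by
        have e1 := hcle j
        have e2 := hmax' j
        linarith
      exact mul_nonpos_of_nonneg_of_nonpos h1 h2
  have hsumnn : 0 ≤ ∑ j, Γ i j * (c j - B i) := by
    rw [← hsplit, ← hid]
    exact mul_nonneg hlam (nsq_nonneg _)
  have hsum0 : ∑ j, Γ i j * (c j - B i) = 0 :=
    le_antisymm (Finset.sum_nonpos fun j _ => hnonpos j) hsumnn
  have hzero : ∀ j, Γ i j * (c j - B i) = 0 :=
    fun j => (Finset.sum_eq_zero_iff_of_nonpos (fun l _ => hnonpos l)).1 hsum0 j (Finset.mem_univ j)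
  intro j hj
  have hcj : c j = B i := by
    rcases mul_eq_zero.1 (hzero j) with h | h
    · exact absurd h (ne_of_gt hj)
    · linarith [sub_eq_zero.1 h]
  have hBji : B i ≤ B j := by
    have := hcle j
    rw [hcj] at this
    linarith
  have hBj : B j = B i := le_antisymm (hmax' j) hBji
  have heq : cm H *ᵥ V i = cm H *ᵥ V j := by
    have h0 : nsq (cm H *ᵥ V i - cm H *ᵥ V j) = 0 := by
      rw [nsq_sub, ← hB, ← hB, ← hcdef, hcj, hBj]
      ring
    have := nsq_eq_zero h0
    rwa [sub_eq_zero] at this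
  refine ⟨fun l => ?_, heq.symm⟩
  have h1 : nsq (cm H *ᵥ V j) = B i := by rw [← hB j]; exact hBj
  rw [h1, ← hB i] at *
  exact hmax l

/-- propagation along reachability -/
lemma prop_reach (hS : Sᵀ = -S)
    (hoff : ∀ i j, i ≠ j → 0 ≤ Γ i j) (hrow : ∀ i, ∑ j, Γ i j = 0)
    {lam : ℂ} (hlam : 0 ≤ lam.re) (V : Fin p → Fin n → ℂ)
    (heig : ∀ i, cm S *ᵥ V i + ∑ j, (Γ i j : ℂ) • (cm (Hᵀ * H) *ᵥ V j) = lam • V i)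
    {i0 j : Fin p} (hmax : ∀ l, nsq (cm H *ᵥ V l) ≤ nsq (cm H *ᵥ V i0))
    (h : ReflTransGen (fun a b => 0 < Γ a b) i0 j) :
    (∀ l, nsq (cm H *ᵥ V l) ≤ nsq (cm H *ᵥ V j)) ∧ cm H *ᵥ V j = cm H *ᵥ V i0 := by
  induction h with
  | refl => exact ⟨hmax, rfl⟩
  | @tail b c hab hbc ih =>
    obtain ⟨h1, h2⟩ := prop_step hS hoff hrow hlam V heig b ih.1 c hbc
    exact ⟨h1, h2.trans ih.2⟩

/-- the eigenvector structure theorem: eigenvectors with Re λ ≥ 0 are consensus vectors -/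
lemma eigen_consensus (hS : Sᵀ = -S) (hHS : Observable H S)
    (hoff : ∀ i j, i ≠ j → 0 ≤ Γ i j) (hrow : ∀ i, ∑ j, Γ i j = 0)
    {k : Fin p} (hk : ∀ i, ReflTransGen (fun a b => 0 < Γ a b) i k)
    {lam : ℂ} (hlam : 0 ≤ lam.re) (V : Fin p → Fin n → ℂ)
    (heig : ∀ i, cm S *ᵥ V i + ∑ j, (Γ i j : ℂ) • (cm (Hᵀ * H) *ᵥ V j) = lam • V i) :
    (∀ i, V i = V k) ∧ cm S *ᵥ V k = lam • V k := by
  have hne : Nonempty (Fin p) := ⟨k⟩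
  obtain ⟨i0, hi0⟩ := Finite.exists_max (fun l => nsq (cm H *ᵥ V l))
  have hkmax := (prop_reach hS hoff hrow hlam V heig hi0 (hk i0)).1
  have hT : ∀ i, ReflTransGen (fun a b => 0 < Γ a b) k i → cm H *ᵥ V i = cm H *ᵥ V k :=
    fun i h => (prop_reach hS hoff hrow hlam V heig hkmax h).2
  have hTeig : ∀ i, ReflTransGen (fun a b => 0 < Γ a b) k i → cm S *ᵥ V i = lam • V i := by
    intro i hi
    have hsum : ∑ j, (Γ i j : ℂ) • (cm (Hᵀ * H) *ᵥ V j) = 0 := by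
      have hterm : ∀ j, (Γ i j : ℂ) • (cm (Hᵀ * H) *ᵥ V j)
          = (Γ i j : ℂ) • ((cm H)ᵀ *ᵥ (cm H *ᵥ V k)) := by
        intro j
        rcases eq_or_ne (Γ i j) 0 with h0 | h0
        · rw [h0]; simp
        · have hj : cm H *ᵥ V j = cm H *ᵥ V k := by
            rcases eq_or_ne j i with rfl | hneq
            · exact hT _ hi
            · have hpos : 0 < Γ i j := lt_of_le_of_ne (hoff i j (Ne.symm hneq)) (Ne.symm h0)
              exact hT _ (hi.tail hpos)
          rw [cm_mul, ← cm_transpose, ← Matrix.mulVec_mulVec, hj]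
      rw [Finset.sum_congr rfl (fun j _ => hterm j), ← Finset.sum_smul]
      have hcast : (∑ j, (Γ i j : ℂ)) = 0 := by
        rw [← Complex.ofReal_sum, hrow i, Complex.ofReal_zero]
      rw [hcast, zero_smul]
    have := heig i
    rwa [hsum, add_zero] at this
  have hVk_eig : cm S *ᵥ V k = lam • V k := hTeig k ReflTransGen.refl
  have hTeq : ∀ i, ReflTransGen (fun a b => 0 < Γ a b) k i → V i = V k := by
    intro i hi
    have hd : cm S *ᵥ (V i - V k) = lam • (V i - V k) := by
      rw [Matrix.mulVec_sub, hTeig i hi, hVk_eig, smul_sub]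
    have hH : cm H *ᵥ (V i - V k) = 0 := by
      rw [Matrix.mulVec_sub, hT i hi, sub_self]
    have := obsC hHS hd hH
    rwa [sub_eq_zero] at this
  -- step B
  set W : Fin p → Fin n → ℂ := fun i => V i - V k with hW
  have heigW : ∀ i, cm S *ᵥ W i + ∑ j, (Γ i j : ℂ) • (cm (Hᵀ * H) *ᵥ W j) = lam • W i := by
    intro i
    have h1 := heig i
    have h2 : ∑ j, (Γ i j : ℂ) • (cm (Hᵀ * H) *ᵥ W j)
        = ∑ j, (Γ i j : ℂ) • (cm (Hᵀ * H) *ᵥ V j)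
          - (∑ j, (Γ i j : ℂ)) • (cm (Hᵀ * H) *ᵥ V k) := by
      rw [Finset.sum_smul, ← Finset.sum_sub_distrib]
      exact Finset.sum_congr rfl fun j _ => by
        rw [hW]; simp only [Matrix.mulVec_sub, smul_sub]
    have hcast : (∑ j, (Γ i j : ℂ)) = 0 := by
      rw [← Complex.ofReal_sum, hrow i, Complex.ofReal_zero]
    rw [h2, hcast, zero_smul, sub_zero]
    rw [hW]
    simp only [Matrix.mulVec_sub, smul_sub]
    rw [sub_add_eq_add_sub, h1, hVk_eig]
  obtain ⟨j0, hj0⟩ := Finite.exists_max (fun l => nsq (cm H *ᵥ W l))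
  have hWreach := prop_reach hS hoff hrow hlam W heigW hj0 (hk j0)
  have hWk : W k = 0 := by rw [hW]; simp
  have hBWk : nsq (cm H *ᵥ W k) = 0 := by rw [hWk, Matrix.mulVec_zero]; simp [nsq]
  have hall : ∀ l, cm H *ᵥ W l = 0 := by
    intro l
    have h1 := hWreach.1 l
    rw [hBWk] at h1
    exact nsq_eq_zero (le_antisymm h1 (nsq_nonneg _))
  have heigW' : ∀ i, cm S *ᵥ W i = lam • W i := by
    intro i
    have := heigW i
    have hsum : ∑ j, (Γ i j : ℂ) • (cm (Hᵀ * H) *ᵥ W j) = 0 := by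
      apply Finset.sum_eq_zero
      intro j _
      rw [cm_mul, ← cm_transpose, ← Matrix.mulVec_mulVec, hall j, Matrix.mulVec_zero, smul_zero]
    rwa [hsum, add_zero] at this
  have hWzero : ∀ i, W i = 0 := fun i => obsC hHS (heigW' i) (hall i)
  refine ⟨fun i => ?_, hVk_eig⟩
  have := hWzero i
  rw [hW] at this
  exact sub_eq_zero.1 this

end Eigen

section Bridge

variable {p n m : ℕ} {S : Matrix (Fin n) (Fin n) ℝ} {H : Matrix (Fin m) (Fin n) ℝ}
  {Γ : Matrix (Fin p) (Fin p) ℝ}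

/-- componentwise formula for the complexified system matrix -/
lemma bridgeA (v : Fin p × Fin n → ℂ) (i : Fin p) (a : Fin n) :
    (cm ((1 : Matrix (Fin p) (Fin p) ℝ) ⊗ₖ S + Γ ⊗ₖ (Hᵀ * H)) *ᵥ v) (i, a)
      = (cm S *ᵥ fun b => v (i, b)) a
        + ∑ j, (Γ i j : ℂ) * ((cm (Hᵀ * H) *ᵥ fun b => v (j, b)) a) := by
  simp only [cm, Matrix.mulVec, dotProduct, Matrix.map_apply, Matrix.add_apply,
    Matrix.kroneckerMap_apply, Matrix.one_apply, Fintype.sum_prod_type,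
    Complex.ofReal_add, Complex.ofReal_mul, add_mul, Finset.sum_add_distrib]
  congr 1
  · rw [Finset.sum_comm]
    apply Finset.sum_congr rfl
    intro b _
    rw [Finset.sum_eq_single i]
    · simp
    · intro j _ hj
      simp [Ne.symm hj]
    · simp
  · apply Finset.sum_congr rfl
    intro j _
    rw [Finset.mul_sum]
    apply Finset.sum_congr rfl
    intro b _
    push_cast
    ring

lemma eig_bridge {lam : ℂ} {v : Fin p × Fin n → ℂ}
    (hv : cm ((1 : Matrix (Fin p) (Fin p) ℝ) ⊗ₖ S + Γ ⊗ₖ (Hᵀ * H)) *ᵥ v = lam • v) :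
    ∀ i, cm S *ᵥ (fun b => v (i, b)) + ∑ j, (Γ i j : ℂ) • (cm (Hᵀ * H) *ᵥ fun b => v (j, b))
      = lam • fun b => v (i, b) := by
  intro i
  funext a
  have h := congrFun hv (i, a)
  rw [bridgeA] at h
  simp only [Pi.add_apply, Finset.sum_apply, Pi.smul_apply, smul_eq_mul] at h ⊢
  exact h

/-- weighted average operator -/
def Rmap (r : Fin p → ℝ) (y : Fin p × Fin n → ℂ) : Fin n → ℂ :=
  fun a => ∑ i, (r i : ℂ) * y (i, a)

lemma Rmap_sub (r : Fin p → ℝ) (y z : Fin p × Fin n → ℂ) :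
    Rmap r (y - z) = Rmap r y - Rmap r z := by
  funext a
  simp [Rmap, Finset.sum_sub_distrib, mul_sub]

lemma Rmap_smul (r : Fin p → ℝ) (μ : ℂ) (y : Fin p × Fin n → ℂ) :
    Rmap r (μ • y) = μ • Rmap r y := by
  funext a
  simp [Rmap, Finset.mul_sum]
  congr 1; funext i; ring

lemma Rmap_bridge (r : Fin p → ℝ) (hrΓ : r ᵥ* Γ = 0) (y : Fin p × Fin n → ℂ) :
    Rmap r (cm ((1 : Matrix (Fin p) (Fin p) ℝ) ⊗ₖ S + Γ ⊗ₖ (Hᵀ * H)) *ᵥ y)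
      = cm S *ᵥ Rmap r y := by
  funext a
  have hrc : ∀ j, ∑ i, (r i : ℂ) * (Γ i j : ℂ) = 0 := by
    intro j
    have := congrFun hrΓ j
    simp only [Matrix.vecMul, dotProduct, Pi.zero_apply] at this
    rw [← Complex.ofReal_zero, ← this]
    push_cast
    rfl
  simp only [Rmap]
  have h1 : ∀ i : Fin p,
      (cm ((1 : Matrix (Fin p) (Fin p) ℝ) ⊗ₖ S + Γ ⊗ₖ (Hᵀ * H)) *ᵥ y) (i, a)
        = (cm S *ᵥ fun b => y (i, b)) a
          + ∑ j, (Γ i j : ℂ) * ((cm (Hᵀ * H) *ᵥ fun b => y (j, b)) a) := fun i => bridgeA y i a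
  rw [Finset.sum_congr rfl fun i _ => by rw [h1 i]]
  simp only [mul_add, Finset.sum_add_distrib]
  have h2 : ∑ i, (r i : ℂ) * (cm S *ᵥ fun b => y (i, b)) a
      = (cm S *ᵥ fun b => ∑ i, (r i : ℂ) * y (i, b)) a := by
    simp only [cm, Matrix.mulVec, dotProduct, Matrix.map_apply, Finset.mul_sum]
    rw [Finset.sum_comm]
    apply Finset.sum_congr rfl
    intro b _
    apply Finset.sum_congr rfl
    intro i _
    ring
  have h3 : ∑ i, (r i : ℂ) * ∑ j, (Γ i j : ℂ) * ((cm (Hᵀ * H) *ᵥ fun b => y (j, b)) a) = 0 := by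
    simp only [Finset.mul_sum]
    rw [Finset.sum_comm]
    apply Finset.sum_eq_zero
    intro j _
    simp only [← mul_assoc]
    rw [← Finset.sum_mul, hrc j, zero_mul]
  rw [h2, h3, add_zero]
  rfl

/-- generalized eigenvectors for eigenvalues with nonnegative real part are genuine eigenvectors -/
lemma gen_eig_eigen (hS : Sᵀ = -S) (hHS : Observable H S)
    (hoff : ∀ i j, i ≠ j → 0 ≤ Γ i j) (hrow : ∀ i, ∑ j, Γ i j = 0)
    {k : Fin p} (hk : ∀ i, Relation.ReflTransGen (fun a b => 0 < Γ a b) i k)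
    (r : Fin p → ℝ) (hrΓ : r ᵥ* Γ = 0) (hr1 : ∑ i, r i = 1)
    {μ : ℂ} (hμ : 0 ≤ μ.re) :
    ∀ (d : ℕ) (u : Fin p × Fin n → ℂ),
      ((cm ((1 : Matrix (Fin p) (Fin p) ℝ) ⊗ₖ S + Γ ⊗ₖ (Hᵀ * H)) - μ • 1) ^ d) *ᵥ u = 0 →
      cm ((1 : Matrix (Fin p) (Fin p) ℝ) ⊗ₖ S + Γ ⊗ₖ (Hᵀ * H)) *ᵥ u = μ • u := by
  intro d
  induction d with
  | zero =>
    intro u hu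
    rw [pow_zero, Matrix.one_mulVec] at hu
    rw [hu]
    simp
  | succ d ih =>
    intro u hu
    set Ac := cm ((1 : Matrix (Fin p) (Fin p) ℝ) ⊗ₖ S + Γ ⊗ₖ (Hᵀ * H)) with hAc
    have hz : ((Ac - μ • 1) ^ d) *ᵥ ((Ac - μ • 1) *ᵥ u) = 0 := by
      rw [Matrix.mulVec_mulVec, ← pow_succ]
      exact hu
    have hzeig : Ac *ᵥ ((Ac - μ • 1) *ᵥ u) = μ • ((Ac - μ • 1) *ᵥ u) := ih _ hz
    set z := (Ac - μ • 1) *ᵥ u with hzdef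
    -- componentwise eigen equation for z
    have hcomp := eig_bridge (S := S) (H := H) (Γ := Γ) hzeig
    obtain ⟨hcons, hweig⟩ := eigen_consensus hS hHS hoff hrow hk hμ _ hcomp
    set w : Fin n → ℂ := fun b => z (k, b) with hwdef
    -- w = Rmap r z
    have hr1c : (∑ i, (r i : ℂ)) = 1 := by
      rw [← Complex.ofReal_sum, hr1, Complex.ofReal_one]
    have hRz : Rmap r z = w := by
      funext a
      simp only [Rmap]
      have : ∀ i : Fin p, z (i, a) = w a := fun i => congrFun (hcons i) a
      rw [Finset.sum_congr rfl fun i _ => by rw [this i]]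
      rw [← Finset.sum_mul, hr1c, one_mul]
    -- w = (S - μ) c with c = Rmap r u
    have hRu : Rmap r z = cm S *ᵥ Rmap r u - μ • Rmap r u := by
      rw [hzdef, Matrix.sub_mulVec, Rmap_sub]
      congr 1
      · exact Rmap_bridge r hrΓ u
      · rw [Matrix.smul_mulVec, Matrix.one_mulVec, Rmap_smul]
    have hw : w = cm S *ᵥ Rmap r u - μ • Rmap r u := by rw [← hRz, hRu]
    -- show w = 0
    have hwzero : w = 0 := by
      rcases eq_or_lt_of_le hμ with h0 | hpos
      · -- μ.re = 0 : use skewness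
        have hconj : (starRingEnd ℂ) μ = -μ := by
          apply Complex.ext <;> simp [← h0]
        set c := Rmap r u with hcdef
        have hip : star w ⬝ᵥ w = star w ⬝ᵥ (cm S *ᵥ c) - μ * (star w ⬝ᵥ c) := by
          rw [hw]
          rw [dotProduct_sub, dotProduct_smul, smul_eq_mul]
        have h1 : star w ⬝ᵥ (cm S *ᵥ c) = μ * (star w ⬝ᵥ c) := by
          rw [Matrix.dotProduct_mulVec]
          have hvm : star w ᵥ* cm S = (cm S)ᵀ *ᵥ star w := by
            rw [← Matrix.vecMul_transpose, Matrix.transpose_transpose]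
          rw [hvm, cm_transpose, hS, cm_neg, Matrix.neg_mulVec]
          have h2 : cm S *ᵥ star w = star (cm S *ᵥ w) := (star_mulVec_real S w).symm
          have h3 : cm S *ᵥ w = μ • w := hweig
          rw [h2, h3]
          have h4 : star (μ • w) = (starRingEnd ℂ) μ • star w := by
            funext b
            simp [Pi.smul_apply, smul_eq_mul, _root_.map_mul]
          rw [h4, hconj]
          rw [neg_dotProduct, smul_dotProduct]
          simp [smul_eq_mul]
        have : star w ⬝ᵥ w = 0 := by rw [hip, h1, sub_self]
        rw [ip_self] at this
        have : nsq w = 0 := by exact_mod_cast this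
        exact nsq_eq_zero this
      · -- μ.re > 0 : skew quadratic form
        have h0 := re_ip_skew hS w
        rw [hweig, dotProduct_smul, smul_eq_mul, ip_self] at h0
        have : μ.re * nsq w = 0 := by
          have h1 : (μ * (nsq w : ℂ)).re = μ.re * nsq w := by
            rw [mul_comm, Complex.re_ofReal_mul, mul_comm]
          rw [h1] at h0
          linarith
        have := (mul_eq_zero.1 this).resolve_left (ne_of_gt hpos)
        exact nsq_eq_zero this
    -- z = 0
    have hz0 : z = 0 := by
      funext q
      have : z (q.1, q.2) = w q.2 := congrFun (hcons q.1) q.2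
      rw [hwzero] at this
      simpa using this
    -- conclude
    have : Ac *ᵥ u - μ • u = 0 := by
      rw [← hz0, hzdef, Matrix.sub_mulVec, Matrix.smul_mulVec, Matrix.one_mulVec]
    have h := sub_eq_zero.1 this
    exact h

end Bridge

section Analysis

attribute [local instance] Matrix.linftyOpSemiNormedRing Matrix.linftyOpNormedRing
  Matrix.linftyOpNormedAlgebra

variable {𝕜 : Type*} [RCLike 𝕜] {N N' : Type*} [Fintype N] [DecidableEq N]
  [Fintype N'] [DecidableEq N']

/-- the continuous linear map `X ↦ X *ᵥ u` -/
def mulVecCLM (u : N → 𝕜) : Matrix N N 𝕜 →L[𝕜] (N → 𝕜) :=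
  LinearMap.toContinuousLinearMap
    { toFun := fun X => X *ᵥ u
      map_add' := fun X Y => Matrix.add_mulVec X Y u
      map_smul' := fun c X => Matrix.smul_mulVec c X u }

lemma mulVecCLM_apply (u : N → 𝕜) (X : Matrix N N 𝕜) : mulVecCLM u X = X *ᵥ u := rfl

lemma summable_exp_series (X : Matrix N N 𝕜) (u : N → 𝕜) :
    Summable fun j : ℕ => ((j.factorial : 𝕜)⁻¹ • (X ^ j *ᵥ u)) := by
  have h := NormedSpace.expSeries_summable' (𝕂 := 𝕜) X
  have h2 := h.map (mulVecCLM u) (mulVecCLM u).continuous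
  convert h2 using 2 with j
  simp [mulVecCLM_apply, Matrix.smul_mulVec]

lemma exp_mulVec_tsum (X : Matrix N N 𝕜) (u : N → 𝕜) :
    exp X *ᵥ u = ∑' j : ℕ, ((j.factorial : 𝕜)⁻¹ • (X ^ j *ᵥ u)) := by
  have h := (mulVecCLM u).map_tsum (NormedSpace.expSeries_summable' (𝕂 := 𝕜) X)
  rw [NormedSpace.exp_eq_tsum (𝕂 := 𝕜), ← mulVecCLM_apply]
  rw [h]
  congr 1
  funext j
  simp [mulVecCLM_apply, Matrix.smul_mulVec]

/-- intertwining relations pass to exponentials -/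
lemma intertwine_exp (X : Matrix N N 𝕜) (Y : Matrix N' N' 𝕜)
    (Φ : (N → 𝕜) →ₗ[𝕜] (N' → 𝕜)) (h : ∀ y, Φ (X *ᵥ y) = Y *ᵥ Φ y) (y : N → 𝕜) :
    Φ (exp X *ᵥ y) = exp Y *ᵥ Φ y := by
  have hpow : ∀ (j : ℕ) (y : N → 𝕜), Φ (X ^ j *ᵥ y) = Y ^ j *ᵥ Φ y := by
    intro j
    induction j with
    | zero => intro y; simp [pow_zero, Matrix.one_mulVec]
    | succ j ih =>
      intro y
      rw [pow_succ, ← Matrix.mulVec_mulVec, ih, h, Matrix.mulVec_mulVec, ← pow_succ]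
  rw [exp_mulVec_tsum, exp_mulVec_tsum]
  have hΦc : Continuous Φ := LinearMap.continuous_of_finiteDimensional Φ
  let Φc : (N → 𝕜) →L[𝕜] (N' → 𝕜) := ⟨Φ, hΦc⟩
  have hmap : Φ (∑' j : ℕ, ((j.factorial : 𝕜)⁻¹ • (X ^ j *ᵥ y)))
      = ∑' j : ℕ, Φ ((j.factorial : 𝕜)⁻¹ • (X ^ j *ᵥ y)) :=
    Φc.map_tsum (summable_exp_series X y)
  rw [hmap]
  congr 1
  funext j
  rw [_root_.map_smul, hpow]

lemma real_smul_matrix (t : ℝ) (X : Matrix N N ℂ) : t • X = (t : ℂ) • X := by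
  ext i j
  simp [Complex.real_smul]

lemma exp_smul_one (c : ℂ) :
    exp (c • (1 : Matrix N N ℂ)) = Complex.exp c • (1 : Matrix N N ℂ) := by
  have halg : ⇑(algebraMap ℂ (Matrix N N ℂ)) = fun c : ℂ => c • (1 : Matrix N N ℂ) :=
    funext fun c => Algebra.algebraMap_eq_smul_one c
  have hcont : Continuous ⇑(algebraMap ℂ (Matrix N N ℂ)) := by
    rw [halg]
    exact continuous_id.smul continuous_const
  have := map_exp (algebraMap ℂ (Matrix N N ℂ)) hcont c
  rw [halg] at this
  simp only at this
  rw [← Complex.exp_eq_exp_ℂ] at this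
  exact this.symm

/-- scalar coefficient tends to zero -/
lemma coeff_tendsto_zero {μ : ℂ} (hμ : μ.re < 0) (j : ℕ) :
    Tendsto (fun t : ℝ => Complex.exp ((t : ℂ) * μ) * (t : ℂ) ^ j * ((j.factorial : ℂ))⁻¹)
      atTop (nhds 0) := by
  rw [tendsto_zero_iff_norm_tendsto_zero]
  have hnorm : ∀ t : ℝ, ‖Complex.exp ((t : ℂ) * μ) * (t : ℂ) ^ j * ((j.factorial : ℂ))⁻¹‖
      = Real.exp (t * μ.re) * |t| ^ j * ((j.factorial : ℝ))⁻¹ := by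
    intro t
    rw [norm_mul, norm_mul, norm_pow]
    congr 2
    · rw [Complex.norm_exp]
      congr 1
      simp [Complex.re_ofReal_mul]
    · simp
    · simp
  simp only [hnorm]
  have hc : 0 < -μ.re := by linarith
  have hbase : Tendsto (fun t : ℝ => t ^ j * Real.exp (-((-μ.re) * t))) atTop (nhds 0) := by
    have h1 : Tendsto (fun t : ℝ => (-μ.re) * t) atTop atTop :=
      Tendsto.const_mul_atTop hc tendsto_id
    have h2 := (Real.tendsto_pow_mul_exp_neg_atTop_nhds_zero j).comp h1
    have h3 : Tendsto (fun t : ℝ => ((-μ.re) * t) ^ j * Real.exp (-((-μ.re) * t)))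
        atTop (nhds 0) := h2
    have h4 := h3.const_mul (((-μ.re) ^ j)⁻¹)
    rw [mul_zero] at h4
    apply h4.congr' ?_
    filter_upwards [eventually_ge_atTop (0:ℝ)] with t _
    rw [mul_pow]
    field_simp
  have h5 := hbase.const_mul (((j.factorial : ℝ))⁻¹)
  rw [mul_zero] at h5
  apply h5.congr' ?_
  filter_upwards [eventually_ge_atTop (0:ℝ)] with t ht
  rw [_root_.abs_of_nonneg ht]
  rw [show -((-μ.re) * t) = t * μ.re by ring]
  ring

/-- solutions decay on generalized eigenspaces with negative real part -/
lemma decay {μ : ℂ} (hμ : μ.re < 0) (X : Matrix N N ℂ) {d : ℕ} {u : N → ℂ}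
    (h : ((X - μ • 1) ^ d) *ᵥ u = 0) :
    Tendsto (fun t : ℝ => exp (t • X) *ᵥ u) atTop (nhds 0) := by
  have key : ∀ t : ℝ, exp (t • X) *ᵥ u
      = ∑ j ∈ Finset.range d,
          (Complex.exp ((t : ℂ) * μ) * (t : ℂ) ^ j * ((j.factorial : ℂ))⁻¹)
            • ((X - μ • 1) ^ j *ᵥ u) := by
    intro t
    set z : ℂ := (t : ℂ) with hz
    set Nm : Matrix N N ℂ := X - μ • 1 with hNm
    have hsplit : t • X = z • Nm + (z * μ) • (1 : Matrix N N ℂ) := by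
      rw [real_smul_matrix, hNm, smul_sub, smul_smul]
      abel
    have hcomm : Commute (z • Nm) ((z * μ) • (1 : Matrix N N ℂ)) :=
      ((Commute.one_right Nm).smul_left z).smul_right (z * μ)
    rw [hsplit, Matrix.exp_add_of_commute _ _ hcomm, exp_smul_one]
    have hmul : exp (z • Nm) * (Complex.exp (z * μ) • 1)
        = Complex.exp (z * μ) • exp (z • Nm) := by
      rw [mul_smul_one]
    rw [hmul, Matrix.smul_mulVec]
    rw [exp_mulVec_tsum]
    have hvanish : ∀ j ∉ Finset.range d,
        ((j.factorial : ℂ))⁻¹ • ((z • Nm) ^ j *ᵥ u) = 0 := by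
      intro j hj
      rw [Finset.mem_range, not_lt] at hj
      have h1 : Nm ^ j *ᵥ u = 0 := by
        have : Nm ^ j = Nm ^ (j - d) * Nm ^ d := by
          rw [← pow_add]
          congr 1
          omega
        rw [this, ← Matrix.mulVec_mulVec, h, Matrix.mulVec_zero]
      rw [smul_pow, Matrix.smul_mulVec, h1]
      simp
    rw [tsum_eq_sum hvanish, Finset.smul_sum]
    apply Finset.sum_congr rfl
    intro j _
    rw [smul_pow, Matrix.smul_mulVec, smul_smul, smul_smul]
    congr 1
    ring
  simp only [key]
  have : Tendsto (fun t : ℝ => ∑ j ∈ Finset.range d,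
      (Complex.exp ((t : ℂ) * μ) * (t : ℂ) ^ j * ((j.factorial : ℂ))⁻¹)
        • ((X - μ • 1) ^ j *ᵥ u)) atTop (nhds (∑ j ∈ Finset.range d, (0 : N → ℂ))) := by
    apply tendsto_finset_sum
    intro j _
    have h1 := (coeff_tendsto_zero hμ j).smul_const ((X - μ • 1) ^ j *ᵥ u)
    rwa [zero_smul] at h1
  simpa using this

end Analysis


section Master

attribute [local instance] Matrix.linftyOpSemiNormedRing Matrix.linftyOpNormedRing
  Matrix.linftyOpNormedAlgebra

variable {p n m : ℕ} {S : Matrix (Fin n) (Fin n) ℝ} {H : Matrix (Fin m) (Fin n) ℝ}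
  {Γ : Matrix (Fin p) (Fin p) ℝ}

lemma iota_bridge (hrow : ∀ i, ∑ j, Γ i j = 0) (y : Fin n → ℂ) :
    cm ((1 : Matrix (Fin p) (Fin p) ℝ) ⊗ₖ S + Γ ⊗ₖ (Hᵀ * H)) *ᵥ (fun q : Fin p × Fin n => y q.2)
      = fun q => (cm S *ᵥ y) q.2 := by
  funext q
  obtain ⟨i, a⟩ := q
  rw [show ((i, a) : Fin p × Fin n) = (i, a) from rfl]
  rw [bridgeA]
  have h2 : ∑ j, (Γ i j : ℂ) * ((cm (Hᵀ * H) *ᵥ fun b => y b) a) = 0 := by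
    rw [← Finset.sum_mul]
    have hcast : (∑ j, (Γ i j : ℂ)) = 0 := by
      rw [← Complex.ofReal_sum, hrow i, Complex.ofReal_zero]
    rw [hcast, zero_mul]
  simp only [h2, add_zero]

lemma end_pow_eq {Q : Type*} [Fintype Q] [DecidableEq Q] (Ac : Matrix Q Q ℂ) (μ : ℂ) :
    ∀ (d : ℕ) (u : Q → ℂ),
      ((Matrix.mulVecLin Ac - μ • 1) ^ d) u = ((Ac - μ • 1) ^ d) *ᵥ u := by
  intro d
  induction d with
  | zero => intro u; simp [Matrix.one_mulVec]
  | succ d ih =>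
    intro u
    rw [pow_succ, pow_succ]
    have h1 : ∀ v : Q → ℂ, (Matrix.mulVecLin Ac - μ • 1) v = (Ac - μ • 1) *ᵥ v := by
      intro v
      simp [Matrix.sub_mulVec, Matrix.smul_mulVec, Matrix.one_mulVec,
        Matrix.mulVecLin_apply]
    show ((Matrix.mulVecLin Ac - μ • 1) ^ d) ((Matrix.mulVecLin Ac - μ • 1) u)
      = ((Ac - μ • 1) ^ d * (Ac - μ • 1)) *ᵥ u
    rw [h1, ih, Matrix.mulVec_mulVec]

lemma Rmap_real_smul (r : Fin p → ℝ) (t : ℝ) (v : Fin p × Fin n → ℂ) :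
    Rmap r (t • v) = t • Rmap r v := by
  funext a
  simp only [Rmap, Pi.smul_apply, Complex.real_smul, Finset.mul_sum]
  apply Finset.sum_congr rfl
  intro i _
  ring

lemma Rmap_iota (r : Fin p → ℝ) (hr1 : ∑ i, r i = 1) (v : Fin n → ℂ) :
    Rmap r (fun q : Fin p × Fin n => v q.2) = v := by
  funext a
  simp only [Rmap]
  rw [← Finset.sum_mul]
  have hcast : (∑ i, (r i : ℂ)) = 1 := by
    rw [← Complex.ofReal_sum, hr1, Complex.ofReal_one]
  rw [hcast, one_mul]

lemma cm_conjTranspose {a b : Type*} (X : Matrix a b ℝ) : (cm X)ᴴ = cm Xᵀ := by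
  ext i j
  simp [cm, Matrix.conjTranspose_apply, Complex.conj_ofReal]

lemma unitary_nsq (hS : Sᵀ = -S) (t : ℝ) (w : Fin n → ℂ) :
    nsq (exp (t • cm S) *ᵥ w) = nsq w := by
  set E := exp (t • cm S) with hE
  have hZ : (t • cm S)ᴴ = -(t • cm S) := by
    rw [real_smul_matrix, Matrix.conjTranspose_smul, cm_conjTranspose, hS, cm_neg]
    simp
  have hEH : Eᴴ = exp (-(t • cm S)) := by
    rw [hE, ← Matrix.exp_conjTranspose, hZ]
  have hunit : Eᴴ * E = 1 := by
    rw [hEH, hE, ← Matrix.exp_add_of_commute _ _ ((Commute.refl (t • cm S)).neg_left),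
      neg_add_cancel, NormedSpace.exp_zero]
  have hip : star (E *ᵥ w) ⬝ᵥ (E *ᵥ w) = star w ⬝ᵥ w := by
    rw [Matrix.star_mulVec, ← Matrix.dotProduct_mulVec, Matrix.mulVec_mulVec, hunit,
      Matrix.one_mulVec]
  have h1 := ip_self (E *ᵥ w)
  have h2 := ip_self w
  rw [h1, h2] at hip
  exact_mod_cast hip

lemma nsq_continuous : Continuous fun y : Fin n → ℂ => nsq y := by
  apply continuous_finset_sum
  intro j _
  exact Complex.continuous_normSq.comp (continuous_apply j)

/-- the master complex convergence lemma -/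
lemma master (hS : Sᵀ = -S) (hHS : Observable H S)
    (hoff : ∀ i j, i ≠ j → 0 ≤ Γ i j) (hrow : ∀ i, ∑ j, Γ i j = 0)
    {k : Fin p} (hk : ∀ i, Relation.ReflTransGen (fun a b => 0 < Γ a b) i k)
    (r : Fin p → ℝ) (hrΓ : r ᵥ* Γ = 0) (hr1 : ∑ i, r i = 1)
    (z0 : Fin p × Fin n → ℂ) (hz0 : Rmap r z0 = 0) :
    Tendsto (fun t : ℝ =>
      exp (t • cm ((1 : Matrix (Fin p) (Fin p) ℝ) ⊗ₖ S + Γ ⊗ₖ (Hᵀ * H))) *ᵥ z0)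
      atTop (nhds 0) := by
  set Ac := cm ((1 : Matrix (Fin p) (Fin p) ℝ) ⊗ₖ S + Γ ⊗ₖ (Hᵀ * H)) with hAc
  -- the iota linear map
  let Φι : (Fin n → ℂ) →ₗ[ℂ] (Fin p × Fin n → ℂ) :=
    { toFun := fun y => fun q => y q.2
      map_add' := fun y z => rfl
      map_smul' := fun c y => rfl }
  have hιexp : ∀ (t : ℝ) (w : Fin n → ℂ),
      exp (t • Ac) *ᵥ (fun q : Fin p × Fin n => w q.2)
        = fun q => (exp (t • cm S) *ᵥ w) q.2 := by
    intro t w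
    have hbase : ∀ y, Φι ((t • cm S) *ᵥ y) = (t • Ac) *ᵥ Φι y := by
      intro y
      rw [Matrix.smul_mulVec, Matrix.smul_mulVec]
      have hib := iota_bridge (S := S) (H := H) hrow y
      funext q
      show (t • (cm S *ᵥ y)) q.2 = (t • (Ac *ᵥ fun q : Fin p × Fin n => y q.2)) q
      rw [Pi.smul_apply, Pi.smul_apply, hib]
    exact (intertwine_exp (t • cm S) (t • Ac) Φι hbase w).symm
  -- the predicate
  set f : Module.End ℂ (Fin p × Fin n → ℂ) := Matrix.mulVecLin Ac with hf
  have htop : z0 ∈ ⨆ μ : ℂ, f.maxGenEigenspace μ := by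
    rw [Module.End.iSup_maxGenEigenspace_eq_top]
    trivial
  have hP : ∃ w : Fin n → ℂ,
      Tendsto (fun t : ℝ =>
        exp (t • Ac) *ᵥ z0 - fun q : Fin p × Fin n => (exp (t • cm S) *ᵥ w) q.2)
        atTop (nhds 0) := by
    refine Submodule.iSup_induction (motive := fun u => ∃ w : Fin n → ℂ,
      Tendsto (fun t : ℝ =>
        exp (t • Ac) *ᵥ u - fun q : Fin p × Fin n => (exp (t • cm S) *ᵥ w) q.2)
        atTop (nhds 0)) _ htop ?_ ?_ ?_
    · intro μ u hu
      rw [Module.End.mem_maxGenEigenspace] at hu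
      obtain ⟨d, hd⟩ := hu
      rw [end_pow_eq] at hd
      rcases lt_or_ge μ.re 0 with hneg | hpos
      · refine ⟨0, ?_⟩
        have hdec := decay hneg Ac hd
        have heq : ∀ t : ℝ, exp (t • Ac) *ᵥ u
            - (fun q : Fin p × Fin n => (exp (t • cm S) *ᵥ (0 : Fin n → ℂ)) q.2)
            = exp (t • Ac) *ᵥ u := by
          intro t
          rw [Matrix.mulVec_zero]
          funext q
          simp
        simp only [heq]
        exact hdec
      · have heq : Ac *ᵥ u = μ • u :=
          gen_eig_eigen hS hHS hoff hrow hk r hrΓ hr1 hpos d u hd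
        have hcomp := eig_bridge (S := S) (H := H) (Γ := Γ) heq
        obtain ⟨hcons, hweig⟩ :=
          eigen_consensus hS hHS hoff hrow hk hpos (fun i => fun b => u (i, b)) hcomp
        refine ⟨fun b => u (k, b), ?_⟩
        have hu_eq : u = fun q : Fin p × Fin n => u (k, q.2) :=
          funext fun q => congrFun (hcons q.1) q.2
        have : ∀ t : ℝ, exp (t • Ac) *ᵥ u
            = fun q : Fin p × Fin n => (exp (t • cm S) *ᵥ fun b => u (k, b)) q.2 := by
          intro t
          rw [hu_eq]
          exact hιexp t (fun b => u (k, b))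
        simp only [this, sub_self]
        exact tendsto_const_nhds
    · refine ⟨0, ?_⟩
      have : ∀ t : ℝ, exp (t • Ac) *ᵥ (0 : Fin p × Fin n → ℂ)
          - (fun q : Fin p × Fin n => (exp (t • cm S) *ᵥ (0 : Fin n → ℂ)) q.2) = 0 := by
        intro t
        rw [Matrix.mulVec_zero, Matrix.mulVec_zero]
        funext q
        simp
      simp only [this]
      exact tendsto_const_nhds
    · rintro u u' ⟨w, hw⟩ ⟨w', hw'⟩
      refine ⟨w + w', ?_⟩
      have hadd := hw.add hw'
      rw [add_zero] at hadd
      apply hadd.congr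
      intro t
      rw [Matrix.mulVec_add, Matrix.mulVec_add]
      funext q
      simp only [Pi.add_apply, Pi.sub_apply]
      abel
  -- exploit P z0
  obtain ⟨w, hw⟩ := hP
  -- apply Rmap
  let ΦR : (Fin p × Fin n → ℂ) →ₗ[ℂ] (Fin n → ℂ) :=
    { toFun := Rmap r
      map_add' := fun y z => by
        funext a
        simp [Rmap, Finset.sum_add_distrib, mul_add]
      map_smul' := fun c y => by
        funext a
        simp [Rmap, Finset.mul_sum]
        congr 1
        funext i
        ring }
  have hRexp : ∀ (t : ℝ) (y : Fin p × Fin n → ℂ),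
      Rmap r (exp (t • Ac) *ᵥ y) = exp (t • cm S) *ᵥ Rmap r y := by
    intro t y
    have hbase : ∀ y, ΦR ((t • Ac) *ᵥ y) = (t • cm S) *ᵥ ΦR y := by
      intro y
      rw [Matrix.smul_mulVec, Matrix.smul_mulVec]
      show Rmap r (t • (Ac *ᵥ y)) = t • (cm S *ᵥ Rmap r y)
      rw [← Rmap_bridge r hrΓ y, Rmap_real_smul]
    exact intertwine_exp (t • Ac) (t • cm S) ΦR hbase y
  have hΦRc : Continuous (Rmap r : (Fin p × Fin n → ℂ) → (Fin n → ℂ)) := by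
    have : Continuous ΦR := LinearMap.continuous_of_finiteDimensional ΦR
    exact this
  have hR0 : Tendsto (fun t : ℝ => Rmap r (exp (t • Ac) *ᵥ z0
      - fun q : Fin p × Fin n => (exp (t • cm S) *ᵥ w) q.2)) atTop (nhds 0) := by
    have h1 := (hΦRc.tendsto 0).comp hw
    have h2 : Rmap r (0 : Fin p × Fin n → ℂ) = 0 := by funext a; simp [Rmap]
    rwa [Function.comp_def, h2] at h1
  have hRval : ∀ t : ℝ, Rmap r (exp (t • Ac) *ᵥ z0
      - fun q : Fin p × Fin n => (exp (t • cm S) *ᵥ w) q.2)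
      = -(exp (t • cm S) *ᵥ w) := by
    intro t
    rw [Rmap_sub, hRexp, hz0, Matrix.mulVec_zero, Rmap_iota r hr1]
    simp
  have hEw : Tendsto (fun t : ℝ => exp (t • cm S) *ᵥ w) atTop (nhds 0) := by
    have := hR0.congr (fun t => hRval t)
    have hneg := this.neg
    simpa using hneg
  -- norm preservation forces w = 0
  have hnsq : Tendsto (fun t : ℝ => nsq (exp (t • cm S) *ᵥ w)) atTop (nhds 0) := by
    have h1 := (nsq_continuous.tendsto 0).comp hEw
    have h2 : nsq (0 : Fin n → ℂ) = 0 := by simp [nsq]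
    rwa [Function.comp_def, h2] at h1
  have hconst : ∀ t : ℝ, nsq (exp (t • cm S) *ᵥ w) = nsq w := fun t => unitary_nsq hS t w
  have hwzero : w = 0 := by
    have := hnsq.congr hconst
    have h0 : nsq w = 0 := tendsto_nhds_unique tendsto_const_nhds this
    exact nsq_eq_zero h0
  rw [hwzero] at hw
  apply hw.congr
  intro t
  rw [Matrix.mulVec_zero]
  funext q
  simp

end Master

section RealPart

attribute [local instance] Matrix.linftyOpSemiNormedRing Matrix.linftyOpNormedRing
  Matrix.linftyOpNormedAlgebra

variable {p n m : ℕ} {S : Matrix (Fin n) (Fin n) ℝ} {H : Matrix (Fin m) (Fin n) ℝ}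
  {Γ : Matrix (Fin p) (Fin p) ℝ}

lemma hasDerivAt_expMulVec {N : Type*} [Fintype N] [DecidableEq N]
    (X : Matrix N N ℝ) (u : N → ℝ) (t : ℝ) :
    HasDerivAt (fun s : ℝ => exp (s • X) *ᵥ u) (X *ᵥ (exp (t • X) *ᵥ u)) t := by
  have h := hasDerivAt_exp_smul_const' (𝕂 := ℝ) X t
  have h2 := ((mulVecCLM u).hasFDerivAt).comp_hasDerivAt t h
  have h3 : mulVecCLM u (X * exp (t • X)) = X *ᵥ (exp (t • X) *ᵥ u) := by
    rw [mulVecCLM_apply, ← Matrix.mulVec_mulVec]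
  exact h2.congr_deriv h3

lemma exp_cm {N : Type*} [Fintype N] [DecidableEq N] (X : Matrix N N ℝ) :
    cm (exp X) = exp (cm X) := by
  let F : Matrix N N ℝ →ₐ[ℝ] Matrix N N ℂ := (Algebra.ofId ℝ ℂ).mapMatrix
  have hFeq : ∀ Y : Matrix N N ℝ, F Y = cm Y := by
    intro Y
    ext i j
    simp [F, AlgHom.mapMatrix_apply, cm, Matrix.map_apply, Algebra.ofId_apply,
      Complex.coe_algebraMap]
  have hFc : Continuous ⇑F := by
    have : ⇑F = fun Y : Matrix N N ℝ => cm Y := funext hFeq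
    rw [this]
    unfold cm
    apply continuous_pi
    intro i
    apply continuous_pi
    intro j
    exact Complex.continuous_ofReal.comp ((continuous_apply j).comp (continuous_apply i))
  have h := map_exp F hFc X
  rw [hFeq, hFeq] at h
  exact h

lemma cm_real_smul {N : Type*} (t : ℝ) (X : Matrix N N ℝ) : cm (t • X) = t • cm X := by
  ext i j
  simp [cm, Complex.real_smul]

lemma cz_mulVec {a b : Type*} [Fintype b] (X : Matrix a b ℝ) (v : b → ℝ) :
    (fun i => (((X *ᵥ v) i : ℝ) : ℂ)) = cm X *ᵥ (fun i => ((v i : ℝ) : ℂ)) := by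
  funext i
  simp [cm, Matrix.mulVec, dotProduct]

lemma kron_vecmulvec (r : Fin p → ℝ) (E : Matrix (Fin n) (Fin n) ℝ) (u : Fin p × Fin n → ℝ) :
    (vecMulVec (ones p) r ⊗ₖ E) *ᵥ u
      = fun q : Fin p × Fin n => (E *ᵥ fun a => ∑ i, r i * u (i, a)) q.2 := by
  funext q
  obtain ⟨i, a⟩ := q
  simp only [Matrix.mulVec, dotProduct, Matrix.kroneckerMap_apply,
    Matrix.vecMulVec_apply, ones, Fintype.sum_prod_type, one_mul]
  rw [Finset.sum_comm]
  apply Finset.sum_congr rfl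
  intro b _
  rw [Finset.mul_sum]
  apply Finset.sum_congr rfl
  intro j _
  ring

lemma iota_bridge_real (hrow : ∀ i, ∑ j, Γ i j = 0) (y : Fin n → ℝ) :
    ((1 : Matrix (Fin p) (Fin p) ℝ) ⊗ₖ S + Γ ⊗ₖ (Hᵀ * H)) *ᵥ (fun q : Fin p × Fin n => y q.2)
      = fun q => (S *ᵥ y) q.2 := by
  funext q
  obtain ⟨i, a⟩ := q
  simp only [Matrix.mulVec, dotProduct, Matrix.add_apply, Matrix.kroneckerMap_apply,
    Matrix.one_apply, Fintype.sum_prod_type, add_mul, Finset.sum_add_distrib, ite_mul, one_mul,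
    zero_mul]
  have h1 : ∑ j : Fin p, ∑ b : Fin n, (if i = j then S a b * y b else 0)
      = ∑ b : Fin n, S a b * y b := by
    rw [Finset.sum_comm]
    apply Finset.sum_congr rfl
    intro b _
    rw [Finset.sum_ite_eq (Finset.univ) i (fun _ => S a b * y b)]
    simp
  have h2 : ∑ j : Fin p, ∑ b : Fin n, Γ i j * (Hᵀ * H) a b * y b = 0 := by
    have : ∀ j, ∑ b : Fin n, Γ i j * (Hᵀ * H) a b * y b
        = Γ i j * ∑ b : Fin n, (Hᵀ * H) a b * y b := by
      intro j
      rw [Finset.mul_sum]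
      apply Finset.sum_congr rfl
      intro b _
      ring
    rw [Finset.sum_congr rfl fun j _ => this j, ← Finset.sum_mul, hrow i, zero_mul]
  rw [h1, h2, add_zero]

lemma iota_exp_real (hrow : ∀ i, ∑ j, Γ i j = 0) (t : ℝ) (v : Fin n → ℝ) :
    exp (t • ((1 : Matrix (Fin p) (Fin p) ℝ) ⊗ₖ S + Γ ⊗ₖ (Hᵀ * H)))
        *ᵥ (fun q : Fin p × Fin n => v q.2)
      = fun q => (exp (t • S) *ᵥ v) q.2 := by
  let Φι : (Fin n → ℝ) →ₗ[ℝ] (Fin p × Fin n → ℝ) :=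
    { toFun := fun y => fun q => y q.2
      map_add' := fun y z => rfl
      map_smul' := fun c y => rfl }
  have hbase : ∀ y, Φι ((t • S) *ᵥ y)
      = (t • ((1 : Matrix (Fin p) (Fin p) ℝ) ⊗ₖ S + Γ ⊗ₖ (Hᵀ * H))) *ᵥ Φι y := by
    intro y
    rw [Matrix.smul_mulVec, Matrix.smul_mulVec]
    have hib := iota_bridge_real (S := S) (H := H) hrow y
    funext q
    show (t • (S *ᵥ y)) q.2
      = (t • (((1 : Matrix (Fin p) (Fin p) ℝ) ⊗ₖ S + Γ ⊗ₖ (Hᵀ * H))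
          *ᵥ fun q : Fin p × Fin n => y q.2)) q
    rw [Pi.smul_apply, Pi.smul_apply, hib]
  exact (intertwine_exp (t • S) _ Φι hbase v).symm

end RealPart

end S15

/-- For skew-symmetric S, observable (H,S) and connected Γ, solutions of
ẋ = (I_p ⊗ S + Γ ⊗ HᵀH)x synchronize to (𝟙rᵀ ⊗ exp(St))x(0). -/
theorem stmt15 {p n m : ℕ} (S : Matrix (Fin n) (Fin n) ℝ) (hS : Sᵀ = -S)
    (H : Matrix (Fin m) (Fin n) ℝ) (hHS : Observable H S)
    (Γ : Matrix (Fin p) (Fin p) ℝ) (hΓ : IsConnectedMatrix Γ)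
    (r : Fin p → ℝ) (hrΓ : r ᵥ* Γ = 0) (hr1 : ∑ i, r i = 1)
    (x : ℝ → Fin p × Fin n → ℝ)
    (hx : ∀ t, HasDerivAt x
      (((1 : Matrix (Fin p) (Fin p) ℝ) ⊗ₖ S + Γ ⊗ₖ (Hᵀ * H)) *ᵥ x t) t) :
    Tendsto
      (fun t : ℝ => x t - (vecMulVec (ones p) r ⊗ₖ NormedSpace.exp (t • S)) *ᵥ x 0)
      atTop (nhds 0) := by
  classical
  obtain ⟨hoff, hrow, k, hk⟩ := hΓ
  set Amat : Matrix (Fin p × Fin n) (Fin p × Fin n) ℝ :=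
    (1 : Matrix (Fin p) (Fin p) ℝ) ⊗ₖ S + Γ ⊗ₖ (Hᵀ * H) with hAmat
  -- step 1 : identify the solution with the matrix exponential
  have key : ∀ t : ℝ, 0 ≤ t → x t = exp (t • Amat) *ᵥ x 0 := by
    intro T hT
    set L : (Fin p × Fin n → ℝ) →L[ℝ] (Fin p × Fin n → ℝ) :=
      LinearMap.toContinuousLinearMap (Matrix.mulVecLin Amat) with hL
    have hlip : ∀ s : ℝ, LipschitzWith ‖L‖₊ (fun z : Fin p × Fin n → ℝ => Amat *ᵥ z) := by
      intro s
      have h1 := L.lipschitz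
      have h2 : ⇑L = fun z : Fin p × Fin n → ℝ => Amat *ᵥ z := by
        funext z
        simp [hL, Matrix.mulVecLin_apply]
      rwa [h2] at h1
    have hg : ∀ s : ℝ, HasDerivAt (fun u : ℝ => exp (u • Amat) *ᵥ x 0)
        (Amat *ᵥ (exp (s • Amat) *ᵥ x 0)) s := fun s => S15.hasDerivAt_expMulVec Amat (x 0) s
    have hcx : ContinuousOn x (Set.Icc 0 T) :=
      (continuous_iff_continuousAt.2 fun s => (hx s).continuousAt).continuousOn
    have hcg : ContinuousOn (fun u : ℝ => exp (u • Amat) *ᵥ x 0) (Set.Icc 0 T) :=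
      (continuous_iff_continuousAt.2 fun s => (hg s).continuousAt).continuousOn
    have h0 : x 0 = exp ((0 : ℝ) • Amat) *ᵥ x 0 := by
      rw [zero_smul, NormedSpace.exp_zero, Matrix.one_mulVec]
    have huniq := ODE_solution_unique (v := fun _ z => Amat *ᵥ z) (hlip)
      hcx (fun s _ => (hx s).hasDerivWithinAt)
      hcg (fun s _ => (hg s).hasDerivWithinAt) h0
    exact huniq ⟨hT, le_refl T⟩
  -- step 2 : algebraic reduction
  set Rx0 : Fin n → ℝ := fun a => ∑ i, r i * x 0 (i, a) with hRx0
  set z0 : Fin p × Fin n → ℝ := x 0 - fun q : Fin p × Fin n => Rx0 q.2 with hz0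
  have halg : ∀ t : ℝ, 0 ≤ t →
      x t - (vecMulVec (ones p) r ⊗ₖ exp (t • S)) *ᵥ x 0 = exp (t • Amat) *ᵥ z0 := by
    intro t ht
    rw [key t ht, S15.kron_vecmulvec, hz0, Matrix.mulVec_sub]
    congr 1
    rw [hAmat, S15.iota_exp_real hrow t Rx0]
  -- step 3 : complex convergence
  set z0c : Fin p × Fin n → ℂ := fun q => ((z0 q : ℝ) : ℂ) with hz0c
  have hz0R : S15.Rmap r z0c = 0 := by
    funext a
    have hreal : ∑ i, r i * z0 (i, a) = 0 := by
      rw [hz0]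
      simp only [Pi.sub_apply]
      have : ∀ i : Fin p, r i * (x 0 (i, a) - Rx0 a) = r i * x 0 (i, a) - r i * Rx0 a :=
        fun i => mul_sub _ _ _
      rw [Finset.sum_congr rfl fun i _ => this i, Finset.sum_sub_distrib, ← Finset.sum_mul,
        hr1, one_mul, hRx0]
      exact sub_self _
    simp only [S15.Rmap, hz0c, Pi.zero_apply]
    rw [show ∀ (f : Fin p → ℂ), ∑ i, f i = ∑ i, f i from fun _ => rfl]
    calc ∑ i, ((r i : ℝ) : ℂ) * ((z0 (i, a) : ℝ) : ℂ)
        = ((∑ i, r i * z0 (i, a) : ℝ) : ℂ) := by push_cast; rfl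
      _ = 0 := by rw [hreal, Complex.ofReal_zero]
  have hmaster := S15.master hS hHS hoff hrow hk r hrΓ hr1 z0c hz0R
  -- step 4 : transfer back to the reals
  have hcplx : ∀ t : ℝ, exp (t • S15.cm Amat) *ᵥ z0c
      = fun q => (((exp (t • Amat) *ᵥ z0) q : ℝ) : ℂ) := by
    intro t
    rw [← S15.cm_real_smul, ← S15.exp_cm, ← S15.cz_mulVec]
  rw [tendsto_pi_nhds]
  intro q
  have hq : Tendsto (fun t : ℝ => (exp (t • S15.cm Amat) *ᵥ z0c) q) atTop (nhds 0) := by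
    have := tendsto_pi_nhds.1 hmaster q
    simpa using this
  have hqre : Tendsto (fun t : ℝ => ((exp (t • S15.cm Amat) *ᵥ z0c) q).re) atTop (nhds 0) := by
    have h1 := (Complex.continuous_re.tendsto 0).comp hq
    exact h1
  have hqreal : Tendsto (fun t : ℝ => (exp (t • Amat) *ᵥ z0) q) atTop (nhds 0) := by
    apply hqre.congr
    intro t
    rw [hcplx t]
    simp
  apply hqreal.congr' ?_
  filter_upwards [eventually_ge_atTop (0 : ℝ)] with t ht
  rw [← halg t ht]
end
end
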